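/- arXiv:1511.02829 — 4 statements merged into one kernel-verified Lean document; each statement's English description precedes it below -/
import Mathlib

section
/- Let g be a function of strict partitions and μ a strict partition. Then for every nonnegative integer n, (D^n g)(μ) = Σ_{k=0}^{n} (−1)^{n+k} C(n,k) Σ_{λ: λ ⊇ μ, |λ|−|μ|=k} 2^{|λ|−|μ|−ℓ(λ)+ℓ(μ)} f_{λ/μ} g(λ). -/
open scoped BigOperators

/-- A strict partition: a strictly decreasing list of positive integers. -/
structure StrictPartition where
  parts : List ℕ
  pos : ∀ p ∈ parts, 0 < p
  sorted : parts.Pairwise (· > ·)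

namespace StrictPartition

/-- The `i`-th part (1-indexed); `0` for `i` beyond the length. -/
def part (lam : StrictPartition) (i : ℕ) : ℕ := lam.parts.getD (i - 1) 0

/-- The size `|λ|` of a strict partition. -/
def size (lam : StrictPartition) : ℕ := lam.parts.sum

/-- The length `ℓ(λ)` (number of parts) of a strict partition. -/
def length (lam : StrictPartition) : ℕ := lam.parts.length

/-- The cells of the shifted Young diagram: row `i` occupies columns `i+1, …, i+λᵢ`. -/
def cells (lam : StrictPartition) : Finset (ℕ × ℕ) :=
  (Finset.range (lam.size + lam.length + 2) ×ˢ
      Finset.range (lam.size + lam.length + 2)).filter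
    (fun b => 1 ≤ b.1 ∧ b.1 < b.2 ∧ b.2 ≤ b.1 + lam.part b.1)

/-- The content of a box `(i,j)` is `j - i`. -/
def content (b : ℕ × ℕ) : ℕ := b.2 - b.1

/-- The hook length of a box `(i,j)`: the number of boxes strictly below it in its
column, plus the number strictly to its right in its row, plus `1`, plus `λ_j`. -/
def hook (lam : StrictPartition) (b : ℕ × ℕ) : ℕ :=
  (lam.cells.filter (fun b' => b'.2 = b.2 ∧ b.1 < b'.1)).card +
  (lam.cells.filter (fun b' => b'.1 = b.1 ∧ b.2 < b'.2)).card + 1 + lam.part b.2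

/-- `H_λ`, the product of the hook lengths of all boxes of `λ`. -/
def H (lam : StrictPartition) : ℕ := ∏ b ∈ lam.cells, lam.hook b

/-- `μ ≤ λ` iff `μᵢ ≤ λᵢ` for all `i`. -/
instance : LE StrictPartition := ⟨fun mu lam => ∀ i, mu.part i ≤ lam.part i⟩

/-- The cells of the skew shifted diagram `λ/μ`. -/
def skewCells (mu lam : StrictPartition) : Finset (ℕ × ℕ) := lam.cells \ mu.cells

/-- `f_{λ/μ}`: the number of standard shifted Young tableaux of skew shape `λ/μ`,
i.e. bijective fillings of the cells of `λ/μ` with `0, 1, …, n-1` increasing along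
rows and columns. -/
noncomputable def fskew (mu lam : StrictPartition) : ℕ :=
  Nat.card {T : {b // b ∈ skewCells mu lam} → Fin (skewCells mu lam).card //
    Function.Bijective T ∧
    (∀ a b : {b // b ∈ skewCells mu lam},
      (a : ℕ × ℕ).1 = (b : ℕ × ℕ).1 → (a : ℕ × ℕ).2 < (b : ℕ × ℕ).2 → T a < T b) ∧
    (∀ a b : {b // b ∈ skewCells mu lam},
      (a : ℕ × ℕ).2 = (b : ℕ × ℕ).2 → (a : ℕ × ℕ).1 < (b : ℕ × ℕ).1 → T a < T b)}

/-- The empty strict partition. -/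
def empty : StrictPartition := ⟨[], by simp, List.Pairwise.nil⟩

/-- `f_λ`: the number of standard shifted Young tableaux of shape `λ`. -/
noncomputable def f (lam : StrictPartition) : ℕ := fskew empty lam

/-- `f'_{λ/μ} = 2^{|λ|-|μ|-ℓ(λ)+ℓ(μ)} f_{λ/μ}`. -/
noncomputable def fPrime (mu lam : StrictPartition) : ℚ :=
  (2 : ℚ) ^ ((lam.size : ℤ) - mu.size - lam.length + mu.length) * fskew mu lam

/-- `λ⁺` is obtained from `λ` by adding one box. -/
def AddBox (lam lam' : StrictPartition) : Prop := lam ≤ lam' ∧ lam'.size = lam.size + 1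

/-- The difference operator `D` for strict partitions. -/
noncomputable def D (g : StrictPartition → ℚ) (lam : StrictPartition) : ℚ :=
  (∑ᶠ nu ∈ {nu : StrictPartition | lam.AddBox nu ∧ lam.length < nu.length}, g nu) +
  2 * (∑ᶠ nu ∈ {nu : StrictPartition | lam.AddBox nu ∧ nu.length = lam.length}, g nu) -
  g lam

/-- The boxes that can be removed from `λ` leaving (the diagram of) a strict
partition: the outer corners. -/
def removableCells (lam : StrictPartition) : Set (ℕ × ℕ) :=
  {b | b ∈ lam.cells ∧ ∃ mu : StrictPartition, mu.cells = lam.cells.erase b}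

/-- The boxes that can be added to `λ` giving (the diagram of) a strict partition. -/
def addableCells (lam : StrictPartition) : Set (ℕ × ℕ) :=
  {b | b ∉ lam.cells ∧ ∃ mu : StrictPartition, mu.cells = insert b lam.cells}

/-- The contents `x_0 = 1 < x_1 < ⋯ < x_m` of the inner corners of `λ`. -/
def innerContents (lam : StrictPartition) : Set ℕ :=
  insert 1 (content '' lam.addableCells)

/-- The contents `y_1 < ⋯ < y_m` of the outer corners of `λ`. -/
def outerContents (lam : StrictPartition) : Set ℕ :=
  content '' lam.removableCells

/-- `q_k(λ) = ∑_{i=0}^m C(xᵢ,2)^k − ∑_{i=1}^m C(yᵢ,2)^k`. -/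
noncomputable def q (k : ℕ) (lam : StrictPartition) : ℚ :=
  (∑ᶠ c ∈ lam.innerContents, ((c.choose 2 : ℚ)) ^ k) -
  (∑ᶠ c ∈ lam.outerContents, ((c.choose 2 : ℚ)) ^ k)

/-- `q_ν(λ) = ∏_j q_{ν_j}(λ)` for a partition `ν` given as a multiset of parts. -/
noncomputable def qPart (nu : Multiset ℕ) (lam : StrictPartition) : ℚ :=
  (nu.map (fun k => q k lam)).prod

end StrictPartition

namespace StrictPartition

theorem list_sum_eq (l : List ℕ) : l.sum = ∑ i ∈ Finset.range l.length, l.getD i 0 := by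
  induction l using List.reverseRecOn with
  | nil => simp
  | append_singleton l a ih =>
      simp only [List.sum_append, List.length_append, List.sum_cons, List.sum_nil,
        List.length_singleton]
      rw [Finset.sum_range_succ, ih]
      congr 1
      · exact Finset.sum_congr rfl fun i hi => by
          rw [List.getD_append _ _ _ _ (Finset.mem_range.mp hi)]
      · rw [List.getD_eq_getElem _ _ (by simp)]
        simp [List.getElem_append_right]

theorem ext' {lam mu : StrictPartition} (h : lam.parts = mu.parts) : lam = mu := by
  cases lam; cases mu; simpa using h

theorem part_pos (lam : StrictPartition) {i : ℕ} (h1 : 1 ≤ i) (h2 : i ≤ lam.length) :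
    0 < lam.part i := by
  have hlt : i - 1 < lam.parts.length := by
    have := h2; unfold length at this; omega
  rw [part, List.getD_eq_getElem _ _ hlt]
  exact lam.pos _ (lam.parts.getElem_mem hlt)

theorem part_eq_zero (lam : StrictPartition) {i : ℕ} (h : lam.length < i) : lam.part i = 0 := by
  rw [part, List.getD_eq_default]
  unfold length at h; omega

theorem part_pos_iff (lam : StrictPartition) {i : ℕ} (h1 : 1 ≤ i) :
    0 < lam.part i ↔ i ≤ lam.length := by
  constructor
  · intro h; by_contra hc; rw [lam.part_eq_zero (by omega)] at h; omega
  · exact lam.part_pos h1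

theorem length_def (lam : StrictPartition) : lam.length = lam.parts.length := rfl

theorem part_succ (lam : StrictPartition) (i : ℕ) : lam.part (i + 1) = lam.parts.getD i 0 := by
  rw [part]; norm_num

theorem part_succ_getElem (lam : StrictPartition) (i : ℕ) (h : i < lam.parts.length) :
    lam.part (i + 1) = lam.parts[i] := by
  rw [part_succ, List.getD_eq_getElem _ _ h]

theorem part_strict (lam : StrictPartition) {a b : ℕ} (h1 : 1 ≤ a) (hab : a ≤ b)
    (hb : b ≤ lam.length) : lam.part b + (b - a) ≤ lam.part a := by
  induction b, hab using Nat.le_induction with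
  | base => omega
  | succ b hab ih =>
      have hb' : b ≤ lam.length := by omega
      have hlen : b < lam.parts.length := by rw [← length_def]; omega
      have hlen' : b - 1 < lam.parts.length := by omega
      have step : lam.part (b + 1) < lam.part b := by
        have hs := List.pairwise_iff_getElem.mp lam.sorted (b - 1) b hlen' hlen (by omega)
        have e1 : lam.part b = lam.parts[b - 1] := by
          rw [part, List.getD_eq_getElem _ _ hlen']
        have e2 : lam.part (b + 1) = lam.parts[b] := part_succ_getElem _ _ hlen
        rw [e1, e2]
        simpa using hs
      have := ih hb'
      omega

theorem part_anti (lam : StrictPartition) {a b : ℕ} (h1 : 1 ≤ a) (hab : a ≤ b) :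
    lam.part b ≤ lam.part a := by
  rcases le_or_gt b lam.length with h | h
  · have := lam.part_strict h1 hab h; omega
  · rw [lam.part_eq_zero h]; omega

theorem size_eq_sum (lam : StrictPartition) {N : ℕ} (h : lam.length ≤ N) :
    lam.size = ∑ i ∈ Finset.range N, lam.part (i + 1) := by
  have : ∀ i, lam.part (i + 1) = lam.parts.getD i 0 := fun i => by
    rw [part]; congr 1
  simp_rw [this]
  rw [size, list_sum_eq]
  exact Finset.sum_subset (Finset.range_subset_range.mpr h) fun i _ hi => by
    rw [List.getD_eq_default]
    unfold length at h
    simp only [Finset.mem_range, not_lt] at hi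
    omega

theorem length_le_size (lam : StrictPartition) : lam.length ≤ lam.size := by
  rw [lam.size_eq_sum (le_refl _)]
  calc lam.length = ∑ _i ∈ Finset.range lam.length, 1 := by simp
    _ ≤ _ := Finset.sum_le_sum fun i hi => lam.part_pos (by omega)
        (by simp only [Finset.mem_range] at hi; omega)

theorem part_le_size (lam : StrictPartition) (i : ℕ) : lam.part i ≤ lam.size := by
  rw [part]
  rcases lt_or_ge (i - 1) lam.parts.length with h | h
  · rw [List.getD_eq_getElem _ _ h]
    exact List.single_le_sum (fun x _ => Nat.zero_le x) _ (lam.parts.getElem_mem h)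
  · rw [List.getD_eq_default _ _ h]; omega

theorem ext_part {lam mu : StrictPartition} (h : ∀ i, 1 ≤ i → lam.part i = mu.part i) :
    lam = mu := by
  have hlen : ∀ a b : StrictPartition, (∀ i, 1 ≤ i → a.part i = b.part i) →
      a.length ≤ b.length := by
    intro a b hab
    by_contra hc
    push_neg at hc
    have h1 : 0 < a.part (b.length + 1) := a.part_pos (by omega) (by omega)
    rw [hab _ (by omega), b.part_eq_zero (by omega)] at h1
    omega
  have hl : lam.length = mu.length :=
    le_antisymm (hlen _ _ h) (hlen _ _ fun i hi => (h i hi).symm)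
  apply ext'
  apply List.ext_getElem hl
  intro i h1 h2
  rw [← part_succ_getElem _ _ h1, ← part_succ_getElem _ _ h2, h _ (by omega)]

theorem le_def {mu lam : StrictPartition} : mu ≤ lam ↔ ∀ i, mu.part i ≤ lam.part i := Iff.rfl

theorem length_mono {mu lam : StrictPartition} (h : mu ≤ lam) : mu.length ≤ lam.length := by
  rcases Nat.eq_zero_or_pos mu.length with h0 | h0
  · omega
  · have := mu.part_pos (i := mu.length) (by omega) (le_refl _)
    have h2 := h mu.length
    rw [← lam.part_pos_iff (by omega)]
    omega

theorem size_mono {mu lam : StrictPartition} (h : mu ≤ lam) : mu.size ≤ lam.size := by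
  rw [mu.size_eq_sum (length_mono h), lam.size_eq_sum (le_refl _)]
  exact Finset.sum_le_sum fun i _ => h _

theorem eq_of_le_of_size_le {mu lam : StrictPartition} (h : mu ≤ lam)
    (hs : lam.size ≤ mu.size) : mu = lam := by
  apply ext_part
  have hsum : ∑ i ∈ Finset.range lam.length, mu.part (i + 1) =
      ∑ i ∈ Finset.range lam.length, lam.part (i + 1) := by
    rw [← mu.size_eq_sum (length_mono h), ← lam.size_eq_sum (le_refl _)]
    exact le_antisymm (size_mono h) hs
  have := (Finset.sum_eq_sum_iff_of_le (fun i _ => h (i + 1))).mp hsum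
  intro i hi
  rcases le_or_gt i lam.length with hc | hc
  · have h3 := this (i - 1) (Finset.mem_range.mpr (by omega))
    rw [show i - 1 + 1 = i by omega] at h3
    exact h3
  · rw [lam.part_eq_zero hc]
    have h2 := h i
    rw [lam.part_eq_zero hc] at h2
    omega

theorem mem_cells {lam : StrictPartition} {b : ℕ × ℕ} :
    b ∈ lam.cells ↔ 1 ≤ b.1 ∧ b.1 < b.2 ∧ b.2 ≤ b.1 + lam.part b.1 := by
  rw [cells, Finset.mem_filter, Finset.mem_product, Finset.mem_range, Finset.mem_range]
  constructor
  · tauto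
  · rintro ⟨h1, h2, h3⟩
    refine ⟨⟨?_, ?_⟩, h1, h2, h3⟩
    · have hp : 0 < lam.part b.1 := by omega
      have := (lam.part_pos_iff h1).mp hp
      have := lam.length_le_size
      omega
    · have hp : 0 < lam.part b.1 := by omega
      have hll := (lam.part_pos_iff h1).mp hp
      have := lam.part_le_size b.1
      omega

theorem mem_cells' {lam : StrictPartition} {i j : ℕ} :
    (i, j) ∈ lam.cells ↔ 1 ≤ i ∧ i < j ∧ j ≤ i + lam.part i := mem_cells

theorem part_getElem (lam : StrictPartition) {t : ℕ} (h : t - 1 < lam.parts.length) :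
    lam.part t = lam.parts[t - 1] := by
  rw [part, List.getD_eq_getElem _ _ h]

theorem cells_mono {mu lam : StrictPartition} (h : mu ≤ lam) : mu.cells ⊆ lam.cells := by
  intro b hb
  rw [mem_cells] at hb ⊢
  have := h b.1
  omega

theorem card_cells (lam : StrictPartition) : lam.cells.card = lam.size := by
  have : lam.cells = (Finset.range lam.length).biUnion
      (fun r => (Finset.Ioc (r + 1) (r + 1 + lam.part (r + 1))).map
        ⟨fun j => (r + 1, j), fun a b hab => by simpa using hab⟩) := by
    ext b
    rw [mem_cells]
    simp only [Finset.mem_biUnion, Finset.mem_range, Finset.mem_map,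
      Function.Embedding.coeFn_mk, Finset.mem_Ioc]
    constructor
    · rintro ⟨h1, h2, h3⟩
      refine ⟨b.1 - 1, ?_, b.2, ⟨by omega, by rw [show b.1 - 1 + 1 = b.1 by omega]; omega⟩, ?_⟩
      · have hp : 0 < lam.part b.1 := by omega
        have := (lam.part_pos_iff h1).mp hp
        omega
      · exact Prod.ext (show b.1 - 1 + 1 = b.1 by omega) rfl
    · rintro ⟨r, hr, j, ⟨hj1, hj2⟩, rfl⟩
      show 1 ≤ r + 1 ∧ r + 1 < j ∧ j ≤ r + 1 + lam.part (r + 1)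
      exact ⟨by omega, by omega, by omega⟩
  rw [this, Finset.card_biUnion]
  · simp only [Finset.card_map, Nat.card_Ioc]
    rw [lam.size_eq_sum (le_refl _)]
    exact Finset.sum_congr rfl fun i _ => by omega
  · intro x _ y _ hxy
    simp only [Finset.disjoint_left, Finset.mem_map, Function.Embedding.coeFn_mk]
    rintro a ⟨j, _, rfl⟩ ⟨j', _, he⟩
    apply hxy
    have := congrArg Prod.fst he
    change y + 1 = x + 1 at this
    omega



theorem part_zero (lam : StrictPartition) : lam.part 0 = lam.part 1 := rfl

theorem le_def' {mu lam : StrictPartition}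
    (h : ∀ i, 1 ≤ i → mu.part i ≤ lam.part i) : mu ≤ lam := by
  intro i
  cases i with
  | zero => rw [part_zero, part_zero]; exact h 1 (le_refl _)
  | succ n => exact h (n + 1) (by omega)

theorem cells_inj {mu lam : StrictPartition} (h : mu.cells = lam.cells) : mu = lam := by
  have key : ∀ a b : StrictPartition, a.cells = b.cells → ∀ i, 1 ≤ i → a.part i ≤ b.part i := by
    intro a b hab i hi
    rcases Nat.eq_zero_or_pos (a.part i) with h0 | h0
    · omega
    · have : (i, i + a.part i) ∈ a.cells := mem_cells'.mpr ⟨hi, by omega, by omega⟩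
      rw [hab] at this
      have h2 := mem_cells'.mp this
      omega
  exact ext_part fun i hi => le_antisymm (key _ _ h i hi) (key _ _ h.symm i hi)

theorem finite_size (s : ℕ) : {lam : StrictPartition | lam.size = s}.Finite := by
  apply Set.Finite.of_finite_image (f := cells)
  · apply Set.Finite.subset
      (Finset.finite_toSet ((Finset.range (2 * s + 2) ×ˢ Finset.range (2 * s + 2)).powerset))
    rintro c ⟨lam, hlam, rfl⟩
    simp only [Set.mem_setOf_eq] at hlam
    simp only [Finset.coe_powerset, Set.mem_preimage, Set.mem_powerset_iff,
      Finset.coe_subset, Finset.mem_coe]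
    intro b hb
    have hm := mem_cells.mp hb
    have h1 : 0 < lam.part b.1 := by omega
    have h2 := (lam.part_pos_iff (by omega)).mp h1
    have h3 := lam.length_le_size
    have h4 := lam.part_le_size b.1
    simp only [Finset.mem_product, Finset.mem_range]
    omega
  · intro a _ b _ hab
    exact cells_inj hab

theorem finite_above (mu : StrictPartition) (s : ℕ) :
    {lam : StrictPartition | mu ≤ lam ∧ lam.size = s}.Finite :=
  (finite_size s).subset fun lam h => h.2

theorem addBox_struct {mu nu : StrictPartition} (h : AddBox mu nu) :
    ∃ i, 1 ≤ i ∧ nu.part i = mu.part i + 1 ∧ (∀ t, 1 ≤ t → t ≠ i → nu.part t = mu.part t) ∧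
      ((i ≤ mu.length ∧ nu.length = mu.length) ∨
        (i = mu.length + 1 ∧ nu.length = mu.length + 1)) := by
  obtain ⟨hle, hsz⟩ := h
  have hml : mu.length ≤ nu.length := length_mono hle
  set N := nu.length with hN
  have hsum : ∑ r ∈ Finset.range N, nu.part (r + 1) =
      (∑ r ∈ Finset.range N, mu.part (r + 1)) + 1 := by
    rw [← nu.size_eq_sum (le_refl _), ← mu.size_eq_sum hml, hsz]
  have hex : ∃ r ∈ Finset.range N, mu.part (r + 1) < nu.part (r + 1) := by
    by_contra hc
    push_neg at hc
    have : ∑ r ∈ Finset.range N, nu.part (r + 1) = ∑ r ∈ Finset.range N, mu.part (r + 1) :=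
      Finset.sum_congr rfl fun r hr => le_antisymm (hc r hr) (hle (r + 1))
    omega
  obtain ⟨r, hrN, hr⟩ := hex
  have e1 : nu.part (r + 1) + ∑ t ∈ (Finset.range N).erase r, nu.part (t + 1) =
      ∑ t ∈ Finset.range N, nu.part (t + 1) :=
    Finset.add_sum_erase _ (fun t => nu.part (t + 1)) hrN
  have e2 : mu.part (r + 1) + ∑ t ∈ (Finset.range N).erase r, mu.part (t + 1) =
      ∑ t ∈ Finset.range N, mu.part (t + 1) :=
    Finset.add_sum_erase _ (fun t => mu.part (t + 1)) hrN
  have e3 : ∑ t ∈ (Finset.range N).erase r, mu.part (t + 1) ≤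
      ∑ t ∈ (Finset.range N).erase r, nu.part (t + 1) :=
    Finset.sum_le_sum fun t _ => hle (t + 1)
  have hbump : nu.part (r + 1) = mu.part (r + 1) + 1 := by omega
  have heq : ∀ t ∈ (Finset.range N).erase r, mu.part (t + 1) = nu.part (t + 1) :=
    (Finset.sum_eq_sum_iff_of_le (fun t _ => hle (t + 1))).mp (by omega)
  refine ⟨r + 1, by omega, hbump, ?_, ?_⟩
  · intro t ht hti
    rcases le_or_gt t N with hc | hc
    · have := heq (t - 1) (by
        simp only [Finset.mem_erase, Finset.mem_range]
        omega)
      rw [show t - 1 + 1 = t by omega] at this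
      omega
    · rw [nu.part_eq_zero hc, mu.part_eq_zero (by omega)]
  · rcases le_or_gt (r + 1) mu.length with hc | hc
    · left
      refine ⟨hc, ?_⟩
      have h0 : nu.part (mu.length + 1) = mu.part (mu.length + 1) := by
        rcases le_or_gt (mu.length + 1) N with hc2 | hc2
        · have := heq mu.length (by
            simp only [Finset.mem_erase, Finset.mem_range]
            omega)
          omega
        · rw [nu.part_eq_zero hc2, mu.part_eq_zero (by omega)]
      rw [mu.part_eq_zero (by omega)] at h0
      have := (nu.part_pos_iff (i := mu.length + 1) (by omega)).mpr
      omega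
    · right
      have hmu0 : mu.part (r + 1) = 0 := mu.part_eq_zero hc
      have hr1 : r + 1 ≤ nu.length := (nu.part_pos_iff (by omega)).mp (by omega)
      have hi : r + 1 = mu.length + 1 := by
        by_contra hne
        have hrlen : mu.length + 1 ≤ r := by omega
        have h0 : nu.part r = mu.part r := by
          have := heq (r - 1) (by
            simp only [Finset.mem_erase, Finset.mem_range]
            omega)
          rw [show r - 1 + 1 = r by omega] at this
          omega
        rw [mu.part_eq_zero (by omega)] at h0
        have := nu.part_pos (i := r) (by omega) (by omega)
        omega
      refine ⟨hi, ?_⟩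
      have h0 : nu.part (r + 2) = mu.part (r + 2) := by
        rcases le_or_gt (r + 2) N with hc2 | hc2
        · have hx := heq (r + 1) (by
            simp only [Finset.mem_erase, Finset.mem_range]
            omega)
          rw [show r + 1 + 1 = r + 2 by omega] at hx
          omega
        · rw [nu.part_eq_zero hc2, mu.part_eq_zero (by omega)]
      rw [mu.part_eq_zero (by omega)] at h0
      have := (nu.part_pos_iff (i := r + 2) (by omega)).mpr
      omega

theorem addBox_unique {mu nu nu' : StrictPartition} {i : ℕ} (h1 : 1 ≤ i)
    (h : AddBox mu nu) (h' : AddBox mu nu')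
    (hb : nu.part i = mu.part i + 1) (hb' : nu'.part i = mu.part i + 1) : nu = nu' := by
  obtain ⟨a, ha1, ha2, ha3, _⟩ := addBox_struct h
  obtain ⟨a', ha1', ha2', ha3', _⟩ := addBox_struct h'
  have hai : a = i := by
    by_contra hne
    have := ha3 i h1 (fun he => hne he.symm)
    omega
  have hai' : a' = i := by
    by_contra hne
    have := ha3' i h1 (fun he => hne he.symm)
    omega
  rw [hai] at ha3
  rw [hai'] at ha3'
  apply ext_part
  intro t ht
  rcases eq_or_ne t i with rfl | hne
  · omega
  · rw [ha3 t ht hne, ha3' t ht hne]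



theorem exists_addBox (mu : StrictPartition) {i : ℕ} (h1 : 1 ≤ i) (h2 : i ≤ mu.length + 1)
    (h3 : i = 1 ∨ mu.part i + 2 ≤ mu.part (i - 1)) :
    ∃ nu : StrictPartition, AddBox mu nu ∧ nu.part i = mu.part i + 1 ∧
      ∀ t, 1 ≤ t → t ≠ i → nu.part t = mu.part t := by
  have hnu : ∃ nu : StrictPartition, nu.part i = mu.part i + 1 ∧
      ∀ t, 1 ≤ t → t ≠ i → nu.part t = mu.part t := by
    rcases le_or_gt i mu.length with hc | hc
    · have hk : i - 1 < mu.parts.length := by rw [← length_def]; omega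
      refine ⟨⟨mu.parts.set (i - 1) (mu.part i + 1), ?_, ?_⟩, ?_, ?_⟩
      · intro p hp
        rw [List.mem_iff_getElem] at hp
        obtain ⟨t, ht, rfl⟩ := hp
        rw [List.getElem_set]
        split
        · omega
        · exact mu.pos _ (mu.parts.getElem_mem _)
      · rw [List.pairwise_iff_getElem]
        intro t1 t2 ht1 ht2 hlt
        rw [List.length_set] at ht1 ht2
        rw [List.getElem_set, List.getElem_set]
        have hv1 : mu.parts[t1] = mu.part (t1 + 1) := (mu.part_succ_getElem t1 ht1).symm
        have hv2 : mu.parts[t2] = mu.part (t2 + 1) := (mu.part_succ_getElem t2 ht2).symm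
        rcases eq_or_ne (i - 1) t1 with rfl | hne1
        · rw [if_pos rfl, if_neg (by omega)]
          have : mu.part (t2 + 1) ≤ mu.part i := mu.part_anti h1 (by omega)
          simp only [gt_iff_lt]
          omega
        · rcases eq_or_ne (i - 1) t2 with rfl | hne2
          · rw [if_neg hne1, if_pos rfl]
            have hi2 : 2 ≤ i := by omega
            have hh3 : mu.part i + 2 ≤ mu.part (i - 1) := by
              rcases h3 with h3 | h3
              · omega
              · exact h3
            have : mu.part (i - 1) ≤ mu.part (t1 + 1) := mu.part_anti (by omega) (by omega)
            simp only [gt_iff_lt]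
            omega
          · rw [if_neg hne1, if_neg hne2]
            exact List.pairwise_iff_getElem.mp mu.sorted t1 t2 ht1 ht2 hlt
      · show (mu.parts.set (i - 1) (mu.part i + 1)).getD (i - 1) 0 = mu.part i + 1
        rw [List.getD_eq_getElem _ _ (by rw [List.length_set]; omega), List.getElem_set,
          if_pos rfl]
      · intro t ht hti
        show (mu.parts.set (i - 1) (mu.part i + 1)).getD (t - 1) 0 = mu.part t
        rcases le_or_gt t mu.length with htc | htc
        · rw [List.getD_eq_getElem _ _ (by rw [List.length_set, ← length_def]; omega),
            List.getElem_set, if_neg (by omega)]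
          exact (mu.part_getElem (by rw [← length_def]; omega)).symm
        · rw [List.getD_eq_default _ _ (by rw [List.length_set, ← length_def]; omega),
            mu.part_eq_zero htc]
    · have hceq : i = mu.length + 1 := by omega
      have hmu0 : mu.part i = 0 := mu.part_eq_zero hc
      refine ⟨⟨mu.parts ++ [1], ?_, ?_⟩, ?_, ?_⟩
      · intro p hp
        rw [List.mem_append] at hp
        rcases hp with hp | hp
        · exact mu.pos _ hp
        · simp only [List.mem_singleton] at hp
          omega
      · rw [List.pairwise_append]
        refine ⟨mu.sorted, by simp, ?_⟩
        intro a ha b hb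
        simp only [List.mem_singleton] at hb
        subst hb
        rw [List.mem_iff_getElem] at ha
        obtain ⟨t, ht, rfl⟩ := ha
        have hval : mu.parts[t] = mu.part (t + 1) := (mu.part_succ_getElem t ht).symm
        rw [hval]
        rcases h3 with h3 | h3
        · exfalso
          rw [← length_def] at ht
          omega
        · have h4 : 2 ≤ mu.part (i - 1) := by omega
          have h5 : mu.part (i - 1) ≤ mu.part (t + 1) := mu.part_anti (by omega)
            (by rw [← length_def] at ht; omega)
          omega
      · show (mu.parts ++ [1]).getD (i - 1) 0 = mu.part i + 1
        rw [List.getD_eq_getElem _ _ (by simp [← length_def]; omega)]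
        rw [List.getElem_append_right (by rw [← length_def]; omega)]
        simp [← length_def]
        omega
      · intro t ht hti
        show (mu.parts ++ [1]).getD (t - 1) 0 = mu.part t
        rcases le_or_gt t mu.length with htc | htc
        · rw [List.getD_append _ _ _ _ (by rw [← length_def]; omega)]
          rfl
        · rw [List.getD_eq_default _ _ (by simp [← length_def]; omega),
            mu.part_eq_zero htc]
  obtain ⟨nu, ha, hb⟩ := hnu
  have hle : mu ≤ nu := le_def' fun t ht => by
    rcases eq_or_ne t i with rfl | hne
    · omega
    · rw [hb t ht hne]
  have hlen : nu.length ≤ mu.length + 1 := by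
    by_contra hcl
    push_neg at hcl
    have hp := nu.part_pos (i := mu.length + 2) (by omega) (by omega)
    have he := hb (mu.length + 2) (by omega) (by omega)
    have h0 := mu.part_eq_zero (i := mu.length + 2) (by omega)
    omega
  have hsz : nu.size = mu.size + 1 := by
    rw [nu.size_eq_sum (show nu.length ≤ mu.length + 2 by omega),
      mu.size_eq_sum (show mu.length ≤ mu.length + 2 by omega)]
    have hcong : ∀ t ∈ Finset.range (mu.length + 2),
        nu.part (t + 1) = mu.part (t + 1) + (if t = i - 1 then 1 else 0) := by
      intro t _
      rcases eq_or_ne t (i - 1) with rfl | hne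
      · rw [if_pos rfl, show i - 1 + 1 = i by omega]
        omega
      · rw [if_neg hne, hb (t + 1) (by omega) (by omega)]
        omega
    rw [Finset.sum_congr rfl hcong, Finset.sum_add_distrib]
    congr 1
    rw [Finset.sum_ite_eq' (Finset.range (mu.length + 2)) (i - 1) (fun _ => 1),
      if_pos (Finset.mem_range.mpr (by omega))]
  exact ⟨nu, ⟨hle, hsz⟩, ha, hb⟩


theorem addBox_parts {mu nu : StrictPartition} {i : ℕ} (h1 : 1 ≤ i) (h : AddBox mu nu)
    (hb : nu.part i = mu.part i + 1) :
    ∀ t, 1 ≤ t → t ≠ i → nu.part t = mu.part t := by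
  obtain ⟨a, ha1, ha2, ha3, _⟩ := addBox_struct h
  have hai : a = i := by
    by_contra hne
    have := ha3 i h1 (fun he => hne he.symm)
    omega
  rw [hai] at ha3
  exact ha3

theorem cells_addBox {mu nu : StrictPartition} {i : ℕ} (h1 : 1 ≤ i) (h : AddBox mu nu)
    (hb : nu.part i = mu.part i + 1) :
    nu.cells = insert (i, i + nu.part i) mu.cells := by
  have ha3 := addBox_parts h1 h hb
  ext b
  obtain ⟨x, y⟩ := b
  rw [Finset.mem_insert, mem_cells', mem_cells', Prod.mk.injEq]
  rcases eq_or_ne x i with rfl | hne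
  · omega
  · rcases le_or_gt 1 x with hx | hx
    · have := ha3 x hx hne
      omega
    · omega

theorem skewCells_addBox {mu nu : StrictPartition} {i : ℕ} (h1 : 1 ≤ i) (h : AddBox mu nu)
    (hb : nu.part i = mu.part i + 1) :
    skewCells mu nu = {(i, i + nu.part i)} := by
  rw [skewCells, cells_addBox h1 h hb]
  ext b
  obtain ⟨x, y⟩ := b
  rw [Finset.mem_sdiff, Finset.mem_insert, Finset.mem_singleton, mem_cells',
    Prod.mk.injEq]
  rcases eq_or_ne x i with rfl | hne
  · omega
  · omega

theorem box_mem_skew {mu nu lam : StrictPartition} {i : ℕ} (h1 : 1 ≤ i) (h : AddBox mu nu)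
    (hb : nu.part i = mu.part i + 1) (hl : nu ≤ lam) :
    (i, i + nu.part i) ∈ skewCells mu lam := by
  rw [skewCells, Finset.mem_sdiff, mem_cells', mem_cells']
  have h2 := hl i
  constructor
  · exact ⟨h1, by omega, by omega⟩
  · omega

theorem skewCells_erase {mu nu lam : StrictPartition} {i : ℕ} (h1 : 1 ≤ i) (h : AddBox mu nu)
    (hb : nu.part i = mu.part i + 1) (hl : nu ≤ lam) :
    skewCells nu lam = (skewCells mu lam).erase (i, i + nu.part i) := by
  rw [skewCells, skewCells, cells_addBox h1 h hb]
  ext b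
  rw [Finset.mem_erase, Finset.mem_sdiff, Finset.mem_sdiff, Finset.mem_insert]
  tauto

theorem addBox_minimal {mu nu lam : StrictPartition} {i : ℕ} (h1 : 1 ≤ i) (h : AddBox mu nu)
    (hb : nu.part i = mu.part i + 1) (hl : nu ≤ lam) :
    ∀ x y, (x, y) ∈ skewCells mu lam → (x = i → i + nu.part i ≤ y) ∧
      (y = i + nu.part i → i ≤ x) := by
  intro x y ha
  rw [skewCells, Finset.mem_sdiff, mem_cells', mem_cells'] at ha
  obtain ⟨⟨hx1, hxy, hyl⟩, hnm⟩ := ha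
  constructor
  · intro hxi
    subst hxi
    omega
  · intro hyj
    by_contra hcon
    push_neg at hcon
    have hxi : x ≠ i := by omega
    have hnupos : 0 < nu.part i := by omega
    have hilen : i ≤ nu.length := (nu.part_pos_iff h1).mp hnupos
    have hstr : nu.part i + (i - x) ≤ nu.part x := nu.part_strict hx1 (by omega) hilen
    have heqp : nu.part x = mu.part x := addBox_parts h1 h hb x hx1 hxi
    omega

theorem zero_cell_addBox {mu lam : StrictPartition} (hml : mu ≤ lam) {i j : ℕ}
    (hij : (i, j) ∈ skewCells mu lam)
    (hrow : ∀ a ∈ skewCells mu lam, ¬(a.1 = i ∧ a.2 < j))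
    (hcol : ∀ a ∈ skewCells mu lam, ¬(a.2 = j ∧ a.1 < i)) :
    ∃ nu, AddBox mu nu ∧ nu ≤ lam ∧ nu.part i = mu.part i + 1 ∧ j = i + nu.part i := by
  have hij' := hij
  rw [skewCells, Finset.mem_sdiff, mem_cells', mem_cells'] at hij'
  obtain ⟨⟨hi1, hijlt, hjl⟩, hnm⟩ := hij'
  have hjm : i + mu.part i < j := by omega
  have hilam : i ≤ lam.length := (lam.part_pos_iff hi1).mp (by omega)
  have jeq : j = i + mu.part i + 1 := by
    by_contra hcon
    have hj2 : i + mu.part i + 2 ≤ j := by omega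
    have hmem : (i, j - 1) ∈ skewCells mu lam := by
      rw [skewCells, Finset.mem_sdiff, mem_cells', mem_cells']
      constructor
      · exact ⟨hi1, by omega, by omega⟩
      · omega
    exact hrow _ hmem ⟨rfl, by omega⟩
  have hup : 2 ≤ i → (i - 1, j) ∈ mu.cells := by
    intro hi2
    have hstr : lam.part i + (i - (i - 1)) ≤ lam.part (i - 1) :=
      lam.part_strict (by omega) (by omega) hilam
    have hmem : (i - 1, j) ∈ lam.cells := mem_cells'.mpr ⟨by omega, by omega, by omega⟩
    by_contra hcon
    have : (i - 1, j) ∈ skewCells mu lam := by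
      rw [skewCells, Finset.mem_sdiff]
      exact ⟨hmem, hcon⟩
    exact hcol _ this ⟨rfl, by omega⟩
  have hlen : i ≤ mu.length + 1 := by
    by_contra hcon
    push_neg at hcon
    have h2 := mem_cells'.mp (hup (by omega))
    have : mu.part (i - 1) = 0 := mu.part_eq_zero (by omega)
    omega
  have hcond : i = 1 ∨ mu.part i + 2 ≤ mu.part (i - 1) := by
    rcases eq_or_ne i 1 with rfl | hne
    · left; rfl
    · right
      have h2 := mem_cells'.mp (hup (by omega))
      omega
  obtain ⟨nu, hbox, hbump, hoth⟩ := exists_addBox mu hi1 hlen hcond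
  refine ⟨nu, hbox, ?_, hbump, by omega⟩
  apply le_def'
  intro t ht
  rcases eq_or_ne t i with rfl | hne
  · omega
  · rw [hoth t ht hne]
    exact hml t

def IsTab (mu lam : StrictPartition)
    (T : {b // b ∈ skewCells mu lam} → Fin (skewCells mu lam).card) : Prop :=
  Function.Bijective T ∧
    (∀ a b : {b // b ∈ skewCells mu lam},
      (a : ℕ × ℕ).1 = (b : ℕ × ℕ).1 → (a : ℕ × ℕ).2 < (b : ℕ × ℕ).2 → T a < T b) ∧
    (∀ a b : {b // b ∈ skewCells mu lam},
      (a : ℕ × ℕ).2 = (b : ℕ × ℕ).2 → (a : ℕ × ℕ).1 < (b : ℕ × ℕ).1 → T a < T b)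

theorem fskew_eq (mu lam : StrictPartition) :
    fskew mu lam = Nat.card {T // IsTab mu lam T} := rfl

theorem card_skewCells {mu lam : StrictPartition} (h : mu ≤ lam) :
    (skewCells mu lam).card = lam.size - mu.size := by
  rw [skewCells, Finset.card_sdiff_of_subset (cells_mono h), card_cells, card_cells]

theorem fskew_self (mu : StrictPartition) : fskew mu mu = 1 := by
  rw [fskew_eq]
  have he : skewCells mu mu = ∅ := Finset.sdiff_self _
  have hdom : IsEmpty {b // b ∈ skewCells mu mu} :=
    ⟨fun b => Finset.notMem_empty b.1 (he ▸ b.2)⟩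
  have hcard : (skewCells mu mu).card = 0 := by rw [he]; rfl
  haveI := hdom
  have hT : IsTab mu mu (fun b => isEmptyElim b) :=
    ⟨⟨fun a => isEmptyElim a, fun y => absurd y.isLt (by omega)⟩,
      fun a => isEmptyElim a, fun a => isEmptyElim a⟩
  haveI : Unique {T // IsTab mu mu T} :=
    ⟨⟨⟨_, hT⟩⟩, fun T => Subtype.ext (funext fun b => isEmptyElim b)⟩
  exact Nat.card_unique

section Extend

variable {mu nu lam : StrictPartition} {i j : ℕ}

def extendFun (hn : 0 < (skewCells mu lam).card)
    (hboxS : (i, j) ∈ skewCells mu lam)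
    (hErase : skewCells nu lam = (skewCells mu lam).erase (i, j))
    (T' : {b // b ∈ skewCells nu lam} → Fin (skewCells nu lam).card)
    (b : {b // b ∈ skewCells mu lam}) : Fin (skewCells mu lam).card :=
  if hb : (b : ℕ × ℕ) = (i, j) then ⟨0, hn⟩
  else
    have hbmem : (b : ℕ × ℕ) ∈ skewCells nu lam := by
      rw [hErase]; exact Finset.mem_erase.mpr ⟨hb, b.2⟩
    ⟨(T' ⟨b.1, hbmem⟩).1 + 1, by
      have h1 := (T' ⟨b.1, hbmem⟩).isLt
      have h3 : (skewCells nu lam).card = (skewCells mu lam).card - 1 := by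
        rw [hErase, Finset.card_erase_of_mem hboxS]
      omega⟩

theorem extendFun_val_box {hn : 0 < (skewCells mu lam).card}
    {hboxS : (i, j) ∈ skewCells mu lam}
    {hErase : skewCells nu lam = (skewCells mu lam).erase (i, j)}
    {T' : {b // b ∈ skewCells nu lam} → Fin (skewCells nu lam).card}
    {b : {b // b ∈ skewCells mu lam}} (hb : (b : ℕ × ℕ) = (i, j)) :
    (extendFun hn hboxS hErase T' b).1 = 0 := by
  rw [extendFun, dif_pos hb]

theorem extendFun_val_ne {hn : 0 < (skewCells mu lam).card}
    {hboxS : (i, j) ∈ skewCells mu lam}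
    {hErase : skewCells nu lam = (skewCells mu lam).erase (i, j)}
    {T' : {b // b ∈ skewCells nu lam} → Fin (skewCells nu lam).card}
    {b : {b // b ∈ skewCells mu lam}} (hb : (b : ℕ × ℕ) ≠ (i, j))
    (hb' : (b : ℕ × ℕ) ∈ skewCells nu lam) :
    (extendFun hn hboxS hErase T' b).1 = (T' ⟨b.1, hb'⟩).1 + 1 := by
  rw [extendFun, dif_neg hb]

def restrictFun (hboxS : (i, j) ∈ skewCells mu lam)
    (hErase : skewCells nu lam = (skewCells mu lam).erase (i, j))
    (T : {b // b ∈ skewCells mu lam} → Fin (skewCells mu lam).card)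
    (b : {b // b ∈ skewCells nu lam}) : Fin (skewCells nu lam).card :=
  have hbS : (b : ℕ × ℕ) ∈ skewCells mu lam := by
    have h2 : (b : ℕ × ℕ) ∈ (skewCells mu lam).erase (i, j) := by
      rw [← hErase]; exact b.2
    exact Finset.mem_of_mem_erase h2
  ⟨(T ⟨b.1, hbS⟩).1 - 1, by
    have h1 := (T ⟨b.1, hbS⟩).isLt
    have h2 : 0 < (skewCells nu lam).card := Finset.card_pos.mpr ⟨b.1, b.2⟩
    have h3 : (skewCells nu lam).card = (skewCells mu lam).card - 1 := by
      rw [hErase, Finset.card_erase_of_mem hboxS]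
    omega⟩

theorem restrictFun_val {hboxS : (i, j) ∈ skewCells mu lam}
    {hErase : skewCells nu lam = (skewCells mu lam).erase (i, j)}
    {T : {b // b ∈ skewCells mu lam} → Fin (skewCells mu lam).card}
    {b : {b // b ∈ skewCells nu lam}} (hbS : (b : ℕ × ℕ) ∈ skewCells mu lam) :
    (restrictFun hboxS hErase T b).1 = (T ⟨b.1, hbS⟩).1 - 1 := rfl

end Extend

theorem fiber_count {mu lam : StrictPartition} (hml : mu ≤ lam)
    (hn : 0 < (skewCells mu lam).card)
    (F : {T // IsTab mu lam T} → StrictPartition)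
    (hF : ∀ T, (AddBox mu (F T) ∧ F T ≤ lam) ∧
      ∃ b : {b // b ∈ skewCells mu lam}, T.1 b = ⟨0, hn⟩ ∧ (b : ℕ × ℕ) ∈ (F T).cells)
    {nu : StrictPartition} (hnu : AddBox mu nu) (hl : nu ≤ lam) :
    Nat.card {T : {T // IsTab mu lam T} // F T = nu} = fskew nu lam := by
  classical
  obtain ⟨i, hi1, hbump, -, -⟩ := addBox_struct hnu
  set j := i + nu.part i with hj
  have hboxS : (i, j) ∈ skewCells mu lam := box_mem_skew hi1 hnu hbump hl
  have hboxnu : (i, j) ∈ nu.cells := mem_cells'.mpr ⟨hi1, by omega, le_refl _⟩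
  have hErase : skewCells nu lam = (skewCells mu lam).erase (i, j) :=
    skewCells_erase hi1 hnu hbump hl
  have hmin := addBox_minimal hi1 hnu hbump hl
  have hcells := cells_addBox hi1 hnu hbump
  have hcard' : (skewCells nu lam).card = (skewCells mu lam).card - 1 := by
    rw [hErase, Finset.card_erase_of_mem hboxS]
  have hmemNu : ∀ c : {b // b ∈ skewCells mu lam}, (c : ℕ × ℕ) ≠ (i, j) →
      (c : ℕ × ℕ) ∈ skewCells nu lam := fun c hc => by
    rw [hErase]; exact Finset.mem_erase.mpr ⟨hc, c.2⟩
  have hmemS : ∀ c : {b // b ∈ skewCells nu lam}, (c : ℕ × ℕ) ∈ skewCells mu lam := by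
    intro c
    have h2 : (c : ℕ × ℕ) ∈ (skewCells mu lam).erase (i, j) := by
      rw [← hErase]; exact c.2
    exact Finset.mem_of_mem_erase h2
  have hneBox : ∀ c : {b // b ∈ skewCells nu lam}, (c : ℕ × ℕ) ≠ (i, j) := by
    intro c
    have h2 : (c : ℕ × ℕ) ∈ (skewCells mu lam).erase (i, j) := by
      rw [← hErase]; exact c.2
    exact (Finset.mem_erase.mp h2).1
  -- uniqueness: any tableau whose zero-cell lies in nu.cells has F T = nu
  have huniq : ∀ (T : {T // IsTab mu lam T}) (b : {b // b ∈ skewCells mu lam}),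
      T.1 b = ⟨0, hn⟩ → (b : ℕ × ℕ) ∈ nu.cells → F T = nu := by
    intro T b hb0 hbc
    obtain ⟨⟨hFadd, hFle⟩, bF, hbF0, hbFc⟩ := hF T
    have hbb : b = bF := T.2.1.1 (hb0.trans hbF0.symm)
    subst hbb
    have hbnotmu : (b : ℕ × ℕ) ∉ mu.cells := (Finset.mem_sdiff.mp b.2).2
    obtain ⟨i2, hi21, hbump2, -, -⟩ := addBox_struct hFadd
    have hcells2 := cells_addBox hi21 hFadd hbump2
    have hbeq1 : (b : ℕ × ℕ) = (i, j) := by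
      rw [hcells, Finset.mem_insert] at hbc
      tauto
    have hbeq2 : (b : ℕ × ℕ) = (i2, i2 + (F T).part i2) := by
      rw [hcells2, Finset.mem_insert] at hbFc
      tauto
    have hii : i2 = i := by
      have := hbeq1 ▸ hbeq2
      exact (Prod.mk.injEq _ _ _ _).mp this.symm |>.1
    rw [hii] at hbump2
    exact addBox_unique hi1 hFadd hnu hbump2 hbump
  -- the extension of a tableau of lam/nu is a tableau of lam/mu
  have hPT : ∀ T' : {T' // IsTab nu lam T'}, IsTab mu lam (extendFun hn hboxS hErase T'.1) := by
    intro T'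
    obtain ⟨⟨hinj', hsurj'⟩, hrow', hcol'⟩ := T'.2
    have hinj : Function.Injective (extendFun hn hboxS hErase T'.1) := by
      intro a b hab
      have hval := congrArg Fin.val hab
      by_cases ha : (a : ℕ × ℕ) = (i, j) <;> by_cases hb : (b : ℕ × ℕ) = (i, j)
      · exact Subtype.ext (ha.trans hb.symm)
      · rw [extendFun_val_box ha, extendFun_val_ne hb (hmemNu b hb)] at hval
        omega
      · rw [extendFun_val_ne ha (hmemNu a ha), extendFun_val_box hb] at hval
        omega
      · rw [extendFun_val_ne ha (hmemNu a ha), extendFun_val_ne hb (hmemNu b hb)] at hval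
        have h5 : T'.1 ⟨a.1, hmemNu a ha⟩ = T'.1 ⟨b.1, hmemNu b hb⟩ := Fin.ext (by omega)
        have h7 : a.1 = b.1 := by simpa using hinj' h5
        exact Subtype.ext h7
    have hsurj : Function.Surjective (extendFun hn hboxS hErase T'.1) := by
      intro y
      rcases Nat.eq_zero_or_pos y.1 with hy | hy
      · exact ⟨⟨(i, j), hboxS⟩, Fin.ext (by
          rw [extendFun_val_box (b := ⟨(i, j), hboxS⟩) rfl]; omega)⟩
      · have hylt : y.1 - 1 < (skewCells nu lam).card := by
          have h9 := y.isLt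
          have h8 := hcard'
          omega
        obtain ⟨b', hb'⟩ := hsurj' ⟨y.1 - 1, hylt⟩
        refine ⟨⟨b'.1, hmemS b'⟩, Fin.ext ?_⟩
        rw [extendFun_val_ne (b := ⟨b'.1, hmemS b'⟩) (hneBox b') b'.2]
        have he1 : (⟨(⟨b'.1, hmemS b'⟩ : {b // b ∈ skewCells mu lam}).1, b'.2⟩ :
            {b // b ∈ skewCells nu lam}) = b' := Subtype.ext rfl
        rw [he1, hb']
        show y.1 - 1 + 1 = y.1
        omega
    refine ⟨⟨hinj, hsurj⟩, ?_, ?_⟩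
    · intro a b hab1 hab2
      rw [Fin.lt_def]
      by_cases hb : (b : ℕ × ℕ) = (i, j)
      · exfalso
        have hmm := (hmin a.1.1 a.1.2 (by rw [Prod.mk.eta]; exact a.2)).1
        have hb1 : (b : ℕ × ℕ).1 = i := by rw [hb]
        have hb2 : (b : ℕ × ℕ).2 = j := by rw [hb]
        omega
      · by_cases ha : (a : ℕ × ℕ) = (i, j)
        · rw [extendFun_val_box ha, extendFun_val_ne hb (hmemNu b hb)]
          omega
        · rw [extendFun_val_ne ha (hmemNu a ha), extendFun_val_ne hb (hmemNu b hb)]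
          have := hrow' ⟨a.1, hmemNu a ha⟩ ⟨b.1, hmemNu b hb⟩ hab1 hab2
          rw [Fin.lt_def] at this
          omega
    · intro a b hab1 hab2
      rw [Fin.lt_def]
      by_cases hb : (b : ℕ × ℕ) = (i, j)
      · exfalso
        have hmm := (hmin a.1.1 a.1.2 (by rw [Prod.mk.eta]; exact a.2)).2
        have hb1 : (b : ℕ × ℕ).1 = i := by rw [hb]
        have hb2 : (b : ℕ × ℕ).2 = j := by rw [hb]
        omega
      · by_cases ha : (a : ℕ × ℕ) = (i, j)
        · rw [extendFun_val_box ha, extendFun_val_ne hb (hmemNu b hb)]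
          omega
        · rw [extendFun_val_ne ha (hmemNu a ha), extendFun_val_ne hb (hmemNu b hb)]
          have := hcol' ⟨a.1, hmemNu a ha⟩ ⟨b.1, hmemNu b hb⟩ hab1 hab2
          rw [Fin.lt_def] at this
          omega
  have hFP : ∀ T' : {T' // IsTab nu lam T'},
      F ⟨extendFun hn hboxS hErase T'.1, hPT T'⟩ = nu := by
    intro T'
    apply huniq _ ⟨(i, j), hboxS⟩ _ hboxnu
    exact Fin.ext (extendFun_val_box (hn := hn) (hboxS := hboxS) (hErase := hErase)
      (T' := T'.1) (b := ⟨(i, j), hboxS⟩) rfl)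
  symm
  apply Nat.card_eq_of_bijective
    (fun T' : {T' // IsTab nu lam T'} =>
      (⟨⟨extendFun hn hboxS hErase T'.1, hPT T'⟩, hFP T'⟩ :
        {T : {T // IsTab mu lam T} // F T = nu}))
  constructor
  · intro T1 T2 h12
    have h13 : extendFun hn hboxS hErase T1.1 = extendFun hn hboxS hErase T2.1 :=
      congrArg Subtype.val (congrArg Subtype.val h12)
    apply Subtype.ext
    funext b
    have h14 := congrArg Fin.val (congrFun h13 ⟨b.1, hmemS b⟩)
    rw [extendFun_val_ne (b := ⟨b.1, hmemS b⟩) (hneBox b) b.2,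
      extendFun_val_ne (b := ⟨b.1, hmemS b⟩) (hneBox b) b.2] at h14
    apply Fin.ext
    have hbe : (⟨(⟨b.1, hmemS b⟩ : {b // b ∈ skewCells mu lam}).1, b.2⟩ :
        {b // b ∈ skewCells nu lam}) = b := Subtype.ext rfl
    rw [hbe] at h14
    omega
  · rintro ⟨⟨T, hT⟩, hFT⟩
    obtain ⟨-, bz, hbz0, hbzc⟩ := hF ⟨T, hT⟩
    rw [hFT] at hbzc
    have hbz0' : T bz = ⟨0, hn⟩ := hbz0
    have hbznotmu : (bz : ℕ × ℕ) ∉ mu.cells := (Finset.mem_sdiff.mp bz.2).2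
    have hbzbox : (bz : ℕ × ℕ) = (i, j) := by
      rw [hcells, Finset.mem_insert] at hbzc
      tauto
    have hTne0 : ∀ c : {b // b ∈ skewCells mu lam}, (c : ℕ × ℕ) ≠ (i, j) → 0 < (T c).1 := by
      intro c hc
      by_contra hcon
      push_neg at hcon
      have h0 : T c = ⟨0, hn⟩ := Fin.ext (show (T c).1 = 0 by omega)
      have := hT.1.1 (h0.trans hbz0.symm)
      rw [this] at hc
      exact hc hbzbox
    set T' : {b // b ∈ skewCells nu lam} → Fin (skewCells nu lam).card :=
      restrictFun hboxS hErase T with hT'def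
    have hT'tab : IsTab nu lam T' := by
      have hinj : Function.Injective T' := by
        intro a b hab
        have hval := congrArg Fin.val hab
        rw [hT'def, restrictFun_val (hmemS a), restrictFun_val (hmemS b)] at hval
        have ha0 := hTne0 ⟨a.1, hmemS a⟩ (hneBox a)
        have hb0 := hTne0 ⟨b.1, hmemS b⟩ (hneBox b)
        have h5 : T ⟨a.1, hmemS a⟩ = T ⟨b.1, hmemS b⟩ := Fin.ext (by omega)
        have h7 : a.1 = b.1 := by simpa using hT.1.1 h5
        exact Subtype.ext h7
      have hsurj : Function.Surjective T' := by
        intro y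
        have hylt : y.1 + 1 < (skewCells mu lam).card := by
          have h9 := y.isLt
          have h8 := hcard'
          omega
        obtain ⟨c, hc⟩ := hT.1.2 ⟨y.1 + 1, hylt⟩
        have hcne : (c : ℕ × ℕ) ≠ (i, j) := by
          intro hceq
          have hcz : c = bz := Subtype.ext (hceq.trans hbzbox.symm)
          rw [hcz, hbz0'] at hc
          have h9 := congrArg Fin.val hc
          have h10 : (0 : ℕ) = y.1 + 1 := h9
          omega
        refine ⟨⟨c.1, hmemNu c hcne⟩, Fin.ext ?_⟩
        rw [hT'def, restrictFun_val (b := ⟨c.1, hmemNu c hcne⟩) c.2]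
        have he1 : (⟨(⟨c.1, hmemNu c hcne⟩ : {b // b ∈ skewCells nu lam}).1, c.2⟩ :
            {b // b ∈ skewCells mu lam}) = c := Subtype.ext rfl
        rw [he1, hc]
        show y.1 + 1 - 1 = y.1
        omega
      refine ⟨⟨hinj, hsurj⟩, ?_, ?_⟩
      · intro a b hab1 hab2
        rw [Fin.lt_def, hT'def, restrictFun_val (hmemS a), restrictFun_val (hmemS b)]
        have := hT.2.1 ⟨a.1, hmemS a⟩ ⟨b.1, hmemS b⟩ hab1 hab2
        rw [Fin.lt_def] at this
        have ha0 := hTne0 ⟨a.1, hmemS a⟩ (hneBox a)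
        omega
      · intro a b hab1 hab2
        rw [Fin.lt_def, hT'def, restrictFun_val (hmemS a), restrictFun_val (hmemS b)]
        have := hT.2.2 ⟨a.1, hmemS a⟩ ⟨b.1, hmemS b⟩ hab1 hab2
        rw [Fin.lt_def] at this
        have ha0 := hTne0 ⟨a.1, hmemS a⟩ (hneBox a)
        omega
    refine ⟨⟨T', hT'tab⟩, ?_⟩
    apply Subtype.ext
    apply Subtype.ext
    show extendFun hn hboxS hErase T' = T
    funext c
    apply Fin.ext
    by_cases hc : (c : ℕ × ℕ) = (i, j)
    · rw [extendFun_val_box hc]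
      have hcz : c = bz := Subtype.ext (hc.trans hbzbox.symm)
      rw [hcz, hbz0']
    · rw [extendFun_val_ne hc (hmemNu c hc), hT'def,
        restrictFun_val (hmemS ⟨c.1, hmemNu c hc⟩)]
      have hce : (⟨(⟨c.1, hmemNu c hc⟩ : {b // b ∈ skewCells nu lam}).1,
          hmemS ⟨c.1, hmemNu c hc⟩⟩ : {b // b ∈ skewCells mu lam}) = c := Subtype.ext rfl
      rw [hce]
      have := hTne0 c hc
      omega

theorem fskew_rec {mu lam : StrictPartition} (hml : mu ≤ lam) (hsz : mu.size < lam.size)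
    (A : Finset StrictPartition) (hA : ∀ nu, nu ∈ A ↔ AddBox mu nu ∧ nu ≤ lam) :
    fskew mu lam = ∑ nu ∈ A, fskew nu lam := by
  classical
  have hn : 0 < (skewCells mu lam).card := by
    rw [card_skewCells hml]
    omega
  have exnu : ∀ T : {T // IsTab mu lam T}, ∃ nu, (AddBox mu nu ∧ nu ≤ lam) ∧
      ∃ b : {b // b ∈ skewCells mu lam}, T.1 b = ⟨0, hn⟩ ∧ (b : ℕ × ℕ) ∈ nu.cells := by
    intro T
    obtain ⟨b, hb0⟩ := T.2.1.2 ⟨0, hn⟩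
    have hrow : ∀ a ∈ skewCells mu lam, ¬(a.1 = (b : ℕ × ℕ).1 ∧ a.2 < (b : ℕ × ℕ).2) := by
      rintro a ha ⟨hx, hy⟩
      have h2 := T.2.2.1 ⟨a, ha⟩ b hx hy
      rw [hb0, Fin.lt_def] at h2
      have h3 : (T.1 ⟨a, ha⟩).1 < 0 := h2
      omega
    have hcol : ∀ a ∈ skewCells mu lam, ¬(a.2 = (b : ℕ × ℕ).2 ∧ a.1 < (b : ℕ × ℕ).1) := by
      rintro a ha ⟨hx, hy⟩
      have h2 := T.2.2.2 ⟨a, ha⟩ b hx hy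
      rw [hb0, Fin.lt_def] at h2
      have h3 : (T.1 ⟨a, ha⟩).1 < 0 := h2
      omega
    have hij : ((b : ℕ × ℕ).1, (b : ℕ × ℕ).2) ∈ skewCells mu lam := by
      rw [Prod.mk.eta]
      exact b.2
    obtain ⟨nu, hnu1, hnu2, hnu3, hnu4⟩ := zero_cell_addBox hml hij hrow hcol
    have hi1 : 1 ≤ (b : ℕ × ℕ).1 := by
      have := (Finset.mem_sdiff.mp b.2).1
      exact (mem_cells.mp this).1
    refine ⟨nu, ⟨hnu1, hnu2⟩, b, hb0, ?_⟩
    have hmem : ((b : ℕ × ℕ).1, (b : ℕ × ℕ).2) ∈ nu.cells :=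
      mem_cells'.mpr ⟨hi1, by omega, by omega⟩
    rw [Prod.mk.eta] at hmem
    exact hmem
  choose F hF using exnu
  have hFA : ∀ T, F T ∈ A := fun T => (hA _).mpr (hF T).1
  letI : Fintype {T // IsTab mu lam T} := Fintype.ofFinite _
  letI : ∀ c : ↥A, Fintype {T : {T // IsTab mu lam T} //
      (⟨F T, hFA T⟩ : ↥A) = c} := fun c => Fintype.ofFinite _
  rw [fskew_eq]
  have e1 : Nat.card {T // IsTab mu lam T} =
      Nat.card (Σ c : ↥A, {T : {T // IsTab mu lam T} // (⟨F T, hFA T⟩ : ↥A) = c}) :=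
    Nat.card_congr (Equiv.sigmaFiberEquiv (fun T => (⟨F T, hFA T⟩ : ↥A))).symm
  rw [e1, Nat.card_eq_fintype_card, Fintype.card_sigma]
  have e2 : ∀ c : ↥A, Fintype.card {T : {T // IsTab mu lam T} // (⟨F T, hFA T⟩ : ↥A) = c} =
      fskew c.1 lam := by
    intro c
    rw [← Nat.card_eq_fintype_card]
    have e3 : Nat.card {T : {T // IsTab mu lam T} // (⟨F T, hFA T⟩ : ↥A) = c} =
        Nat.card {T : {T // IsTab mu lam T} // F T = c.1} :=
      Nat.card_congr (Equiv.subtypeEquivRight fun T =>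
        ⟨fun h => congrArg Subtype.val h, fun h => Subtype.ext h⟩)
    rw [e3]
    exact fiber_count hml hn F hF ((hA c.1).mp c.2).1 ((hA c.1).mp c.2).2
  rw [Finset.sum_congr rfl (fun c _ => e2 c)]
  exact Finset.sum_coe_sort A (fun nu => fskew nu lam)

theorem le_refl' (mu : StrictPartition) : mu ≤ mu := fun _ => le_refl _

theorem le_trans' {a b c : StrictPartition} (h1 : a ≤ b) (h2 : b ≤ c) : a ≤ c :=
  fun i => le_trans (h1 i) (h2 i)

/-- The finset of strict partitions `lam ⊇ mu` with `|lam| = |mu| + k`. -/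
noncomputable def Skf (mu : StrictPartition) (k : ℕ) : Finset StrictPartition :=
  (finite_above mu (mu.size + k)).toFinset

theorem mem_Skf {mu lam : StrictPartition} {k : ℕ} :
    lam ∈ Skf mu k ↔ mu ≤ lam ∧ lam.size = mu.size + k := by
  rw [Skf, Set.Finite.mem_toFinset]
  rfl

theorem mem_Skf1 {mu nu : StrictPartition} : nu ∈ Skf mu 1 ↔ AddBox mu nu := mem_Skf

/-- The inner sum in the main theorem, as a finset sum. -/
noncomputable def G (g : StrictPartition → ℚ) (k : ℕ) (mu : StrictPartition) : ℚ :=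
  ∑ lam ∈ Skf mu k,
    (2 : ℚ) ^ ((lam.size : ℤ) - mu.size - lam.length + mu.length) * fskew mu lam * g lam

theorem D_eq (g : StrictPartition → ℚ) (mu : StrictPartition) :
    D g mu = (∑ nu ∈ (Skf mu 1).filter (fun nu => mu.length < nu.length), g nu) +
      2 * (∑ nu ∈ (Skf mu 1).filter (fun nu => nu.length = mu.length), g nu) - g mu := by
  classical
  have hs1 : {nu : StrictPartition | mu.AddBox nu ∧ mu.length < nu.length} =
      ↑((Skf mu 1).filter (fun nu => mu.length < nu.length)) := by
    ext nu
    simp [mem_Skf1]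
  have hs2 : {nu : StrictPartition | mu.AddBox nu ∧ nu.length = mu.length} =
      ↑((Skf mu 1).filter (fun nu => nu.length = mu.length)) := by
    ext nu
    simp [mem_Skf1]
  rw [D, hs1, hs2, finsum_mem_coe_finset, finsum_mem_coe_finset]

theorem G_zero (g : StrictPartition → ℚ) (mu : StrictPartition) : G g 0 mu = g mu := by
  have hs : Skf mu 0 = {mu} := by
    ext lam
    rw [mem_Skf, Finset.mem_singleton]
    constructor
    · rintro ⟨h1, h2⟩
      exact (eq_of_le_of_size_le h1 (by omega)).symm
    · rintro rfl
      exact ⟨le_refl' lam, by omega⟩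
  rw [G, hs, Finset.sum_singleton, fskew_self,
    show ((mu.size : ℤ) - mu.size - mu.length + mu.length) = 0 by ring]
  norm_num

theorem addBox_length {mu nu : StrictPartition} (h : AddBox mu nu) :
    nu.length = mu.length ∨ nu.length = mu.length + 1 := by
  obtain ⟨i, -, -, -, hd⟩ := addBox_struct h
  omega

theorem key_step (g : StrictPartition → ℚ) (mu : StrictPartition) (k : ℕ) :
    (∑ nu ∈ (Skf mu 1).filter (fun nu => mu.length < nu.length), G g k nu) +
      2 * (∑ nu ∈ (Skf mu 1).filter (fun nu => nu.length = mu.length), G g k nu) =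
    G g (k + 1) mu := by
  classical
  -- combine the two sums into one weighted sum
  have h1 : (Skf mu 1).filter (fun nu => ¬nu.length = mu.length) =
      (Skf mu 1).filter (fun nu => mu.length < nu.length) := by
    apply Finset.filter_congr
    intro nu hnu
    have := length_mono (mem_Skf1.mp hnu).1
    omega
  have e1 : ∑ nu ∈ (Skf mu 1).filter (fun nu => nu.length = mu.length),
      (if nu.length = mu.length then (2 : ℚ) else 1) * G g k nu =
      2 * ∑ nu ∈ (Skf mu 1).filter (fun nu => nu.length = mu.length), G g k nu := by
    rw [Finset.mul_sum]
    exact Finset.sum_congr rfl fun nu hnu => by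
      rw [if_pos (Finset.mem_filter.mp hnu).2]
  have e2 : ∑ nu ∈ (Skf mu 1).filter (fun nu => ¬nu.length = mu.length),
      (if nu.length = mu.length then (2 : ℚ) else 1) * G g k nu =
      ∑ nu ∈ (Skf mu 1).filter (fun nu => mu.length < nu.length), G g k nu := by
    rw [h1]
    refine Finset.sum_congr rfl fun nu hnu => ?_
    rw [Finset.mem_filter] at hnu
    rw [if_neg (by omega), one_mul]
  have hsplit : (∑ nu ∈ (Skf mu 1).filter (fun nu => mu.length < nu.length), G g k nu) +
      2 * (∑ nu ∈ (Skf mu 1).filter (fun nu => nu.length = mu.length), G g k nu) =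
      ∑ nu ∈ Skf mu 1, (if nu.length = mu.length then (2 : ℚ) else 1) * G g k nu := by
    rw [← Finset.sum_filter_add_sum_filter_not (Skf mu 1) (fun nu => nu.length = mu.length)
      (fun nu => (if nu.length = mu.length then (2 : ℚ) else 1) * G g k nu), e1, e2]
    ring
  rw [hsplit]
  -- expand G and interchange
  simp only [G, Finset.mul_sum]
  rw [Finset.sum_comm' (s' := fun lam => (Skf mu 1).filter (fun nu => nu ≤ lam))
    (t' := Skf mu (k + 1)) (by
      intro nu lam
      simp only [Finset.mem_filter, mem_Skf1, mem_Skf]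
      constructor
      · rintro ⟨hab, hle, hsz⟩
        refine ⟨⟨hab, hle⟩, le_trans' hab.1 hle, ?_⟩
        have := hab.2
        omega
      · rintro ⟨⟨hab, hle⟩, hmle, hsz⟩
        refine ⟨hab, hle, ?_⟩
        have := hab.2
        omega)]
  apply Finset.sum_congr rfl
  intro lam hlam
  obtain ⟨hml, hsz⟩ := mem_Skf.mp hlam
  have hB : ∀ nu, nu ∈ (Skf mu 1).filter (fun nu => nu ≤ lam) ↔
      AddBox mu nu ∧ nu ≤ lam := by
    intro nu
    rw [Finset.mem_filter, mem_Skf1]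
  have hterm : ∀ nu ∈ (Skf mu 1).filter (fun nu => nu ≤ lam),
      (if nu.length = mu.length then (2 : ℚ) else 1) *
        ((2 : ℚ) ^ ((lam.size : ℤ) - nu.size - lam.length + nu.length) *
          fskew nu lam * g lam) =
      (2 : ℚ) ^ ((lam.size : ℤ) - mu.size - lam.length + mu.length) *
        fskew nu lam * g lam := by
    intro nu hnu
    obtain ⟨hab, hle⟩ := (hB nu).mp hnu
    have hsz1 : nu.size = mu.size + 1 := hab.2
    rcases addBox_length hab with hlen | hlen
    · rw [if_pos hlen]
      have he : ((lam.size : ℤ) - nu.size - lam.length + nu.length) =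
          ((lam.size : ℤ) - mu.size - lam.length + mu.length) - 1 := by
        rw [hlen, hsz1]
        push_cast
        ring
      rw [he]
      rw [show ((2:ℚ) ^ (((lam.size : ℤ) - mu.size - lam.length + mu.length) - 1)) =
        (2:ℚ) ^ ((lam.size : ℤ) - mu.size - lam.length + mu.length) * (2:ℚ)^(-1 : ℤ) by
          rw [← zpow_add₀ (two_ne_zero) _ (-1 : ℤ)]; ring_nf]
      have : (2:ℚ) ^ (-1 : ℤ) = 1 / 2 := by norm_num
      rw [this]
      ring
    · rw [if_neg (by omega)]
      have he : ((lam.size : ℤ) - nu.size - lam.length + nu.length) =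
          ((lam.size : ℤ) - mu.size - lam.length + mu.length) := by
        rw [hlen, hsz1]
        push_cast
        ring
      rw [he, one_mul]
  rw [Finset.sum_congr rfl hterm]
  have hpull : ∑ nu ∈ (Skf mu 1).filter (fun nu => nu ≤ lam),
      (2 : ℚ) ^ ((lam.size : ℤ) - mu.size - lam.length + mu.length) *
        fskew nu lam * g lam =
      (2 : ℚ) ^ ((lam.size : ℤ) - mu.size - lam.length + mu.length) *
        ((∑ nu ∈ (Skf mu 1).filter (fun nu => nu ≤ lam), (fskew nu lam : ℚ))) * g lam := by
    rw [Finset.mul_sum, Finset.sum_mul]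
  rw [hpull]
  have hrec : fskew mu lam = ∑ nu ∈ (Skf mu 1).filter (fun nu => nu ≤ lam), fskew nu lam :=
    fskew_rec hml (by omega) _ hB
  have hcast : (∑ nu ∈ (Skf mu 1).filter (fun nu => nu ≤ lam), (fskew nu lam : ℚ)) =
      ((fskew mu lam : ℕ) : ℚ) := by
    rw [hrec]
    push_cast
    rfl
  rw [hcast]

theorem binom_step (Gv : ℕ → ℚ) (n : ℕ) :
    (∑ k ∈ Finset.range (n + 1), (-1 : ℚ) ^ (n + k) * (n.choose k : ℚ) * Gv (k + 1)) -
      ∑ k ∈ Finset.range (n + 1), (-1 : ℚ) ^ (n + k) * (n.choose k : ℚ) * Gv k =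
    ∑ k ∈ Finset.range (n + 2), (-1 : ℚ) ^ (n + 1 + k) * ((n + 1).choose k : ℚ) * Gv k := by
  have hR : ∑ k ∈ Finset.range (n + 2), (-1 : ℚ) ^ (n + 1 + k) * ((n + 1).choose k : ℚ) * Gv k
      = (∑ i ∈ Finset.range (n + 1),
          (-1 : ℚ) ^ (n + 1 + (i + 1)) * ((n + 1).choose (i + 1) : ℚ) * Gv (i + 1))
        + (-1 : ℚ) ^ (n + 1 + 0) * ((n + 1).choose 0 : ℚ) * Gv 0 :=
    Finset.sum_range_succ' _ (n + 1)
  have hterm : ∀ i ∈ Finset.range (n + 1),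
      (-1 : ℚ) ^ (n + 1 + (i + 1)) * ((n + 1).choose (i + 1) : ℚ) * Gv (i + 1)
      = (-1 : ℚ) ^ (n + i) * (n.choose i : ℚ) * Gv (i + 1) +
        (-1 : ℚ) ^ (n + i) * (n.choose (i + 1) : ℚ) * Gv (i + 1) := by
    intro i _
    rw [Nat.choose_succ_succ]
    push_cast
    rw [show n + 1 + (i + 1) = (n + i) + 2 by omega, pow_add]
    ring
  have h0 : ∑ k ∈ Finset.range (n + 1), (-1 : ℚ) ^ (n + k) * (n.choose k : ℚ) * Gv k
      = (∑ i ∈ Finset.range n, (-1 : ℚ) ^ (n + (i + 1)) * (n.choose (i + 1) : ℚ) * Gv (i + 1))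
        + (-1 : ℚ) ^ (n + 0) * (n.choose 0 : ℚ) * Gv 0 :=
    Finset.sum_range_succ' _ n
  have h2 : ∑ i ∈ Finset.range (n + 1), (-1 : ℚ) ^ (n + i) * (n.choose (i + 1) : ℚ) * Gv (i + 1)
      = ∑ i ∈ Finset.range n, (-1 : ℚ) ^ (n + i) * (n.choose (i + 1) : ℚ) * Gv (i + 1) := by
    rw [Finset.sum_range_succ, Nat.choose_succ_self]
    simp
  have h4 : ∑ i ∈ Finset.range n, (-1 : ℚ) ^ (n + (i + 1)) * (n.choose (i + 1) : ℚ) * Gv (i + 1)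
      = -∑ i ∈ Finset.range n, (-1 : ℚ) ^ (n + i) * (n.choose (i + 1) : ℚ) * Gv (i + 1) := by
    rw [← Finset.sum_neg_distrib]
    refine Finset.sum_congr rfl fun i _ => ?_
    rw [show n + (i + 1) = (n + i) + 1 by omega, pow_succ]
    ring
  rw [hR, Finset.sum_congr rfl hterm, Finset.sum_add_distrib, h0, h2, h4]
  simp only [Nat.choose_zero_right, Nat.cast_one]
  ring

theorem main_formula (g : StrictPartition → ℚ) (n : ℕ) (mu : StrictPartition) :
    (D^[n] g) mu =
      ∑ k ∈ Finset.range (n + 1), (-1 : ℚ) ^ (n + k) * (n.choose k : ℚ) * G g k mu := by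
  induction n generalizing mu with
  | zero =>
      simp [G_zero]
  | succ n ih =>
      rw [Function.iterate_succ_apply', D_eq]
      have hs1 : ∑ nu ∈ (Skf mu 1).filter (fun nu => mu.length < nu.length), (D^[n] g) nu
          = ∑ k ∈ Finset.range (n + 1), (-1 : ℚ) ^ (n + k) * (n.choose k : ℚ) *
              (∑ nu ∈ (Skf mu 1).filter (fun nu => mu.length < nu.length), G g k nu) := by
        rw [Finset.sum_congr rfl (fun nu _ => ih nu), Finset.sum_comm]
        exact Finset.sum_congr rfl fun k _ => (Finset.mul_sum _ _ _).symm
      have hs2 : ∑ nu ∈ (Skf mu 1).filter (fun nu => nu.length = mu.length), (D^[n] g) nu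
          = ∑ k ∈ Finset.range (n + 1), (-1 : ℚ) ^ (n + k) * (n.choose k : ℚ) *
              (∑ nu ∈ (Skf mu 1).filter (fun nu => nu.length = mu.length), G g k nu) := by
        rw [Finset.sum_congr rfl (fun nu _ => ih nu), Finset.sum_comm]
        exact Finset.sum_congr rfl fun k _ => (Finset.mul_sum _ _ _).symm
      rw [hs1, hs2, ih mu, Finset.mul_sum, ← Finset.sum_add_distrib]
      have hc : ∀ k ∈ Finset.range (n + 1),
          (-1 : ℚ) ^ (n + k) * (n.choose k : ℚ) *
              (∑ nu ∈ (Skf mu 1).filter (fun nu => mu.length < nu.length), G g k nu) +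
            2 * ((-1 : ℚ) ^ (n + k) * (n.choose k : ℚ) *
              (∑ nu ∈ (Skf mu 1).filter (fun nu => nu.length = mu.length), G g k nu)) =
          (-1 : ℚ) ^ (n + k) * (n.choose k : ℚ) * G g (k + 1) mu := by
        intro k _
        rw [← key_step g mu k]
        ring
      rw [Finset.sum_congr rfl hc]
      exact binom_step (fun k => G g k mu) n

end StrictPartition

open StrictPartition in
/-- Theorem 2.3, identity (6). -/
theorem statement6 (g : StrictPartition → ℚ) (mu : StrictPartition) (n : ℕ) :
    (D^[n] g) mu =
      ∑ k ∈ Finset.range (n + 1), (-1 : ℚ) ^ (n + k) * (n.choose k : ℚ) *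
        ∑ᶠ lam ∈ {lam : StrictPartition | mu ≤ lam ∧ lam.size = mu.size + k},
          (2 : ℚ) ^ ((lam.size : ℤ) - mu.size - lam.length + mu.length) * fskew mu lam *
            g lam := by
  rw [main_formula g n mu]
  refine Finset.sum_congr rfl fun k _ => ?_
  congr 1
  have hset : {lam : StrictPartition | mu ≤ lam ∧ lam.size = mu.size + k} = ↑(Skf mu k) := by
    ext lam
    simp [mem_Skf]
  rw [G, hset, finsum_mem_coe_finset]
end

section
/- Let λ be a strict partition with inner corner contents x_0 = 1 < x_1 < ... < x_m and outer corner contents y_1 < ... < y_m, and let λ⁺ = λ ∪ {□} be a strict partition obtained by adding a box □ of content c_□ = x_i. If i = 0, then H_λ / H_{λ⁺} = Π_{j=1}^{m} (C(x_0,2) − C(y_j,2)) / Π_{j=1}^{m} (C(x_0,2) − C(x_j,2)). If 1 ≤ i ≤ m, then H_λ / H_{λ⁺} = (1/2) · Π_{j=1}^{m} (C(x_i,2) − C(y_j,2)) / Π_{0≤j≤m, j≠i} (C(x_i,2) − C(x_j,2)). -/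
open scoped BigOperators

namespace SP9
open Finset StrictPartition
open scoped Nat

lemma part_pos (lam : StrictPartition) {i : ℕ} (h1 : 1 ≤ i) (h2 : i ≤ lam.length) :
    0 < lam.part i := by
  have hlt : i - 1 < lam.parts.length := by
    have : lam.length = lam.parts.length := rfl
    omega
  rw [part, List.getD_eq_getElem _ _ hlt]
  exact lam.pos _ (lam.parts.getElem_mem hlt)

lemma part_eq_zero (lam : StrictPartition) {i : ℕ} (h : lam.length < i) :
    lam.part i = 0 := by
  rw [part, List.getD_eq_default]
  show lam.parts.length ≤ i - 1
  have : lam.length = lam.parts.length := rfl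
  omega

lemma length_le_of_part_pos (lam : StrictPartition) {i : ℕ} (h : 0 < lam.part i) :
    i ≤ lam.length := by
  by_contra hc
  rw [part_eq_zero lam (by omega)] at h
  omega

/-- Quantitative strict decrease. -/
lemma part_add_le (lam : StrictPartition) {i j : ℕ} (h1 : 1 ≤ i) (hij : i ≤ j)
    (hj : j ≤ lam.length) : lam.part j + (j - i) ≤ lam.part i := by
  obtain ⟨d, rfl⟩ := Nat.exists_eq_add_of_le hij
  induction d with
  | zero => simp
  | succ d ih =>
      have hd : i + d ≤ lam.length := by omega
      have ihh := ih (by omega) hd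
      have hlt : i + d - 1 < lam.parts.length := by
        have : lam.length = lam.parts.length := rfl
        omega
      have hlt2 : i + (d+1) - 1 < lam.parts.length := by
        have : lam.length = lam.parts.length := rfl
        omega
      have step : lam.part (i + (d+1)) < lam.part (i + d) := by
        rw [part, part, List.getD_eq_getElem _ _ hlt, List.getD_eq_getElem _ _ hlt2]
        exact (List.pairwise_iff_getElem.mp lam.sorted) _ _ hlt hlt2 (by omega)
      omega

lemma part_le_size (lam : StrictPartition) (i : ℕ) : lam.part i ≤ lam.size := by
  rw [part]
  rcases lt_or_ge (i-1) lam.parts.length with h | h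
  · rw [List.getD_eq_getElem _ _ h]
    exact List.single_le_sum (fun x _ => Nat.zero_le x) _ (lam.parts.getElem_mem h)
  · rw [List.getD_eq_default _ _ h]; exact Nat.zero_le _

lemma mem_cells (lam : StrictPartition) (i j : ℕ) :
    (i, j) ∈ lam.cells ↔ 1 ≤ i ∧ i < j ∧ j ≤ i + lam.part i := by
  constructor
  · intro h
    exact (Finset.mem_filter.mp h).2
  · rintro ⟨h1, h2, h3⟩
    have hp : 0 < lam.part i := by omega
    have hl : i ≤ lam.length := length_le_of_part_pos lam hp
    have hps : lam.part i ≤ lam.size := part_le_size lam i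
    refine Finset.mem_filter.mpr ⟨Finset.mem_product.mpr ⟨?_, ?_⟩, h1, h2, h3⟩ <;>
      · rw [Finset.mem_range]; omega

lemma armCard (lam : StrictPartition) {i j : ℕ} (h : (i, j) ∈ lam.cells) :
    (lam.cells.filter (fun b' => b'.1 = i ∧ j < b'.2)).card = i + lam.part i - j := by
  rw [mem_cells] at h
  have : lam.cells.filter (fun b' => b'.1 = i ∧ j < b'.2)
      = (Ioc j (i + lam.part i)).image (fun y => (i, y)) := by
    ext ⟨a, b⟩
    simp only [Finset.mem_filter, Finset.mem_image, Finset.mem_Ioc, Prod.mk.injEq]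
    constructor
    · rintro ⟨hm, rfl, hb⟩
      rw [mem_cells] at hm
      exact ⟨b, ⟨hb, hm.2.2⟩, rfl, rfl⟩
    · rintro ⟨y, ⟨hy1, hy2⟩, rfl, rfl⟩
      exact ⟨(mem_cells lam i y).mpr ⟨h.1, by omega, hy2⟩, rfl, hy1⟩
  rw [this, Finset.card_image_of_injective _ (fun a b hab => (Prod.mk.injEq _ _ _ _ ▸ hab).2),
    Nat.card_Ioc]

lemma legCard (lam : StrictPartition) {i j : ℕ} (hi : 1 ≤ i) :
    (lam.cells.filter (fun b' => b'.2 = j ∧ i < b'.1)).card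
      = (((Ioc i (j-1)).filter (fun a => j ≤ a + lam.part a)).card) := by
  have : lam.cells.filter (fun b' => b'.2 = j ∧ i < b'.1)
      = ((Ioc i (j-1)).filter (fun a => j ≤ a + lam.part a)).image (fun a => (a, j)) := by
    ext ⟨a, b⟩
    simp only [Finset.mem_filter, Finset.mem_image, Finset.mem_Ioc, Prod.mk.injEq]
    constructor
    · rintro ⟨hm, rfl, ha⟩
      rw [mem_cells] at hm
      exact ⟨a, ⟨⟨ha, by omega⟩, hm.2.2⟩, rfl, rfl⟩
    · rintro ⟨a', ⟨⟨ha1, ha2⟩, ha3⟩, rfl, rfl⟩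
      exact ⟨(mem_cells lam _ _).mpr ⟨by omega, by omega, ha3⟩, rfl, ha1⟩
  rw [this, Finset.card_image_of_injective _ (fun a b hab => (Prod.mk.injEq _ _ _ _ ▸ hab).1)]

lemma hook_eq (lam : StrictPartition) {i j : ℕ} (h : (i, j) ∈ lam.cells) :
    lam.hook (i, j) = ((Ioc i (j-1)).filter (fun a => j ≤ a + lam.part a)).card
      + (i + lam.part i - j) + 1 + lam.part j := by
  have hi : 1 ≤ i := ((mem_cells lam i j).mp h).1
  rw [hook, armCard lam h, legCard lam hi]


/-- The tail strict partition. -/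
def tl (lam : StrictPartition) : StrictPartition :=
  ⟨lam.parts.tail, fun p hp => lam.pos p (List.mem_of_mem_tail hp), lam.sorted.tail⟩

lemma tl_length (lam : StrictPartition) : (tl lam).length = lam.length - 1 :=
  lam.parts.length_tail

lemma getD_tail (L : List ℕ) (n : ℕ) : L.tail.getD n 0 = L.getD (n+1) 0 := by
  cases L <;> simp

lemma tl_part (lam : StrictPartition) {k : ℕ} (hk : 1 ≤ k) :
    (tl lam).part k = lam.part (k+1) := by
  show lam.parts.tail.getD (k-1) 0 = lam.parts.getD (k+1-1) 0
  rw [getD_tail]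
  congr 1
  omega

lemma cells_eq (lam : StrictPartition) :
    lam.cells = ((Ioc 1 (1 + lam.part 1)).image (fun j => (1, j))) ∪
      ((tl lam).cells.image (fun b => (b.1 + 1, b.2 + 1))) := by
  ext ⟨i, j⟩
  simp only [Finset.mem_union, Finset.mem_image, Finset.mem_Ioc, mem_cells, Prod.mk.injEq,
    Prod.exists]
  constructor
  · rintro ⟨h1, h2, h3⟩
    rcases eq_or_lt_of_le h1 with h1' | h1'
    · refine Or.inl ⟨j, ⟨by omega, ?_⟩, by omega, rfl⟩
      rw [← h1'] at h3
      omega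
    · refine Or.inr ⟨i - 1, j - 1, ?_, by omega, by omega⟩
      rw [tl_part lam (show 1 ≤ i - 1 by omega), show i - 1 + 1 = i by omega]
      omega
  · rintro (⟨j', ⟨hj1, hj2⟩, rfl, rfl⟩ | ⟨a, b, hab, rfl, rfl⟩)
    · exact ⟨le_refl 1, by omega, by omega⟩
    · obtain ⟨ha1, ha2, ha3⟩ := hab
      rw [tl_part lam ha1] at ha3
      exact ⟨by omega, by omega, by omega⟩
  
lemma hook_shift (lam : StrictPartition) {i j : ℕ} (hb : (i, j) ∈ (tl lam).cells) :
    lam.hook (i + 1, j + 1) = (tl lam).hook (i, j) := by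
  have hm := hb
  rw [mem_cells] at hm
  have hm2 : (i + 1, j + 1) ∈ lam.cells := by
    rw [mem_cells]
    have htp := tl_part lam (show 1 ≤ i from hm.1)
    rw [htp] at hm
    exact ⟨by omega, by omega, by omega⟩
  rw [hook_eq lam hm2, hook_eq _ hb]
  have hpi : lam.part (i + 1) = (tl lam).part i := (tl_part lam (by omega)).symm
  have hpj : lam.part (j + 1) = (tl lam).part j := (tl_part lam (by omega)).symm
  have hcard : ((Ioc (i+1) (j+1-1)).filter (fun a => j+1 ≤ a + lam.part a)).card
      = ((Ioc i (j-1)).filter (fun a => j ≤ a + (tl lam).part a)).card := by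
    have himg : (Ioc (i+1) (j+1-1)).filter (fun a => j+1 ≤ a + lam.part a)
        = ((Ioc i (j-1)).filter (fun a => j ≤ a + (tl lam).part a)).image (· + 1) := by
      ext a
      simp only [Finset.mem_filter, Finset.mem_image, Finset.mem_Ioc]
      constructor
      · rintro ⟨⟨ha1, ha2⟩, ha3⟩
        refine ⟨a - 1, ⟨⟨by omega, by omega⟩, ?_⟩, by omega⟩
        rw [tl_part lam (by omega), show a - 1 + 1 = a by omega]
        omega
      · rintro ⟨a', ⟨⟨ha1, ha2⟩, ha3⟩, rfl⟩
        rw [tl_part lam (by omega)] at ha3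
        exact ⟨⟨by omega, by omega⟩, by omega⟩
    rw [himg, Finset.card_image_of_injective _ (add_left_injective 1)]
  rw [hcard, hpi, hpj]
  have h1i : 1 ≤ i := hm.1
  omega

lemma H_decomp (lam : StrictPartition) :
    lam.H = (∏ j ∈ Ioc 1 (1 + lam.part 1), lam.hook (1, j)) * (tl lam).H := by
  rw [H, cells_eq lam, Finset.prod_union, Finset.prod_image, Finset.prod_image]
  · congr 1
    rw [H]
    refine Finset.prod_congr rfl (fun b hb => ?_)
    have : (b.1, b.2) ∈ (tl lam).cells := by simpa using hb
    simpa using hook_shift lam this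
  · intro a _ b _ hab
    have h1 := congrArg Prod.fst hab
    have h2 := congrArg Prod.snd hab
    simp only at h1 h2
    first
      | omega
      | exact Prod.ext_iff.mpr ⟨by omega, by omega⟩
  · intro a _ b _ hab
    have h1 := congrArg Prod.fst hab
    have h2 := congrArg Prod.snd hab
    simp only at h1 h2
    first
      | omega
      | exact Prod.ext_iff.mpr ⟨by omega, by omega⟩
  · rw [Finset.disjoint_left]
    rintro ⟨u, v⟩ hu hv
    simp only [Finset.mem_image, Finset.mem_Ioc, mem_cells, Prod.mk.injEq, Prod.exists] at hu hv
    obtain ⟨j', hj, hju, hjv⟩ := hu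
    obtain ⟨a, b, hab, hau, hbv⟩ := hv
    omega

def V (lam : StrictPartition) : Finset ℕ := lam.parts.toFinset

lemma nodup_parts (lam : StrictPartition) : lam.parts.Nodup :=
  lam.sorted.imp (fun h => ne_of_gt h)

lemma card_V (lam : StrictPartition) : (V lam).card = lam.length :=
  List.toFinset_card_of_nodup (nodup_parts lam)

lemma mem_V (lam : StrictPartition) {w : ℕ} :
    w ∈ V lam ↔ ∃ i, 1 ≤ i ∧ i ≤ lam.length ∧ lam.part i = w := by
  rw [V, List.mem_toFinset, List.mem_iff_getElem]
  constructor
  · rintro ⟨k, hk, rfl⟩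
    refine ⟨k + 1, by omega, by exact hk, ?_⟩
    rw [part, show k + 1 - 1 = k by omega, List.getD_eq_getElem _ _ hk]
  · rintro ⟨i, h1, h2, rfl⟩
    have hk : i - 1 < lam.parts.length := by
      have : lam.length = lam.parts.length := rfl
      omega
    exact ⟨i - 1, hk, by rw [part, List.getD_eq_getElem _ _ hk]⟩

def Ngt (lam : StrictPartition) (v : ℕ) : ℕ := ((V lam).filter (fun w => v < w)).card

lemma Ngt_le_length (lam : StrictPartition) (v : ℕ) : Ngt lam v ≤ lam.length :=
  le_trans (Finset.card_filter_le _ _) (card_V lam).le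

lemma part_gt_iff (lam : StrictPartition) {v i : ℕ} (h1 : 1 ≤ i) (h2 : i ≤ lam.length) :
    v < lam.part i ↔ i ≤ Ngt lam v := by
  constructor
  · intro h
    have himg : (Icc 1 i).image lam.part ⊆ (V lam).filter (fun w => v < w) := by
      intro w hw
      simp only [Finset.mem_image, Finset.mem_Icc] at hw
      obtain ⟨t, ⟨ht1, ht2⟩, rfl⟩ := hw
      refine Finset.mem_filter.mpr ⟨(mem_V lam).mpr ⟨t, ht1, by omega, rfl⟩, ?_⟩
      have := part_add_le lam ht1 ht2 h2
      omega
    have hinj : Set.InjOn lam.part (Icc 1 i) := by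
      intro a ha b hb hab
      rw [Finset.coe_Icc, Set.mem_Icc] at ha hb
      by_contra hne
      rcases lt_or_gt_of_ne hne with hl | hl
      · have := part_add_le lam ha.1 (le_of_lt hl) (le_trans hb.2 h2); omega
      · have := part_add_le lam hb.1 (le_of_lt hl) (le_trans ha.2 h2); omega
    have := Finset.card_le_card himg
    rw [Finset.card_image_of_injOn hinj, Nat.card_Icc] at this
    unfold Ngt
    omega
  · intro h
    by_contra hc
    push_neg at hc
    have hsub : (V lam).filter (fun w => v < w) ⊆ (Icc 1 (i-1)).image lam.part := by
      intro w hw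
      obtain ⟨hwV, hv⟩ := Finset.mem_filter.mp hw
      obtain ⟨t, ht1, ht2, rfl⟩ := (mem_V lam).mp hwV
      refine Finset.mem_image.mpr ⟨t, Finset.mem_Icc.mpr ⟨ht1, ?_⟩, rfl⟩
      by_contra hti
      push_neg at hti
      have := part_add_le lam h1 (by omega : i ≤ t) ht2
      omega
    have h4 := Finset.card_le_card hsub
    have h5 := Finset.card_image_le (s := Icc 1 (i-1)) (f := lam.part)
    rw [Nat.card_Icc] at h5
    unfold Ngt at h
    omega

lemma hook_row1_small (lam : StrictPartition) {j : ℕ} (hj2 : 2 ≤ j) (hjl : j ≤ lam.length) :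
    lam.hook (1, j) = lam.part 1 + lam.part j := by
  have hpj : 0 < lam.part j := part_pos lam (by omega) hjl
  have hj1 := part_add_le lam (le_refl 1) (by omega : 1 ≤ j) hjl
  have hcell : (1, j) ∈ lam.cells := (mem_cells lam 1 j).mpr ⟨le_refl 1, by omega, by omega⟩
  rw [hook_eq lam hcell]
  have hfull : (Ioc 1 (j-1)).filter (fun a => j ≤ a + lam.part a) = Ioc 1 (j-1) := by
    rw [Finset.filter_eq_self]
    intro a ha
    rw [Finset.mem_Ioc] at ha
    have := part_add_le lam (by omega : 1 ≤ a) (by omega : a ≤ j) hjl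
    omega
  rw [hfull, Nat.card_Ioc]
  omega

lemma add_Ngt_le (lam : StrictPartition) (v : ℕ) (hl : 1 ≤ lam.length) :
    v + Ngt lam v ≤ lam.part 1 ∨ Ngt lam v = 0 := by
  rcases Nat.eq_zero_or_pos (Ngt lam v) with h | h
  · exact Or.inr h
  left
  have hsub : (V lam).filter (fun w => v < w) ⊆ Ioc v (lam.part 1) := by
    intro w hw
    obtain ⟨hwV, hvw⟩ := Finset.mem_filter.mp hw
    obtain ⟨t, ht1, ht2, rfl⟩ := (mem_V lam).mp hwV
    rw [Finset.mem_Ioc]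
    have := part_add_le lam (le_refl 1) ht1 ht2
    exact ⟨hvw, by omega⟩
  have := Finset.card_le_card hsub
  rw [Nat.card_Ioc] at this
  unfold Ngt at *
  omega

lemma length_le_add_Ngt (lam : StrictPartition) {v : ℕ} (hvV : v ∉ V lam) :
    lam.length ≤ v + Ngt lam v := by
  have key : (V lam).filter (fun w => ¬ v < w) ⊆ Icc 1 v := by
    intro w hw
    obtain ⟨hwV, hvw⟩ := Finset.mem_filter.mp hw
    obtain ⟨t, ht1, ht2, rfl⟩ := (mem_V lam).mp hwV
    rw [Finset.mem_Icc]
    exact ⟨part_pos lam ht1 ht2, by omega⟩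
  have h2 := Finset.card_le_card key
  have h3 := Finset.card_filter_add_card_filter_not (s := V lam)
    (p := fun w => v < w)
  rw [card_V] at h3
  rw [Nat.card_Icc] at h2
  unfold Ngt
  omega

lemma hook_row1_big (lam : StrictPartition) {v : ℕ} (hv : v < lam.part 1) (hvV : v ∉ V lam) :
    lam.hook (1, v + Ngt lam v + 1) = lam.part 1 - v := by
  have hl : 1 ≤ lam.length := length_le_of_part_pos lam (by omega)
  set N := Ngt lam v with hN
  have hN1 : 1 ≤ N := (part_gt_iff lam (le_refl 1) hl).mp hv
  have hNl : N ≤ lam.length := Ngt_le_length lam v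
  have hNle : v + N ≤ lam.part 1 := by
    rcases add_Ngt_le lam v hl with h | h
    · exact h
    · omega
  have hlN : lam.length ≤ v + N := length_le_add_Ngt lam hvV
  have hcell : (1, v + N + 1) ∈ lam.cells :=
    (mem_cells lam _ _).mpr ⟨le_refl 1, by omega, by omega⟩
  rw [hook_eq lam hcell]
  have hpj : lam.part (v + N + 1) = 0 := part_eq_zero lam (by omega)
  have hfilt : (Ioc 1 (v + N + 1 - 1)).filter (fun a => v + N + 1 ≤ a + lam.part a)
      = Ioc 1 N := by
    ext a
    simp only [Finset.mem_filter, Finset.mem_Ioc]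
    constructor
    · rintro ⟨⟨ha1, ha2⟩, ha3⟩
      refine ⟨ha1, ?_⟩
      by_contra hc
      push_neg at hc
      rcases le_or_gt a lam.length with hal | hal
      · have hp1 : ¬ v < lam.part (N+1) := by
          rw [part_gt_iff lam (by omega) (by omega)]
          omega
        have hp2 : lam.part (N+1) ≠ v := by
          intro he
          exact hvV ((mem_V lam).mpr ⟨N+1, by omega, by omega, he⟩)
        have hp3 := part_add_le lam (by omega : 1 ≤ N+1) (by omega : N+1 ≤ a) hal
        omega
      · rw [part_eq_zero lam hal] at ha3
        omega
    · rintro ⟨ha1, ha2⟩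
      have hpN : v < lam.part N := (part_gt_iff lam (by omega) hNl).mpr (le_refl N)
      have := part_add_le lam (by omega : 1 ≤ a) ha2 hNl
      exact ⟨⟨ha1, by omega⟩, by omega⟩
  rw [hfilt, Nat.card_Ioc, hpj]
  omega



lemma Icc_one_eq_insert {m : ℕ} (hm : 1 ≤ m) : Icc 1 m = insert 1 (Icc 2 m) := by
  ext a
  simp only [Finset.mem_Icc, Finset.mem_insert]
  omega

lemma Ioc_one_eq_Icc (m : ℕ) : Ioc 1 m = Icc 2 m := by
  ext a
  simp only [Finset.mem_Ioc, Finset.mem_Icc]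
  omega

lemma prod_fact_range (n : ℕ) : (∏ v ∈ range n, (n - v)) = n ! := by
  induction n with
  | zero => simp
  | succ n ih =>
      rw [Finset.prod_range_succ']
      have : ∀ v ∈ range n, n + 1 - (v + 1) = n - v := fun v _ => by omega
      rw [Finset.prod_congr rfl this, ih, Nat.factorial_succ]
      simp [Nat.mul_comm]

lemma part_injOn (lam : StrictPartition) : Set.InjOn lam.part (Icc 1 lam.length) := by
  intro a ha b hb hab
  rw [Finset.coe_Icc, Set.mem_Icc] at ha hb
  by_contra hne
  rcases lt_or_gt_of_ne hne with hlt | hlt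
  · have := part_add_le lam ha.1 (le_of_lt hlt) hb.2
    omega
  · have := part_add_le lam hb.1 (le_of_lt hlt) ha.2
    omega

lemma Ngt_strict (lam : StrictPartition) {v v' : ℕ} (hv' : v' ∉ V lam) (hlt : v < v') :
    v + Ngt lam v < v' + Ngt lam v' := by
  have hdec : (V lam).filter (fun w => v < w) =
      ((V lam).filter (fun w => v' < w)) ∪ ((V lam).filter (fun w => v < w ∧ w ≤ v')) := by
    ext w
    simp only [Finset.mem_filter, Finset.mem_union]
    constructor
    · rintro ⟨hw, h⟩
      rcases le_or_gt w v' with h2 | h2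
      · exact Or.inr ⟨hw, h, h2⟩
      · exact Or.inl ⟨hw, h2⟩
    · rintro (⟨hw, h⟩ | ⟨hw, h, _⟩)
      exacts [⟨hw, by omega⟩, ⟨hw, h⟩]
  have hdisj2 : Disjoint ((V lam).filter (fun w => v' < w))
      ((V lam).filter (fun w => v < w ∧ w ≤ v')) := by
    rw [Finset.disjoint_left]
    intro w h1 h2
    simp only [Finset.mem_filter] at h1 h2
    omega
  have hsub2 : (V lam).filter (fun w => v < w ∧ w ≤ v') ⊆ Ioo v v' := by
    intro w hw
    simp only [Finset.mem_filter] at hw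
    rw [Finset.mem_Ioo]
    rcases eq_or_lt_of_le hw.2.2 with he | he
    · exfalso
      apply hv'
      rw [← he]
      exact hw.1
    · exact ⟨hw.2.1, he⟩
  have hc2 := Finset.card_le_card hsub2
  rw [Nat.card_Ioo] at hc2
  have hcu := Finset.card_union_of_disjoint hdisj2
  unfold Ngt
  rw [hdec, hcu]
  omega

lemma row1_prod (lam : StrictPartition) (hl : 1 ≤ lam.length) :
    (∏ j ∈ Ioc 1 (1 + lam.part 1), lam.hook (1, j)) *
      ∏ i ∈ Icc 2 lam.length, (lam.part 1 - lam.part i)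
    = (lam.part 1) ! * ∏ i ∈ Icc 2 lam.length, (lam.part 1 + lam.part i) := by
  have hp1 : 0 < lam.part 1 := part_pos lam le_rfl hl
  have hℓp : lam.length ≤ lam.part 1 := by
    have h1 := part_add_le lam le_rfl hl le_rfl
    have h2 := part_pos lam hl le_rfl
    omega
  have hsplit : Ioc 1 (1 + lam.part 1) = Ioc 1 lam.length ∪ Ioc lam.length (1 + lam.part 1) :=
    (Finset.Ioc_union_Ioc_eq_Ioc hl (by omega)).symm
  have hdisj : Disjoint (Ioc 1 lam.length) (Ioc lam.length (1 + lam.part 1)) := by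
    rw [Finset.disjoint_left]
    intro a ha hb
    rw [Finset.mem_Ioc] at ha hb
    omega
  rw [hsplit, Finset.prod_union hdisj]
  have hsmall : ∏ j ∈ Ioc 1 lam.length, lam.hook (1, j)
      = ∏ i ∈ Icc 2 lam.length, (lam.part 1 + lam.part i) := by
    rw [Ioc_one_eq_Icc]
    refine Finset.prod_congr rfl (fun j hj => ?_)
    rw [Finset.mem_Icc] at hj
    exact hook_row1_small lam hj.1 hj.2
  set D0 : Finset ℕ := (range (lam.part 1)).filter (fun v => v ∉ V lam) with hD0
  have hD0mem : ∀ v ∈ D0, v < lam.part 1 ∧ v ∉ V lam := by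
    intro v hv
    rw [hD0, Finset.mem_filter, Finset.mem_range] at hv
    exact hv
  have hp1V : lam.part 1 ∈ V lam := (mem_V lam).mpr ⟨1, le_rfl, hl, rfl⟩
  have hVfilt : (range (lam.part 1)).filter (fun v => v ∈ V lam)
      = (V lam).erase (lam.part 1) := by
    ext w
    simp only [Finset.mem_filter, Finset.mem_range, Finset.mem_erase]
    constructor
    · rintro ⟨hw, hwV⟩
      exact ⟨by omega, hwV⟩
    · rintro ⟨hne, hwV⟩
      obtain ⟨t, ht1, ht2, rfl⟩ := (mem_V lam).mp hwV
      have := part_add_le lam le_rfl ht1 ht2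
      exact ⟨by omega, hwV⟩
  have hcardD0 : D0.card + lam.length = lam.part 1 + 1 := by
    have h3 := Finset.card_filter_add_card_filter_not (s := range (lam.part 1))
      (p := fun v => v ∈ V lam)
    rw [hVfilt, Finset.card_erase_of_mem hp1V, card_V, Finset.card_range] at h3
    have : ((range (lam.part 1)).filter (fun v => ¬ v ∈ V lam)).card = D0.card := rfl
    omega
  have hinjOn : Set.InjOn (fun v => v + Ngt lam v + 1) D0 := by
    intro a ha b hb hab
    simp only at hab
    rw [Finset.mem_coe] at ha hb
    by_contra hne
    rcases lt_or_gt_of_ne hne with h | h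
    · have := Ngt_strict lam (hD0mem b hb).2 h
      omega
    · have := Ngt_strict lam (hD0mem a ha).2 h
      omega
  have himgsub : D0.image (fun v => v + Ngt lam v + 1) ⊆ Ioc lam.length (1 + lam.part 1) := by
    intro j hj
    rw [Finset.mem_image] at hj
    obtain ⟨v, hv, rfl⟩ := hj
    obtain ⟨hv1, hv2⟩ := hD0mem v hv
    have h1 := length_le_add_Ngt lam hv2
    have h2 := add_Ngt_le lam v hl
    rw [Finset.mem_Ioc]
    omega
  have himg : D0.image (fun v => v + Ngt lam v + 1) = Ioc lam.length (1 + lam.part 1) := by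
    refine Finset.eq_of_subset_of_card_le himgsub ?_
    rw [Finset.card_image_of_injOn hinjOn, Nat.card_Ioc]
    omega
  have hbig : ∏ j ∈ Ioc lam.length (1 + lam.part 1), lam.hook (1, j)
      = ∏ v ∈ D0, (lam.part 1 - v) := by
    rw [← himg, Finset.prod_image (fun a ha b hb hab => hinjOn ha hb hab)]
    exact Finset.prod_congr rfl (fun v hv =>
      hook_row1_big lam (hD0mem v hv).1 (hD0mem v hv).2)
  have hfiltimg : (range (lam.part 1)).filter (fun v => v ∈ V lam)
      = (Icc 2 lam.length).image lam.part := by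
    rw [hVfilt]
    ext w
    simp only [Finset.mem_erase, Finset.mem_image, Finset.mem_Icc]
    constructor
    · rintro ⟨hne, hwV⟩
      obtain ⟨t, ht1, ht2, rfl⟩ := (mem_V lam).mp hwV
      refine ⟨t, ⟨?_, ht2⟩, rfl⟩
      rcases eq_or_lt_of_le ht1 with he | he
      · exfalso
        apply hne
        rw [← he]
      · omega
    · rintro ⟨t, ⟨ht1, ht2⟩, rfl⟩
      have hd := part_add_le lam le_rfl (by omega : 1 ≤ t) ht2
      have hp := part_pos lam (by omega) ht2
      constructor
      · omega
      · exact (mem_V lam).mpr ⟨t, by omega, ht2, rfl⟩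
  have hpartinj : Set.InjOn lam.part (Icc 2 lam.length) := by
    refine (part_injOn lam).mono ?_
    intro a ha
    rw [Finset.mem_coe, Finset.mem_Icc] at ha
    rw [Finset.mem_coe, Finset.mem_Icc]
    omega
  have hfact : (∏ v ∈ D0, (lam.part 1 - v)) * ∏ i ∈ Icc 2 lam.length,
      (lam.part 1 - lam.part i) = (lam.part 1) ! := by
    have h1 : ∏ i ∈ Icc 2 lam.length, (lam.part 1 - lam.part i)
        = ∏ v ∈ (range (lam.part 1)).filter (fun v => v ∈ V lam), (lam.part 1 - v) := by
      rw [hfiltimg, Finset.prod_image (fun a ha b hb hab => hpartinj ha hb hab)]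
    rw [h1, ← prod_fact_range (lam.part 1)]
    rw [← Finset.prod_filter_mul_prod_filter_not (range (lam.part 1)) (fun v => v ∈ V lam)
      (fun v => lam.part 1 - v)]
    rw [mul_comm]
  rw [hsmall, hbig, mul_assoc, hfact, mul_comm]


lemma prod_Icc2_shift' {M : Type*} [CommMonoid M] {m : ℕ} (hm : 1 ≤ m) (g : ℕ → M) :
    ∏ i ∈ Icc 2 m, g i = ∏ i ∈ Icc 1 (m-1), g (i+1) := by
  have himg : Icc 2 m = (Icc 1 (m-1)).image (· + 1) := by
    ext w
    simp only [Finset.mem_Icc, Finset.mem_image]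
    constructor
    · intro h
      exact ⟨w - 1, by omega, by omega⟩
    · rintro ⟨u, hu, rfl⟩
      omega
  rw [himg, Finset.prod_image (by intro a _ b _ h; simp only at h; omega)]

theorem H_formula (lam : StrictPartition) :
    lam.H * ∏ j ∈ Icc 1 lam.length, ∏ i ∈ Icc 1 (j-1), (lam.part i - lam.part j)
    = (∏ i ∈ Icc 1 lam.length, (lam.part i) !) *
      ∏ j ∈ Icc 1 lam.length, ∏ i ∈ Icc 1 (j-1), (lam.part i + lam.part j) := by
  suffices h : ∀ (n : ℕ) (mu : StrictPartition), mu.length = n →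
      mu.H * ∏ j ∈ Icc 1 mu.length, ∏ i ∈ Icc 1 (j-1), (mu.part i - mu.part j)
      = (∏ i ∈ Icc 1 mu.length, (mu.part i) !) *
        ∏ j ∈ Icc 1 mu.length, ∏ i ∈ Icc 1 (j-1), (mu.part i + mu.part j) by
    exact h lam.length lam rfl
  intro n
  induction n with
  | zero =>
      intro mu h0
      have hc : mu.cells = ∅ := by
        ext b
        obtain ⟨i, j⟩ := b
        simp only [Finset.notMem_empty, iff_false, mem_cells]
        rintro ⟨h1, h2, h3⟩
        rw [part_eq_zero mu (by omega)] at h3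
        omega
      rw [H, hc, h0, show Icc 1 0 = (∅ : Finset ℕ) from Finset.Icc_eq_empty (by omega)]
      simp
  | succ n ih =>
      intro mu hn
      have hl : 1 ≤ mu.length := by omega
      have htl : (tl mu).length = n := by rw [tl_length]; omega
      have IH := ih (tl mu) htl
      have hIcc10 : Icc 1 (1-1) = (∅ : Finset ℕ) := by
        rw [show (1-1 : ℕ) = 0 from rfl]
        exact Finset.Icc_eq_empty (by omega)
      have houter : ∀ (f : ℕ → ℕ → ℕ),
          ∏ j ∈ Icc 1 mu.length, ∏ i ∈ Icc 1 (j-1), f (mu.part i) (mu.part j)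
          = (∏ j ∈ Icc 2 mu.length, f (mu.part 1) (mu.part j)) *
            ∏ j ∈ Icc 1 ((tl mu).length), ∏ i ∈ Icc 1 (j-1),
              f ((tl mu).part i) ((tl mu).part j) := by
        intro f
        rw [Icc_one_eq_insert hl, Finset.prod_insert (by simp), hIcc10, Finset.prod_empty,
          one_mul]
        have hpeel : ∀ j ∈ Icc 2 mu.length,
            (∏ i ∈ Icc 1 (j-1), f (mu.part i) (mu.part j))
            = f (mu.part 1) (mu.part j) *
              ∏ i ∈ Icc 1 (j-1-1), f (mu.part (i+1)) (mu.part j) := by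
          intro j hj
          rw [Finset.mem_Icc] at hj
          rw [Icc_one_eq_insert (show 1 ≤ j-1 by omega), Finset.prod_insert (by simp),
            prod_Icc2_shift' (show 1 ≤ j-1 by omega)]
        rw [Finset.prod_congr rfl hpeel, Finset.prod_mul_distrib]
        congr 1
        rw [prod_Icc2_shift' hl, tl_length]
        refine Finset.prod_congr rfl fun j hj => ?_
        rw [Finset.mem_Icc] at hj
        rw [show j+1-1-1 = j-1 by omega]
        refine Finset.prod_congr rfl fun i hi => ?_
        rw [Finset.mem_Icc] at hi
        rw [tl_part mu hi.1, tl_part mu hj.1]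
      have hNfac : ∏ i ∈ Icc 1 mu.length, (mu.part i) !
          = (mu.part 1) ! * ∏ i ∈ Icc 1 ((tl mu).length), ((tl mu).part i) ! := by
        rw [Icc_one_eq_insert hl, Finset.prod_insert (by simp), prod_Icc2_shift' hl, tl_length]
        congr 1
        refine Finset.prod_congr rfl fun i hi => ?_
        rw [Finset.mem_Icc] at hi
        rw [tl_part mu hi.1]
      have hD := houter (fun a b => a - b)
      have hP := houter (fun a b => a + b)
      rw [H_decomp mu, hD, hP, hNfac, mul_mul_mul_comm, row1_prod mu hl, IH,
        mul_mul_mul_comm]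


lemma row_card (lam : StrictPartition) (i : ℕ) :
    (lam.cells.filter (fun b' => b'.1 = i)).card = lam.part i ∨ i = 0 := by
  rcases Nat.eq_zero_or_pos i with h | h
  · exact Or.inr h
  left
  have himg : lam.cells.filter (fun b' => b'.1 = i)
      = (Ioc i (i + lam.part i)).image (fun j => (i, j)) := by
    ext ⟨a, bb⟩
    simp only [Finset.mem_filter, Finset.mem_image, Finset.mem_Ioc, Prod.mk.injEq, mem_cells]
    constructor
    · rintro ⟨⟨h1, h2, h3⟩, rfl⟩
      exact ⟨bb, ⟨h2, h3⟩, rfl, rfl⟩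
    · rintro ⟨j, ⟨hj1, hj2⟩, rfl, rfl⟩
      exact ⟨⟨h, hj1, hj2⟩, rfl⟩
  rw [himg, Finset.card_image_of_injective _ (fun a b hab => (Prod.mk.injEq .. ▸ hab).2),
    Nat.card_Ioc]
  omega

/-- Structure of adding one box. -/
lemma insert_struct (lam mu : StrictPartition) (b : ℕ × ℕ) (hb : b ∉ lam.cells)
    (hins : mu.cells = insert b lam.cells) :
    1 ≤ b.1 ∧ b.1 ≤ lam.length + 1 ∧ b.2 = b.1 + lam.part b.1 + 1 ∧
    (∀ i, 1 ≤ i → i ≠ b.1 → mu.part i = lam.part i) ∧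
    mu.part b.1 = lam.part b.1 + 1 ∧
    (b.1 = lam.length + 1 → mu.length = lam.length + 1 ∧ lam.part b.1 = 0) ∧
    (b.1 ≤ lam.length → mu.length = lam.length) ∧
    (lam.part b.1 + 1) ∉ V lam ∧ content b = lam.part b.1 + 1 := by
  obtain ⟨r, s⟩ := b
  simp only at *
  have hbm : (r, s) ∈ mu.cells := by
    rw [hins]
    exact Finset.mem_insert_self _ _
  have hr1 : 1 ≤ r := ((mem_cells mu r s).mp hbm).1
  -- part relation
  have hpart : ∀ i, 1 ≤ i → mu.part i = lam.part i + (if r = i then 1 else 0) := by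
    intro i hi
    have h1 := row_card mu i
    have h2 := row_card lam i
    rcases h1 with h1 | h1
    swap; · omega
    rcases h2 with h2 | h2
    swap; · omega
    rw [← h1, ← h2, hins, Finset.filter_insert]
    by_cases hri : r = i
    · rw [if_pos (show ((r, s).1 = i) from hri),
        Finset.card_insert_of_notMem (fun hc => hb (Finset.mem_filter.mp hc).1), if_pos hri]
    · rw [if_neg (show ¬((r, s).1 = i) from hri), if_neg hri]
      omega
  have hpart0 : ∀ i, 1 ≤ i → i ≠ r → mu.part i = lam.part i := by
    intro i hi hir
    rw [hpart i hi, if_neg (fun h => hir h.symm)]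
    omega
  have hpartr : mu.part r = lam.part r + 1 := by
    rw [hpart r hr1, if_pos rfl]
  -- position of s
  have hs : s = r + lam.part r + 1 := by
    have h1 := (mem_cells mu r s).mp hbm
    rw [hpartr] at h1
    have h2 : ¬ (1 ≤ r ∧ r < s ∧ s ≤ r + lam.part r) := fun hc => hb ((mem_cells lam r s).mpr hc)
    omega
  -- r ≤ length + 1
  have hrle : r ≤ lam.length + 1 := by
    by_contra hc
    push_neg at hc
    have h1 : r ≤ mu.length := length_le_of_part_pos mu (by omega)
    have h2 : mu.part (lam.length + 1) = lam.part (lam.length + 1) :=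
      hpart0 _ (by omega) (by omega)
    rw [part_eq_zero lam (by omega)] at h2
    have := part_pos mu (by omega : 1 ≤ lam.length + 1) (by omega)
    omega
  -- lengths
  have hlen1 : r = lam.length + 1 → mu.length = lam.length + 1 ∧ lam.part r = 0 := by
    intro hre
    have hp0 : lam.part r = 0 := part_eq_zero lam (by omega)
    have hge : lam.length + 1 ≤ mu.length := by
      apply length_le_of_part_pos mu
      rw [← hre, hpartr]
      omega
    have hle : mu.length ≤ lam.length + 1 := by
      by_contra hc
      push_neg at hc
      have h2 : mu.part mu.length = lam.part mu.length := hpart0 _ (by omega) (by omega)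
      rw [part_eq_zero lam (by omega)] at h2
      have := part_pos mu (by omega : 1 ≤ mu.length) le_rfl
      omega
    exact ⟨by omega, hp0⟩
  have hlen2 : r ≤ lam.length → mu.length = lam.length := by
    intro hre
    have hge : lam.length ≤ mu.length := by
      rcases Nat.eq_zero_or_pos lam.length with h0 | h0
      · omega
      apply length_le_of_part_pos mu
      rcases eq_or_ne lam.length r with he | he
      · rw [he, hpartr]
        omega
      · rw [hpart0 _ (by omega) he]
        exact part_pos lam h0 le_rfl
    have hle : mu.length ≤ lam.length := by
      by_contra hc
      push_neg at hc
      have h2 : mu.part mu.length = lam.part mu.length := hpart0 _ (by omega) (by omega)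
      rw [part_eq_zero lam (by omega)] at h2
      have := part_pos mu (by omega : 1 ≤ mu.length) le_rfl
      omega
    omega
  -- c ∉ V lam
  have hcV : (lam.part r + 1) ∉ V lam := by
    intro hcV
    obtain ⟨t, ht1, ht2, ht3⟩ := (mem_V lam).mp hcV
    have htr : t ≠ r := by
      intro he
      rw [he] at ht3
      omega
    have hmut : mu.part t = lam.part r + 1 := by rw [hpart0 t ht1 htr]; exact ht3
    have htlen : t ≤ mu.length := length_le_of_part_pos mu (by omega)
    have hrlen : r ≤ mu.length := length_le_of_part_pos mu (by omega)
    rcases lt_or_gt_of_ne htr with h | h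
    · have := part_add_le mu (by omega : 1 ≤ t) (le_of_lt h) hrlen
      omega
    · have := part_add_le mu hr1 (le_of_lt h) htlen
      omega
  exact ⟨hr1, hrle, hs, hpart0, hpartr, hlen1, hlen2, hcV, by rw [content, hs]; omega⟩


lemma getD_set' (L : List ℕ) {k : ℕ} (x : ℕ) (n : ℕ) (hk : k < L.length) :
    (L.set k x).getD n 0 = if n = k then x else L.getD n 0 := by
  rcases lt_or_ge n L.length with h | h
  · rw [List.getD_eq_getElem _ _ (by rw [List.length_set]; exact h), List.getElem_set]
    by_cases he : k = n
    · rw [if_pos he, if_pos he.symm]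
    · rw [if_neg he, if_neg (fun hc => he hc.symm), List.getD_eq_getElem _ _ h]
  · rw [List.getD_eq_default _ _ (by rw [List.length_set]; exact h),
      List.getD_eq_default _ _ h, if_neg (by omega)]

lemma part_mem_V (lam : StrictPartition) {i : ℕ} (h1 : 1 ≤ i) (h2 : i ≤ lam.length) :
    lam.part i ∈ V lam := (mem_V lam).mpr ⟨i, h1, h2, rfl⟩

lemma getElem_eq_part (lam : StrictPartition) {k : ℕ} (hk : k < lam.parts.length) :
    lam.parts[k] = lam.part (k+1) := by
  rw [part, show k + 1 - 1 = k from rfl, List.getD_eq_getElem _ _ hk]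

lemma exists_bump (lam : StrictPartition) {r : ℕ} (h1 : 1 ≤ r) (hr : r ≤ lam.length)
    (hgap : (lam.part r + 1) ∉ V lam) :
    ∃ mu : StrictPartition,
      (∀ i, 1 ≤ i → mu.part i = if i = r then lam.part r + 1 else lam.part i) ∧
      mu.length = lam.length := by
  have hrl : r - 1 < lam.parts.length := by
    have : lam.length = lam.parts.length := rfl
    omega
  have hget : lam.parts[r-1] = lam.part r := by
    rw [getElem_eq_part lam hrl, show r - 1 + 1 = r by omega]
  refine ⟨⟨lam.parts.set (r-1) (lam.part r + 1), ?_, ?_⟩, ?_, ?_⟩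
  · intro p hp
    rcases List.mem_or_eq_of_mem_set hp with h | h
    · exact lam.pos p h
    · omega
  · refine List.pairwise_iff_getElem.mpr ?_
    intro a b ha hb hab
    rw [List.length_set] at ha hb
    have hsort := List.pairwise_iff_getElem.mp lam.sorted
    rw [List.getElem_set, List.getElem_set]
    by_cases hbr : r - 1 = b
    · subst hbr
      have hne : ¬ (r - 1 = a) := by omega
      rw [if_neg hne, if_pos rfl]
      have h2 : lam.parts[a] > lam.parts[r-1] := hsort a (r-1) ha hb hab
      rw [hget] at h2
      have hmem : lam.parts[a] ∈ V lam := by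
        rw [V, List.mem_toFinset]
        exact lam.parts.getElem_mem ha
      have : lam.parts[a] ≠ lam.part r + 1 := fun hc => hgap (hc ▸ hmem)
      omega
    · rw [if_neg hbr]
      by_cases har : r - 1 = a
      · subst har
        rw [if_pos rfl]
        have h2 : lam.parts[r-1] > lam.parts[b] := hsort (r-1) b ha hb hab
        rw [hget] at h2
        omega
      · rw [if_neg har]
        exact hsort a b ha hb hab
  · intro i hi
    show (lam.parts.set (r-1) (lam.part r + 1)).getD (i-1) 0 = _
    rw [getD_set' _ _ _ hrl]
    by_cases hir : i = r
    · rw [if_pos (by omega), if_pos hir]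
    · rw [if_neg (by omega), if_neg hir]
      rfl
  · show (lam.parts.set (r-1) _).length = lam.parts.length
    rw [List.length_set]

lemma exists_append1 (lam : StrictPartition) (h1 : (1:ℕ) ∉ V lam) :
    ∃ mu : StrictPartition,
      (∀ i, 1 ≤ i → mu.part i = if i = lam.length + 1 then 1 else lam.part i) ∧
      mu.length = lam.length + 1 := by
  refine ⟨⟨lam.parts ++ [1], ?_, ?_⟩, ?_, ?_⟩
  · intro p hp
    rcases List.mem_append.mp hp with h | h
    · exact lam.pos p h
    · simp at h
      omega
  · refine List.pairwise_append.mpr ⟨lam.sorted, List.pairwise_singleton _ _, ?_⟩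
    intro a ha b hb
    simp only [List.mem_singleton] at hb
    subst hb
    have hpos := lam.pos a ha
    have hne : a ≠ 1 := by
      intro hc
      exact h1 (by rw [← hc, V, List.mem_toFinset]; exact ha)
    omega
  · intro i hi
    show (lam.parts ++ [1]).getD (i-1) 0 = _
    by_cases hie : i = lam.length + 1
    · rw [if_pos hie]
      have : i - 1 = lam.parts.length := by
        have : lam.length = lam.parts.length := rfl
        omega
      rw [this, List.getD_append_right _ _ _ _ (le_refl _)]
      simp
    · rw [if_neg hie]
      rcases lt_or_ge (i-1) lam.parts.length with h | h
      · rw [List.getD_append _ _ _ _ h]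
        rfl
      · have h2 : lam.length < i := by
          have : lam.length = lam.parts.length := rfl
          omega
        rw [part_eq_zero lam h2, List.getD_append_right _ _ _ _ h]
        have : lam.length = lam.parts.length := rfl
        rw [List.getD_eq_default]
        simp
        omega
  · show (lam.parts ++ [1]).length = lam.parts.length + 1
    simp

lemma exists_debump (lam : StrictPartition) {r : ℕ} (h1 : 1 ≤ r) (hr : r ≤ lam.length)
    (h2 : 2 ≤ lam.part r) (hgap : (lam.part r - 1) ∉ V lam) :
    ∃ mu : StrictPartition,
      (∀ i, 1 ≤ i → mu.part i = if i = r then lam.part r - 1 else lam.part i) ∧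
      mu.length = lam.length := by
  have hrl : r - 1 < lam.parts.length := by
    have : lam.length = lam.parts.length := rfl
    omega
  have hget : lam.parts[r-1] = lam.part r := by
    rw [getElem_eq_part lam hrl, show r - 1 + 1 = r by omega]
  refine ⟨⟨lam.parts.set (r-1) (lam.part r - 1), ?_, ?_⟩, ?_, ?_⟩
  · intro p hp
    rcases List.mem_or_eq_of_mem_set hp with h | h
    · exact lam.pos p h
    · omega
  · refine List.pairwise_iff_getElem.mpr ?_
    intro a b ha hb hab
    rw [List.length_set] at ha hb
    have hsort := List.pairwise_iff_getElem.mp lam.sorted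
    rw [List.getElem_set, List.getElem_set]
    by_cases hbr : r - 1 = b
    · subst hbr
      have hne : ¬ (r - 1 = a) := by omega
      rw [if_neg hne, if_pos rfl]
      have h3 : lam.parts[a] > lam.parts[r-1] := hsort a (r-1) ha hb hab
      rw [hget] at h3
      omega
    · rw [if_neg hbr]
      by_cases har : r - 1 = a
      · subst har
        rw [if_pos rfl]
        have h3 : lam.parts[r-1] > lam.parts[b] := hsort (r-1) b ha hb hab
        rw [hget] at h3
        have hmem : lam.parts[b] ∈ V lam := by
          rw [V, List.mem_toFinset]
          exact lam.parts.getElem_mem hb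
        have : lam.parts[b] ≠ lam.part r - 1 := fun hc => hgap (hc ▸ hmem)
        omega
      · rw [if_neg har]
        exact hsort a b ha hb hab
  · intro i hi
    show (lam.parts.set (r-1) _).getD (i-1) 0 = _
    rw [getD_set' _ _ _ hrl]
    by_cases hir : i = r
    · rw [if_pos (by omega), if_pos hir]
    · rw [if_neg (by omega), if_neg hir]
      rfl
  · show (lam.parts.set (r-1) _).length = lam.parts.length
    rw [List.length_set]

lemma exists_droplast (lam : StrictPartition) (hl : 1 ≤ lam.length) :
    ∃ mu : StrictPartition,
      (∀ i, 1 ≤ i → mu.part i = if i = lam.length then 0 else lam.part i) ∧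
      mu.length = lam.length - 1 := by
  refine ⟨⟨lam.parts.dropLast, ?_, ?_⟩, ?_, ?_⟩
  · intro p hp
    exact lam.pos p ((List.dropLast_sublist lam.parts).subset hp)
  · exact List.Pairwise.sublist (List.dropLast_sublist lam.parts) lam.sorted
  · intro i hi
    show lam.parts.dropLast.getD (i-1) 0 = _
    have hll : lam.length = lam.parts.length := rfl
    by_cases hie : i = lam.length
    · rw [if_pos hie, List.getD_eq_default]
      rw [List.length_dropLast]
      omega
    · rw [if_neg hie]
      rcases lt_or_ge (i-1) (lam.parts.length - 1) with h | h
      · rw [List.getD_eq_getElem _ _ (by rw [List.length_dropLast]; exact h),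
          List.getElem_dropLast, part, List.getD_eq_getElem _ _ (by omega)]
      · rw [List.getD_eq_default _ _ (by rw [List.length_dropLast]; exact h),
          part_eq_zero lam (by omega)]
  · show lam.parts.dropLast.length = lam.parts.length - 1
    rw [List.length_dropLast]

def innerF (lam : StrictPartition) : Finset ℕ := insert 1 (((V lam).image (· + 1)) \ V lam)
def outerF (lam : StrictPartition) : Finset ℕ := V lam \ ((V lam).image (· + 1))

lemma mem_image_add_one {s : Finset ℕ} {w : ℕ} :
    w ∈ s.image (· + 1) ↔ 1 ≤ w ∧ w - 1 ∈ s := by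
  simp only [Finset.mem_image]
  constructor
  · rintro ⟨u, hu, rfl⟩
    exact ⟨by omega, by simpa using hu⟩
  · rintro ⟨h1, h2⟩
    exact ⟨w - 1, h2, by omega⟩

lemma cells_insert_of_part (lam mu : StrictPartition) {r : ℕ} (h1 : 1 ≤ r)
    (hpart : ∀ i, 1 ≤ i → mu.part i = if i = r then lam.part r + 1 else lam.part i) :
    mu.cells = insert (r, r + lam.part r + 1) lam.cells := by
  ext ⟨i, j⟩
  rw [Finset.mem_insert, mem_cells, mem_cells, Prod.mk.injEq]
  constructor
  · rintro ⟨hi, hij, hj⟩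
    rw [hpart i hi] at hj
    by_cases hir : i = r
    · subst hir
      rw [if_pos rfl] at hj
      rcases eq_or_ne j (i + lam.part i + 1) with rfl | hne
      · exact Or.inl ⟨rfl, rfl⟩
      · exact Or.inr ⟨hi, hij, by omega⟩
    · rw [if_neg hir] at hj
      exact Or.inr ⟨hi, hij, hj⟩
  · rintro (⟨hi', hj'⟩ | ⟨hi, hij, hj⟩)
    · rw [hi', hj', hpart r h1, if_pos rfl]
      exact ⟨h1, by omega, by omega⟩
    · refine ⟨hi, hij, ?_⟩
      rw [hpart i hi]
      by_cases hir : i = r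
      · subst hir
        rw [if_pos rfl]
        omega
      · rw [if_neg hir]
        exact hj

lemma cells_erase_of_part (lam mu : StrictPartition) {r : ℕ} (h1 : 1 ≤ r)
    (hp : 1 ≤ lam.part r)
    (hpart : ∀ i, 1 ≤ i → mu.part i = if i = r then lam.part r - 1 else lam.part i) :
    mu.cells = lam.cells.erase (r, r + lam.part r) := by
  ext ⟨i, j⟩
  rw [Finset.mem_erase, mem_cells, mem_cells]
  constructor
  · rintro ⟨hi, hij, hj⟩
    rw [hpart i hi] at hj
    by_cases hir : i = r
    · subst hir
      rw [if_pos rfl] at hj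
      refine ⟨fun hc => ?_, hi, hij, by omega⟩
      rw [Prod.ext_iff] at hc
      simp only at hc
      omega
    · rw [if_neg hir] at hj
      refine ⟨fun hc => ?_, hi, hij, hj⟩
      rw [Prod.ext_iff] at hc
      simp only at hc
      exact hir hc.1
  · rintro ⟨hne, hi, hij, hj⟩
    refine ⟨hi, hij, ?_⟩
    rw [hpart i hi]
    by_cases hir : i = r
    · subst hir
      rw [if_pos rfl]
      have : j ≠ i + lam.part i := by
        intro hc
        exact hne (by rw [hc])
      omega
    · rw [if_neg hir]
      exact hj

lemma innerContents_eq (lam : StrictPartition) : lam.innerContents = ↑(innerF lam) := by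
  ext w
  simp only [innerContents, innerF, Set.mem_insert_iff, Finset.coe_insert, Set.mem_insert_iff,
    Finset.mem_coe, Finset.mem_sdiff, Set.mem_image]
  constructor
  · rintro (rfl | ⟨bb, hbb, rfl⟩)
    · exact Or.inl rfl
    · obtain ⟨hbnot, mu, hmu⟩ := hbb
      obtain ⟨h1, h2, h3, h4, h5, h6, h7, h8, h9⟩ := insert_struct lam mu bb hbnot hmu
      rw [h9]
      rcases le_or_gt bb.1 lam.length with hle | hlt
      · exact Or.inr ⟨mem_image_add_one.mpr ⟨by omega, by simpa using part_mem_V lam h1 hle⟩, h8⟩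
      · have h0 := (h6 (by omega)).2
        left
        omega
  · rintro (rfl | ⟨himg, hnot⟩)
    · exact Or.inl rfl
    right
    rw [mem_image_add_one] at himg
    obtain ⟨hw1, hwm⟩ := himg
    obtain ⟨r, hr1, hr2, hr3⟩ := (mem_V lam).mp hwm
    have hgap : lam.part r + 1 ∉ V lam := by
      have he : lam.part r + 1 = w := by omega
      rw [he]
      exact hnot
    obtain ⟨mu, hmu, hlen⟩ := exists_bump lam hr1 hr2 hgap
    refine ⟨(r, r + lam.part r + 1), ⟨?_, mu, cells_insert_of_part lam mu hr1 hmu⟩, ?_⟩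
    · intro hc
      rw [mem_cells] at hc
      omega
    · rw [content]
      omega

lemma outerContents_eq (lam : StrictPartition) : lam.outerContents = ↑(outerF lam) := by
  ext w
  simp only [outerContents, outerF, Finset.mem_coe, Finset.mem_sdiff, Set.mem_image]
  constructor
  · rintro ⟨bb, hbb, rfl⟩
    obtain ⟨hbin, mu, hmu⟩ := hbb
    have hbnot : bb ∉ mu.cells := by
      rw [hmu]
      exact Finset.notMem_erase _ _
    have hins : lam.cells = insert bb mu.cells := by
      rw [hmu, Finset.insert_erase hbin]
    obtain ⟨h1, h2, h3, h4, h5, h6, h7, h8, h9⟩ := insert_struct mu lam bb hbnot hins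
    rw [h9]
    have hrlam : bb.1 ≤ lam.length := length_le_of_part_pos lam (by omega)
    constructor
    · have : lam.part bb.1 = mu.part bb.1 + 1 := h5
      rw [← this]
      exact part_mem_V lam h1 hrlam
    · rw [mem_image_add_one]
      rintro ⟨hge, hmem⟩
      obtain ⟨t, ht1, ht2, ht3⟩ := (mem_V lam).mp hmem
      have htr : t ≠ bb.1 := by
        intro he
        rw [he] at ht3
        omega
      have hmut : mu.part t = mu.part bb.1 := by
        rw [← h4 t ht1 htr]
        omega
      have hvpos : 1 ≤ mu.part bb.1 := by
        have hpos := part_pos lam ht1 ht2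
        omega
      have htmu : t ≤ mu.length := length_le_of_part_pos mu (by omega)
      have hrmu : bb.1 ≤ mu.length := length_le_of_part_pos mu (by omega)
      rcases lt_or_gt_of_ne htr with h | h
      · have := part_add_le mu ht1 (le_of_lt h) hrmu
        omega
      · have := part_add_le mu h1 (le_of_lt h) htmu
        omega
  · rintro ⟨hwV, hnimg⟩
    rw [mem_image_add_one] at hnimg
    obtain ⟨r, hr1, hr2, hr3⟩ := (mem_V lam).mp hwV
    have hw1 : 1 ≤ w := by
      have := part_pos lam hr1 hr2
      omega
    have hgap : (lam.part r - 1) ∉ V lam := by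
      intro hc
      exact hnimg ⟨hw1, by rw [← hr3]; exact hc⟩
    rcases le_or_gt 2 w with hw2 | hw2
    · obtain ⟨mu, hmu, hlen⟩ := exists_debump lam hr1 hr2 (by omega) hgap
      refine ⟨(r, r + lam.part r), ⟨(mem_cells lam _ _).mpr ⟨hr1, by omega, le_rfl⟩,
        mu, cells_erase_of_part lam mu hr1 (by omega) hmu⟩, ?_⟩
      rw [content]
      omega
    · -- w = 1, so r = lam.length
      have hwe : w = 1 := by omega
      have hrℓ : r = lam.length := by
        by_contra hc
        have hrlt : r < lam.length := by omega
        have := part_add_le lam hr1 (by omega : r ≤ lam.length) le_rfl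
        have := part_pos lam (by omega : 1 ≤ lam.length) le_rfl
        omega
      obtain ⟨mu, hmu, hlen⟩ := exists_droplast lam (by omega)
      have hmu' : ∀ i, 1 ≤ i → mu.part i = if i = r then lam.part r - 1 else lam.part i := by
        intro i hi
        rw [hmu i hi, hrℓ]
        by_cases hie : i = lam.length
        · rw [if_pos hie, if_pos hie]
          have hpl : lam.part lam.length = 1 := by
            rw [← hrℓ, hr3]
            exact hwe
          omega
        · rw [if_neg hie, if_neg hie]
      refine ⟨(r, r + lam.part r), ⟨(mem_cells lam _ _).mpr ⟨hr1, by omega, le_rfl⟩,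
        mu, cells_erase_of_part lam mu hr1 (by omega) hmu'⟩, ?_⟩
      rw [content]
      omega

lemma telescope (S : Finset ℕ) (ψ : ℕ → ℚ) :
    (∏ v ∈ S, ψ v) * (∏ v ∈ (S.image (· + 1)) \ S, ψ v)
    = (∏ v ∈ S, ψ (v + 1)) * (∏ v ∈ S \ (S.image (· + 1)), ψ v) := by
  have h1 : ∏ v ∈ S, ψ (v + 1) = ∏ v ∈ S.image (· + 1), ψ v :=
    (Finset.prod_image (fun a _ b _ h => by omega)).symm
  rw [h1, ← Finset.prod_union Finset.disjoint_sdiff, ← Finset.prod_union Finset.disjoint_sdiff,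
    Finset.union_sdiff_self_eq_union, Finset.union_sdiff_self_eq_union, Finset.union_comm]

lemma pair_decomp (ℓ r : ℕ) (h1 : 1 ≤ r) (h2 : r ≤ ℓ) (q : ℕ → ℚ) (F : ℚ → ℚ → ℚ) :
    ∏ j ∈ Icc 1 ℓ, ∏ i ∈ Icc 1 (j-1), F (q i) (q j)
    = ((∏ j ∈ (Icc 1 ℓ).erase r, ∏ i ∈ (Icc 1 (j-1)).erase r, F (q i) (q j))
        * ∏ t ∈ Icc 1 (r-1), F (q t) (q r)) * ∏ t ∈ Ioc r ℓ, F (q r) (q t) := by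
  rw [← Finset.mul_prod_erase _ _ (show r ∈ Icc 1 ℓ by rw [Finset.mem_Icc]; omega)]
  have hinner : ∀ j ∈ (Icc 1 ℓ).erase r, (∏ i ∈ Icc 1 (j-1), F (q i) (q j))
      = (∏ i ∈ (Icc 1 (j-1)).erase r, F (q i) (q j)) * (if r < j then F (q r) (q j) else 1) := by
    intro j hj
    rw [Finset.mem_erase, Finset.mem_Icc] at hj
    by_cases hrj : r < j
    · rw [if_pos hrj,
        ← Finset.mul_prod_erase _ _ (show r ∈ Icc 1 (j-1) by rw [Finset.mem_Icc]; omega)]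
      exact mul_comm _ _
    · rw [if_neg hrj, mul_one,
        Finset.erase_eq_of_notMem (by rw [Finset.mem_Icc]; omega)]
  rw [Finset.prod_congr rfl hinner, Finset.prod_mul_distrib]
  have hite : (∏ j ∈ (Icc 1 ℓ).erase r, (if r < j then F (q r) (q j) else 1))
      = ∏ t ∈ Ioc r ℓ, F (q r) (q t) := by
    rw [← Finset.prod_filter]
    congr 1
    ext t
    simp only [Finset.mem_filter, Finset.mem_erase, Finset.mem_Icc, Finset.mem_Ioc]
    omega
  rw [hite]
  ring

lemma V_eq_image (lam : StrictPartition) : V lam = (Icc 1 lam.length).image lam.part := by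
  ext w
  simp only [Finset.mem_image, Finset.mem_Icc]
  rw [mem_V]
  constructor
  · rintro ⟨t, a, b, c⟩
    exact ⟨t, ⟨a, b⟩, c⟩
  · rintro ⟨t, ⟨a, b⟩, c⟩
    exact ⟨t, a, b, c⟩

lemma prod_parts (lam : StrictPartition) (f : ℕ → ℚ) :
    ∏ i ∈ Icc 1 lam.length, f (lam.part i) = ∏ v ∈ V lam, f v := by
  rw [V_eq_image, Finset.prod_image (fun a ha b hb hab => part_injOn lam ha hb hab)]

lemma prod_parts_erase (lam : StrictPartition) {r : ℕ} (h1 : 1 ≤ r) (h2 : r ≤ lam.length)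
    (f : ℕ → ℚ) :
    ∏ i ∈ (Icc 1 lam.length).erase r, f (lam.part i)
      = ∏ v ∈ (V lam).erase (lam.part r), f v := by
  have himg : (V lam).erase (lam.part r) = ((Icc 1 lam.length).erase r).image lam.part := by
    ext w
    simp only [Finset.mem_erase, Finset.mem_image, Finset.mem_Icc]
    constructor
    · rintro ⟨hne, hw⟩
      obtain ⟨t, a, b, c⟩ := (mem_V lam).mp hw
      refine ⟨t, ⟨fun he => hne (by rw [← he, c]), a, b⟩, c⟩
    · rintro ⟨t, ⟨htr, a, b⟩, rfl⟩
      refine ⟨fun he => htr ?_, part_mem_V lam a b⟩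
      exact part_injOn lam (by rw [Finset.coe_Icc, Set.mem_Icc]; omega)
        (by rw [Finset.coe_Icc, Set.mem_Icc]; omega) he
  rw [himg, Finset.prod_image (fun a ha b hb hab => ?_)]
  refine part_injOn lam ?_ ?_ hab
  · have := (Finset.mem_erase.mp ha).2
    rw [Finset.mem_coe, Finset.mem_Icc]
    rw [Finset.mem_Icc] at this
    omega
  · have := (Finset.mem_erase.mp hb).2
    rw [Finset.mem_coe, Finset.mem_Icc]
    rw [Finset.mem_Icc] at this
    omega

lemma choose_two_sub (c w : ℕ) :
    ((c.choose 2 : ℚ)) - (w.choose 2 : ℚ) = (((c:ℚ) - w) * ((c:ℚ) + w - 1)) / 2 := by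
  rw [Nat.cast_choose_two, Nat.cast_choose_two]
  ring

lemma cast_D (lam : StrictPartition) :
    ((∏ j ∈ Icc 1 lam.length, ∏ i ∈ Icc 1 (j-1), (lam.part i - lam.part j) : ℕ) : ℚ)
      = ∏ j ∈ Icc 1 lam.length, ∏ i ∈ Icc 1 (j-1), ((lam.part i : ℚ) - lam.part j) := by
  rw [Nat.cast_prod]
  refine Finset.prod_congr rfl fun j hj => ?_
  rw [Nat.cast_prod]
  refine Finset.prod_congr rfl fun i hi => ?_
  rw [Finset.mem_Icc] at hj hi
  have hle : lam.part j ≤ lam.part i := by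
    have := part_add_le lam hi.1 (by omega : i ≤ j) hj.2
    omega
  exact Nat.cast_sub hle

lemma H_formula_q (lam : StrictPartition) :
    (lam.H : ℚ) * ∏ j ∈ Icc 1 lam.length, ∏ i ∈ Icc 1 (j-1), ((lam.part i : ℚ) - lam.part j)
    = (∏ i ∈ Icc 1 lam.length, ((lam.part i)! : ℚ)) *
      ∏ j ∈ Icc 1 lam.length, ∏ i ∈ Icc 1 (j-1), ((lam.part i : ℚ) + lam.part j) := by
  have h := congrArg (Nat.cast : ℕ → ℚ) (H_formula lam)
  rw [Nat.cast_mul, Nat.cast_mul, cast_D] at h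
  rw [h]
  congr 1
  · rw [Nat.cast_prod]
  · rw [Nat.cast_prod]
    refine Finset.prod_congr rfl fun j hj => ?_
    rw [Nat.cast_prod]
    refine Finset.prod_congr rfl fun i hi => ?_
    push_cast
    rfl

lemma Dq_ne (lam : StrictPartition) :
    (∏ j ∈ Icc 1 lam.length, ∏ i ∈ Icc 1 (j-1), ((lam.part i : ℚ) - lam.part j)) ≠ 0 := by
  refine Finset.prod_ne_zero_iff.mpr fun j hj => Finset.prod_ne_zero_iff.mpr fun i hi => ?_
  rw [Finset.mem_Icc] at hj hi
  have := part_add_le lam hi.1 (by omega : i ≤ j) hj.2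
  have h2 : lam.part j < lam.part i := by omega
  have : (lam.part j : ℚ) < lam.part i := by exact_mod_cast h2
  intro hc
  rw [sub_eq_zero] at hc
  rw [hc] at this
  exact lt_irrefl _ this

lemma H_ne (lam : StrictPartition) : (lam.H : ℚ) ≠ 0 := by
  have : 0 < lam.H := by
    refine Finset.prod_pos fun b hb => ?_
    rw [hook]
    omega
  exact_mod_cast this.ne'

noncomputable def psi (c : ℕ) (v : ℕ) : ℚ := ((c:ℚ) - v) * ((c:ℚ) + v - 1)

lemma prod_neg (s : Finset ℕ) (g : ℕ → ℚ) :
    ∏ t ∈ s, (- g t) = (-1)^s.card * ∏ t ∈ s, g t := by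
  calc ∏ t ∈ s, (-g t) = ∏ t ∈ s, ((-1) * g t) := Finset.prod_congr rfl (fun t _ => by ring)
  _ = (∏ _t ∈ s, (-1:ℚ)) * ∏ t ∈ s, g t := Finset.prod_mul_distrib
  _ = _ := by rw [Finset.prod_const]

lemma Esplit {r ℓ : ℕ} (h1 : 1 ≤ r) (h2 : r ≤ ℓ) :
    (Icc 1 ℓ).erase r = Icc 1 (r-1) ∪ Ioc r ℓ := by
  ext t
  simp only [Finset.mem_erase, Finset.mem_Icc, Finset.mem_union, Finset.mem_Ioc]
  omega

lemma Esplit_disj {r ℓ : ℕ} : Disjoint (Icc 1 (r-1)) (Ioc r ℓ) := by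
  rw [Finset.disjoint_left]
  intro a ha hb
  rw [Finset.mem_Icc] at ha
  rw [Finset.mem_Ioc] at hb
  omega

lemma ratio_case1 (lam lam' : StrictPartition) (r : ℕ) (h1 : 1 ≤ r) (h2 : r ≤ lam.length)
    (hlen : lam'.length = lam.length)
    (hpr : lam'.part r = lam.part r + 1)
    (hp0 : ∀ i, 1 ≤ i → i ≠ r → lam'.part i = lam.part i)
    (hcV : (lam.part r + 1) ∉ V lam) :
    (lam.H : ℚ) * ((lam.part r : ℚ) + 1) *
      (∏ v ∈ (V lam).erase (lam.part r), psi (lam.part r + 1) (v+1))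
    = (lam'.H : ℚ) * ∏ v ∈ (V lam).erase (lam.part r), psi (lam.part r + 1) v := by
  have hrmem : r ∈ Icc 1 lam.length := by rw [Finset.mem_Icc]; omega
  set ℓ := lam.length with hℓ
  set E := (Icc 1 ℓ).erase r with hE
  have hmemE : ∀ t ∈ E, 1 ≤ t ∧ t ≤ ℓ ∧ t ≠ r := by
    intro t ht
    rw [hE, Finset.mem_erase, Finset.mem_Icc] at ht
    omega
  set cQ : ℚ := ((lam.part r : ℚ) + 1) with hcQ
  set A := ∏ t ∈ E, (cQ + (lam.part t : ℚ)) with hA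
  set B := ∏ t ∈ E, (cQ - 1 + (lam.part t : ℚ)) with hB
  set Cp := ∏ t ∈ E, (cQ - (lam.part t : ℚ)) with hCp
  set Cm := ∏ t ∈ E, (cQ - 1 - (lam.part t : ℚ)) with hCm
  set FE := ∏ t ∈ E, ((lam.part t)! : ℚ) with hFE
  set PEp := ∏ j ∈ E, ∏ i ∈ (Icc 1 (j-1)).erase r, ((lam.part i : ℚ) + lam.part j) with hPEp
  set PEm := ∏ j ∈ E, ∏ i ∈ (Icc 1 (j-1)).erase r, ((lam.part i : ℚ) - lam.part j) with hPEm
  have hq'r : (lam'.part r : ℚ) = cQ := by rw [hpr]; push_cast; rfl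
  have hfac : (∏ i ∈ Icc 1 ℓ, ((lam.part i)! : ℚ)) = ((lam.part r)! : ℚ) * FE :=
    (Finset.mul_prod_erase _ _ hrmem).symm
  have hfac' : (∏ i ∈ Icc 1 ℓ, ((lam'.part i)! : ℚ)) = cQ * (((lam.part r)! : ℚ) * FE) := by
    rw [← Finset.mul_prod_erase _ _ hrmem]
    have he : ∏ i ∈ E, ((lam'.part i)! : ℚ) = FE := by
      refine Finset.prod_congr rfl fun t ht => ?_
      obtain ⟨a, b, c⟩ := hmemE t ht
      rw [hp0 t a c]
    rw [he, hpr, Nat.factorial_succ]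
    push_cast
    ring
  have hPp : (∏ j ∈ Icc 1 ℓ, ∏ i ∈ Icc 1 (j-1), ((lam.part i : ℚ) + lam.part j)) = PEp * B := by
    rw [pair_decomp ℓ r h1 h2 (fun t => (lam.part t : ℚ)) (fun a b => a + b)]
    have hx : (∏ t ∈ Icc 1 (r-1), ((lam.part t : ℚ) + lam.part r)) *
        ∏ t ∈ Ioc r ℓ, ((lam.part r : ℚ) + lam.part t) = B := by
      rw [hB, hE, Esplit h1 h2, Finset.prod_union Esplit_disj]
      congr 1
      · exact Finset.prod_congr rfl fun t _ => by rw [hcQ]; ring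
      · exact Finset.prod_congr rfl fun t _ => by rw [hcQ]; ring
    rw [mul_assoc, hx]
  have hPp' : (∏ j ∈ Icc 1 ℓ, ∏ i ∈ Icc 1 (j-1), ((lam'.part i : ℚ) + lam'.part j))
      = PEp * A := by
    rw [pair_decomp ℓ r h1 h2 (fun t => (lam'.part t : ℚ)) (fun a b => a + b)]
    have hpe : (∏ j ∈ E, ∏ i ∈ (Icc 1 (j-1)).erase r, ((lam'.part i : ℚ) + lam'.part j))
        = PEp := by
      refine Finset.prod_congr rfl fun j hj => Finset.prod_congr rfl fun i hi => ?_
      obtain ⟨a, b, c⟩ := hmemE j hj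
      rw [Finset.mem_erase, Finset.mem_Icc] at hi
      rw [hp0 j a c, hp0 i (by omega) hi.1]
    have hx : (∏ t ∈ Icc 1 (r-1), ((lam'.part t : ℚ) + lam'.part r)) *
        ∏ t ∈ Ioc r ℓ, ((lam'.part r : ℚ) + lam'.part t) = A := by
      rw [hA, hE, Esplit h1 h2, Finset.prod_union Esplit_disj]
      congr 1
      · refine Finset.prod_congr rfl fun t ht => ?_
        rw [Finset.mem_Icc] at ht
        rw [hq'r, hp0 t (by omega) (by omega)]
        ring
      · refine Finset.prod_congr rfl fun t ht => ?_
        rw [Finset.mem_Ioc] at ht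
        rw [hq'r, hp0 t (by omega) (by omega)]
    rw [mul_assoc, hpe, hx]
  have hsign : ∀ (z : ℚ), ∏ t ∈ Icc 1 (r-1), ((lam.part t : ℚ) - z)
      = (-1:ℚ)^(r-1) * ∏ t ∈ Icc 1 (r-1), (z - (lam.part t : ℚ)) := by
    intro z
    have hh := prod_neg (Icc 1 (r-1)) (fun t => (z - (lam.part t : ℚ)))
    rw [Nat.card_Icc, show r - 1 + 1 - 1 = r - 1 from rfl] at hh
    calc ∏ t ∈ Icc 1 (r-1), ((lam.part t : ℚ) - z)
        = ∏ t ∈ Icc 1 (r-1), -(z - (lam.part t : ℚ)) :=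
          Finset.prod_congr rfl fun t _ => by ring
      _ = _ := hh
  have hPm : (∏ j ∈ Icc 1 ℓ, ∏ i ∈ Icc 1 (j-1), ((lam.part i : ℚ) - lam.part j))
      = PEm * ((-1:ℚ)^(r-1) * Cm) := by
    rw [pair_decomp ℓ r h1 h2 (fun t => (lam.part t : ℚ)) (fun a b => a - b)]
    have hx : (∏ t ∈ Icc 1 (r-1), ((lam.part t : ℚ) - lam.part r)) *
        ∏ t ∈ Ioc r ℓ, ((lam.part r : ℚ) - lam.part t)
        = (-1:ℚ)^(r-1) * Cm := by
      rw [hsign, hCm, hE, Esplit h1 h2, Finset.prod_union Esplit_disj, mul_assoc]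
      congr 1
      congr 1
      · exact Finset.prod_congr rfl fun t _ => by rw [hcQ]; ring
      · exact Finset.prod_congr rfl fun t _ => by rw [hcQ]; ring
    rw [mul_assoc, hx]
  have hPm' : (∏ j ∈ Icc 1 ℓ, ∏ i ∈ Icc 1 (j-1), ((lam'.part i : ℚ) - lam'.part j))
      = PEm * ((-1:ℚ)^(r-1) * Cp) := by
    rw [pair_decomp ℓ r h1 h2 (fun t => (lam'.part t : ℚ)) (fun a b => a - b)]
    have hpe : (∏ j ∈ E, ∏ i ∈ (Icc 1 (j-1)).erase r, ((lam'.part i : ℚ) - lam'.part j))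
        = PEm := by
      refine Finset.prod_congr rfl fun j hj => Finset.prod_congr rfl fun i hi => ?_
      obtain ⟨a, b, c⟩ := hmemE j hj
      rw [Finset.mem_erase, Finset.mem_Icc] at hi
      rw [hp0 j a c, hp0 i (by omega) hi.1]
    have hx : (∏ t ∈ Icc 1 (r-1), ((lam'.part t : ℚ) - lam'.part r)) *
        ∏ t ∈ Ioc r ℓ, ((lam'.part r : ℚ) - lam'.part t)
        = (-1:ℚ)^(r-1) * Cp := by
      have e1 : (∏ t ∈ Icc 1 (r-1), ((lam'.part t : ℚ) - lam'.part r))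
          = ∏ t ∈ Icc 1 (r-1), ((lam.part t : ℚ) - cQ) := by
        refine Finset.prod_congr rfl fun t ht => ?_
        rw [Finset.mem_Icc] at ht
        rw [hq'r, hp0 t (by omega) (by omega)]
      have e2 : (∏ t ∈ Ioc r ℓ, ((lam'.part r : ℚ) - lam'.part t))
          = ∏ t ∈ Ioc r ℓ, (cQ - (lam.part t : ℚ)) := by
        refine Finset.prod_congr rfl fun t ht => ?_
        rw [Finset.mem_Ioc] at ht
        rw [hq'r, hp0 t (by omega) (by omega)]
      rw [e1, e2, hsign, hCp, hE, Esplit h1 h2, Finset.prod_union Esplit_disj, mul_assoc]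
    rw [mul_assoc, hpe, hx]
  -- the two H formulas, factored
  have hHf : (lam.H : ℚ) * (PEm * ((-1:ℚ)^(r-1) * Cm))
      = (((lam.part r)! : ℚ) * FE) * (PEp * B) := by
    rw [← hPm, ← hfac, ← hPp]
    exact H_formula_q lam
  have hHf' : (lam'.H : ℚ) * (PEm * ((-1:ℚ)^(r-1) * Cp))
      = (cQ * (((lam.part r)! : ℚ) * FE)) * (PEp * A) := by
    rw [← hPm', ← hfac', ← hPp']
    have hq := H_formula_q lam'
    rw [hlen] at hq
    exact hq
  -- transfer the target products to E
  have hS1 : (∏ v ∈ (V lam).erase (lam.part r), psi (lam.part r + 1) (v+1)) = Cm * A := by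
    rw [← prod_parts_erase lam h1 h2, hCm, hA, ← Finset.prod_mul_distrib]
    refine Finset.prod_congr rfl fun t _ => ?_
    rw [psi, hcQ]
    push_cast
    ring
  have hS2 : (∏ v ∈ (V lam).erase (lam.part r), psi (lam.part r + 1) v) = Cp * B := by
    rw [← prod_parts_erase lam h1 h2, hCp, hB, ← Finset.prod_mul_distrib]
    refine Finset.prod_congr rfl fun t _ => ?_
    rw [psi, hcQ]
    push_cast
    ring
  rw [hS1, hS2]
  -- nonvanishing
  have hPEm_ne : PEm ≠ 0 := by
    rw [hPEm]
    refine Finset.prod_ne_zero_iff.mpr fun j hj => Finset.prod_ne_zero_iff.mpr fun i hi => ?_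
    obtain ⟨a, b, c⟩ := hmemE j hj
    rw [Finset.mem_erase, Finset.mem_Icc] at hi
    have := part_add_le lam hi.2.1 (by omega : i ≤ j) b
    have h5 : lam.part j < lam.part i := by omega
    have h6 : (lam.part j : ℚ) < lam.part i := by exact_mod_cast h5
    intro hcon
    rw [sub_eq_zero] at hcon
    rw [hcon] at h6
    exact lt_irrefl _ h6
  have hCm_ne : Cm ≠ 0 := by
    rw [hCm]
    refine Finset.prod_ne_zero_iff.mpr fun t ht => ?_
    obtain ⟨a, b, c⟩ := hmemE t ht
    have h5 : lam.part t ≠ lam.part r := fun he =>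
      c (part_injOn lam (by rw [Finset.coe_Icc, Set.mem_Icc]; omega)
        (by rw [Finset.coe_Icc, Set.mem_Icc]; omega) he)
    intro hcon
    rw [hcQ] at hcon
    have : (lam.part t : ℚ) = (lam.part r : ℚ) := by linarith [sub_eq_zero.mp hcon]
    exact h5 (by exact_mod_cast this)
  have hCp_ne : Cp ≠ 0 := by
    rw [hCp]
    refine Finset.prod_ne_zero_iff.mpr fun t ht => ?_
    obtain ⟨a, b, c⟩ := hmemE t ht
    have h5 : lam.part t ≠ lam.part r + 1 := fun he => hcV (he ▸ part_mem_V lam a b)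
    intro hcon
    rw [hcQ] at hcon
    have : (lam.part t : ℚ) = (lam.part r : ℚ) + 1 := by linarith [sub_eq_zero.mp hcon]
    have : lam.part t = lam.part r + 1 := by exact_mod_cast this
    exact h5 this
  have hZ : PEm * ((-1:ℚ)^(r-1) * (Cm * Cp)) ≠ 0 := by
    refine mul_ne_zero hPEm_ne (mul_ne_zero (pow_ne_zero _ (by norm_num)) ?_)
    exact mul_ne_zero hCm_ne hCp_ne
  refine mul_right_cancel₀ hZ ?_
  linear_combination (cQ * A * Cm * Cp) * hHf - (B * Cm * Cp) * hHf'

lemma ratio_case2 (lam lam' : StrictPartition)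
    (hlen : lam'.length = lam.length + 1)
    (hpr : lam'.part (lam.length + 1) = 1)
    (hp0 : ∀ i, 1 ≤ i → i ≠ lam.length + 1 → lam'.part i = lam.part i) :
    (lam.H : ℚ) * (∏ v ∈ V lam, ((v:ℚ) + 1)) = (lam'.H : ℚ) * ∏ v ∈ V lam, ((v:ℚ) - 1) := by
  set ℓ := lam.length with hℓ
  have hins : Icc 1 (ℓ+1) = insert (ℓ+1) (Icc 1 ℓ) := by
    ext t
    simp only [Finset.mem_Icc, Finset.mem_insert]
    omega
  have hnotm : (ℓ+1) ∉ Icc 1 ℓ := by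
    rw [Finset.mem_Icc]
    omega
  set Dq := ∏ j ∈ Icc 1 ℓ, ∏ i ∈ Icc 1 (j-1), ((lam.part i : ℚ) - lam.part j) with hDq
  set Pp := ∏ j ∈ Icc 1 ℓ, ∏ i ∈ Icc 1 (j-1), ((lam.part i : ℚ) + lam.part j) with hPp
  set Fac := ∏ i ∈ Icc 1 ℓ, ((lam.part i)! : ℚ) with hFac
  set Pm1 := ∏ t ∈ Icc 1 ℓ, ((lam.part t : ℚ) - 1) with hPm1
  set Pp1 := ∏ t ∈ Icc 1 ℓ, ((lam.part t : ℚ) + 1) with hPp1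
  have hmm : ∀ t ∈ Icc 1 ℓ, 1 ≤ t ∧ t ≤ ℓ := fun t ht => by
    rw [Finset.mem_Icc] at ht; exact ht
  have hq'pl : (lam'.part (ℓ+1) : ℚ) = 1 := by rw [hpr]; norm_num
  have hF' : ∏ i ∈ Icc 1 lam'.length, ((lam'.part i)! : ℚ) = Fac := by
    rw [hlen, hins, Finset.prod_insert hnotm, hpr]
    simp only [Nat.factorial_one, Nat.cast_one, one_mul]
    refine Finset.prod_congr rfl fun t ht => ?_
    obtain ⟨a, b⟩ := hmm t ht
    rw [hp0 t a (by omega)]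
  have hinner_shift : ∀ (F : ℚ → ℚ → ℚ) (j : ℕ), j ∈ Icc 1 ℓ →
      (∏ i ∈ Icc 1 (j-1), F ((lam'.part i : ℚ)) ((lam'.part j : ℚ)))
      = ∏ i ∈ Icc 1 (j-1), F ((lam.part i : ℚ)) ((lam.part j : ℚ)) := by
    intro F j hj
    obtain ⟨a, b⟩ := hmm j hj
    refine Finset.prod_congr rfl fun i hi => ?_
    rw [Finset.mem_Icc] at hi
    rw [hp0 j a (by omega), hp0 i (by omega) (by omega)]
  have hD' : (∏ j ∈ Icc 1 lam'.length, ∏ i ∈ Icc 1 (j-1), ((lam'.part i : ℚ) - lam'.part j))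
      = Pm1 * Dq := by
    rw [hlen, hins, Finset.prod_insert hnotm]
    congr 1
    · rw [show ℓ + 1 - 1 = ℓ from rfl, hPm1]
      refine Finset.prod_congr rfl fun t ht => ?_
      obtain ⟨a, b⟩ := hmm t ht
      rw [hq'pl, hp0 t a (by omega)]
    · rw [hDq]
      exact Finset.prod_congr rfl (hinner_shift (fun a b => a - b))
  have hP' : (∏ j ∈ Icc 1 lam'.length, ∏ i ∈ Icc 1 (j-1), ((lam'.part i : ℚ) + lam'.part j))
      = Pp1 * Pp := by
    rw [hlen, hins, Finset.prod_insert hnotm]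
    congr 1
    · rw [show ℓ + 1 - 1 = ℓ from rfl, hPp1]
      refine Finset.prod_congr rfl fun t ht => ?_
      obtain ⟨a, b⟩ := hmm t ht
      rw [hq'pl, hp0 t a (by omega)]
    · rw [hPp]
      exact Finset.prod_congr rfl (hinner_shift (fun a b => a + b))
  have hq1 : (lam.H : ℚ) * Dq = Fac * Pp := H_formula_q lam
  have hq2 : (lam'.H : ℚ) * (Pm1 * Dq) = Fac * (Pp1 * Pp) := by
    rw [← hD', ← hF', ← hP']
    exact H_formula_q lam'
  have hT1 : (∏ v ∈ V lam, ((v:ℚ) + 1)) = Pp1 := by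
    rw [hPp1, ← prod_parts lam (fun v => ((v:ℚ) + 1))]
  have hT2 : (∏ v ∈ V lam, ((v:ℚ) - 1)) = Pm1 := by
    rw [hPm1, ← prod_parts lam (fun v => ((v:ℚ) - 1))]
  rw [hT1, hT2]
  refine mul_right_cancel₀ (Dq_ne lam) ?_
  linear_combination Pp1 * hq1 - hq2

lemma sdiff_erase_image (Vs : Finset ℕ) (pr : ℕ) (hc : pr + 1 ∉ Vs) :
    (Vs.erase pr) \ ((Vs.erase pr).image (· + 1)) = (Vs \ (Vs.image (· + 1))).erase pr := by
  ext w
  constructor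
  · intro hw
    obtain ⟨hwS, hwn⟩ := Finset.mem_sdiff.mp hw
    obtain ⟨hwne, hwV⟩ := Finset.mem_erase.mp hwS
    refine Finset.mem_erase.mpr ⟨hwne, Finset.mem_sdiff.mpr ⟨hwV, ?_⟩⟩
    intro hwi
    obtain ⟨u, huV, hue⟩ := Finset.mem_image.mp hwi
    apply hwn
    refine Finset.mem_image.mpr ⟨u, Finset.mem_erase.mpr ⟨?_, huV⟩, hue⟩
    intro he
    apply hc
    have hwe : w = pr + 1 := by omega
    rw [← hwe]
    exact hwV
  · intro hw
    obtain ⟨hwne, hwsd⟩ := Finset.mem_erase.mp hw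
    obtain ⟨hwV, hwn⟩ := Finset.mem_sdiff.mp hwsd
    refine Finset.mem_sdiff.mpr ⟨Finset.mem_erase.mpr ⟨hwne, hwV⟩, ?_⟩
    intro hwi
    obtain ⟨u, huS, hue⟩ := Finset.mem_image.mp hwi
    exact hwn (Finset.mem_image.mpr ⟨u, (Finset.mem_erase.mp huS).2, hue⟩)

lemma image_sdiff_pos (Vs : Finset ℕ) (pr : ℕ) (hpr1 : 1 ≤ pr) (hprV : pr ∈ Vs)
    (hd : pr - 1 ∈ Vs) :
    ((Vs.erase pr).image (· + 1)) \ (Vs.erase pr)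
      = insert pr ((Vs.image (· + 1) \ Vs).erase (pr+1)) := by
  ext w
  constructor
  · intro hw
    obtain ⟨hwi, hwn⟩ := Finset.mem_sdiff.mp hw
    obtain ⟨u, huS, hue⟩ := Finset.mem_image.mp hwi
    obtain ⟨hunepr, huV⟩ := Finset.mem_erase.mp huS
    by_cases hwpr : w = pr
    · exact Finset.mem_insert.mpr (Or.inl hwpr)
    refine Finset.mem_insert.mpr (Or.inr ?_)
    have hwnV : w ∉ Vs := fun hwV => hwn (Finset.mem_erase.mpr ⟨hwpr, hwV⟩)
    refine Finset.mem_erase.mpr ⟨?_, Finset.mem_sdiff.mpr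
      ⟨Finset.mem_image.mpr ⟨u, huV, hue⟩, hwnV⟩⟩
    intro he
    apply hunepr
    omega
  · intro hw
    rcases Finset.mem_insert.mp hw with rfl | hw2
    · refine Finset.mem_sdiff.mpr ⟨Finset.mem_image.mpr ⟨w - 1,
        Finset.mem_erase.mpr ⟨by omega, hd⟩, by omega⟩, Finset.notMem_erase _ _⟩
    obtain ⟨hne, hwsd⟩ := Finset.mem_erase.mp hw2
    obtain ⟨hwi, hwnV⟩ := Finset.mem_sdiff.mp hwsd
    obtain ⟨u, huV, hue⟩ := Finset.mem_image.mp hwi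
    have hunepr : u ≠ pr := fun he => hne (by omega)
    exact Finset.mem_sdiff.mpr ⟨Finset.mem_image.mpr
      ⟨u, Finset.mem_erase.mpr ⟨hunepr, huV⟩, hue⟩,
      fun hmem => hwnV (Finset.mem_erase.mp hmem).2⟩

lemma image_sdiff_neg (Vs : Finset ℕ) (pr : ℕ) (hpr1 : 1 ≤ pr) (hd : pr - 1 ∉ Vs) :
    ((Vs.erase pr).image (· + 1)) \ (Vs.erase pr)
      = (Vs.image (· + 1) \ Vs).erase (pr+1) := by
  ext w
  constructor
  · intro hw
    obtain ⟨hwi, hwn⟩ := Finset.mem_sdiff.mp hw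
    obtain ⟨u, huS, hue⟩ := Finset.mem_image.mp hwi
    obtain ⟨hunepr, huV⟩ := Finset.mem_erase.mp huS
    have hwpr : w ≠ pr := by
      intro he
      apply hd
      have : u = pr - 1 := by omega
      rw [← this]
      exact huV
    have hwnV : w ∉ Vs := fun hwV => hwn (Finset.mem_erase.mpr ⟨hwpr, hwV⟩)
    refine Finset.mem_erase.mpr ⟨?_, Finset.mem_sdiff.mpr
      ⟨Finset.mem_image.mpr ⟨u, huV, hue⟩, hwnV⟩⟩
    intro he
    apply hunepr
    omega
  · intro hw
    obtain ⟨hne, hwsd⟩ := Finset.mem_erase.mp hw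
    obtain ⟨hwi, hwnV⟩ := Finset.mem_sdiff.mp hwsd
    obtain ⟨u, huV, hue⟩ := Finset.mem_image.mp hwi
    have hunepr : u ≠ pr := fun he => hne (by omega)
    exact Finset.mem_sdiff.mpr ⟨Finset.mem_image.mpr
      ⟨u, Finset.mem_erase.mpr ⟨hunepr, huV⟩, hue⟩,
      fun hmem => hwnV (Finset.mem_erase.mp hmem).2⟩

end SP9


open StrictPartition in
/-- Theorem 3.1. -/
theorem statement9 (lam lam' : StrictPartition) (m : ℕ)
    (x : Fin (m + 1) → ℕ) (y : Fin m → ℕ)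
    (hx : StrictMono x) (hy : StrictMono y) (hx0 : x 0 = 1)
    (hxset : ∀ c, c ∈ lam.innerContents ↔ ∃ i, x i = c)
    (hyset : ∀ c, c ∈ lam.outerContents ↔ ∃ j, y j = c)
    (b : ℕ × ℕ) (hb : b ∉ lam.cells) (hadd : lam'.cells = insert b lam.cells)
    (i : Fin (m + 1)) (hc : content b = x i) :
    (i = 0 →
      (H lam : ℚ) / H lam' =
        (∏ j, (((x 0).choose 2 : ℚ) - (y j).choose 2)) /
          ∏ j : Fin m, (((x 0).choose 2 : ℚ) - (x j.succ).choose 2)) ∧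
    (i ≠ 0 →
      (H lam : ℚ) / H lam' =
        (1 / 2) * (∏ j, (((x i).choose 2 : ℚ) - (y j).choose 2)) /
          ∏ j ∈ Finset.univ.erase i, (((x i).choose 2 : ℚ) - (x j).choose 2)) := by
  classical
  obtain ⟨h1, h2, h3, h4, h5, h6, h7, h8, h9⟩ := SP9.insert_struct lam lam' b hb hadd
  have hcx : lam.part b.1 + 1 = x i := by rw [← h9, hc]
  have hxinj := hx.injective
  have hyinj := hy.injective
  have hxF : (Finset.univ.image x) = SP9.innerF lam := by
    apply Finset.coe_injective
    rw [Finset.coe_image, Finset.coe_univ, Set.image_univ, ← SP9.innerContents_eq]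
    ext w
    simp only [Set.mem_range]
    exact (hxset w).symm
  have hyF : (Finset.univ.image y) = SP9.outerF lam := by
    apply Finset.coe_injective
    rw [Finset.coe_image, Finset.coe_univ, Set.image_univ, ← SP9.outerContents_eq]
    ext w
    simp only [Set.mem_range]
    exact (hyset w).symm
  have hcardo : (SP9.outerF lam).card = m := by
    rw [← hyF, Finset.card_image_of_injective _ hyinj, Finset.card_univ, Fintype.card_fin]
  have hcardi : (SP9.innerF lam).card = m + 1 := by
    rw [← hxF, Finset.card_image_of_injective _ hxinj, Finset.card_univ, Fintype.card_fin]
  have hyprod : ∀ f : ℕ → ℚ, (∏ j, f (y j)) = ∏ w ∈ SP9.outerF lam, f w := by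
    intro f
    rw [← hyF, Finset.prod_image (fun a _ b _ h => hyinj h)]
  have hxprodE : ∀ (e : Fin (m+1)) (f : ℕ → ℚ),
      (∏ j ∈ Finset.univ.erase e, f (x j)) = ∏ w ∈ (SP9.innerF lam).erase (x e), f w := by
    intro e f
    rw [← hxF, ← Finset.image_erase hxinj, Finset.prod_image (fun a _ b _ h => hxinj h)]
  have hx0prod : ∀ f : ℕ → ℚ,
      (∏ j : Fin m, f (x j.succ)) = ∏ w ∈ (SP9.innerF lam).erase (x 0), f w := by
    intro f
    have hsucc : (Finset.univ : Finset (Fin m)).image Fin.succ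
        = (Finset.univ : Finset (Fin (m+1))).erase 0 := by
      ext j
      constructor
      · intro hj
        obtain ⟨k, _, hk⟩ := Finset.mem_image.mp hj
        rw [Finset.mem_erase]
        exact ⟨hk ▸ Fin.succ_ne_zero k, Finset.mem_univ _⟩
      · intro hj
        have hne := (Finset.mem_erase.mp hj).1
        exact Finset.mem_image.mpr ⟨j.pred hne, Finset.mem_univ _, Fin.succ_pred j hne⟩
    rw [show (∏ j : Fin m, f (x j.succ))
        = ∏ j ∈ (Finset.univ : Finset (Fin m)).image Fin.succ, f (x j) from
      (Finset.prod_image (f := fun j => f (x j))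
        (fun a _ b _ h => Fin.succ_injective _ h)).symm, hsucc, hxprodE 0]
  have hcmem : x i ∈ SP9.innerF lam := by
    rw [← hxF]
    exact Finset.mem_image_of_mem x (Finset.mem_univ i)
  have h2m : ((2:ℚ))^m ≠ 0 := pow_ne_zero _ two_ne_zero
  have h1M : (1:ℕ) ∉ ((SP9.V lam).image (· + 1)) \ SP9.V lam := by
    intro hm
    obtain ⟨hm1, _⟩ := Finset.mem_sdiff.mp hm
    rw [SP9.mem_image_add_one] at hm1
    obtain ⟨t, a, b', c'⟩ := (SP9.mem_V lam).mp hm1.2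
    have := SP9.part_pos lam a b'
    omega
  rcases le_or_gt b.1 lam.length with hrle | hrgt
  · -- case r ≤ ℓ : i ≠ 0
    have hlen := h7 hrle
    have hppos : 1 ≤ lam.part b.1 := SP9.part_pos lam h1 hrle
    have hprV : lam.part b.1 ∈ SP9.V lam := SP9.part_mem_V lam h1 hrle
    have hr1 := SP9.ratio_case1 lam lam' b.1 h1 hrle hlen h5 h4 h8
    obtain ⟨pr, hpr⟩ : ∃ pr, lam.part b.1 = pr := ⟨_, rfl⟩
    rw [hpr] at hcx hppos hprV hr1 h8
    have hcx' : x i = pr + 1 := hcx.symm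
    have hine : i ≠ 0 := by
      intro h0
      rw [h0, hx0] at hcx'
      omega
    refine ⟨fun h0 => absurd h0 hine, fun _ => ?_⟩
    have hpsine : ∀ v : ℕ, v ≠ pr + 1 → SP9.psi (pr+1) v ≠ 0 := by
      intro v hv hc0
      rw [SP9.psi] at hc0
      rcases mul_eq_zero.mp hc0 with h | h
      · rw [sub_eq_zero] at h
        exact hv (by exact_mod_cast h.symm)
      · push_cast at h
        have hv0 : (0:ℚ) ≤ (v:ℚ) := Nat.cast_nonneg _
        have h1q : (1:ℚ) ≤ (pr:ℚ) := by exact_mod_cast hppos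
        linarith
    have hinerase : (SP9.innerF lam).erase (pr+1)
        = insert 1 ((((SP9.V lam).image (· + 1)) \ SP9.V lam).erase (pr+1)) := by
      rw [SP9.innerF, Finset.erase_insert_of_ne (by omega : (1:ℕ) ≠ pr+1)]
    have hPin2 : (∏ w ∈ (SP9.innerF lam).erase (pr+1), SP9.psi (pr+1) w)
        = ((pr:ℚ) * ((pr:ℚ)+1)) *
          ∏ w ∈ (((SP9.V lam).image (· + 1)) \ SP9.V lam).erase (pr+1), SP9.psi (pr+1) w := by
      rw [hinerase,
        Finset.prod_insert (fun hmem => h1M (Finset.mem_erase.mp hmem).2)]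
      congr 1
      rw [SP9.psi]
      push_cast
      ring
    have hPin_ne : (∏ w ∈ (SP9.innerF lam).erase (pr+1), SP9.psi (pr+1) w) ≠ 0 := by
      refine Finset.prod_ne_zero_iff.mpr fun w hw => ?_
      exact hpsine w (Finset.mem_erase.mp hw).1
    have hPS1_ne : (∏ v ∈ (SP9.V lam).erase pr, SP9.psi (pr+1) (v+1)) ≠ 0 := by
      refine Finset.prod_ne_zero_iff.mpr fun v hv => ?_
      have := (Finset.mem_erase.mp hv).1
      exact hpsine (v+1) (by omega)
    have hEy : (∏ j, (((x i).choose 2 : ℚ) - ((y j).choose 2 : ℚ)))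
        = (∏ w ∈ SP9.outerF lam, SP9.psi (pr+1) w) / 2^m := by
      rw [hyprod (fun w => (((x i).choose 2 : ℚ) - (w.choose 2 : ℚ)))]
      rw [show (∏ w ∈ SP9.outerF lam, (((x i).choose 2 : ℚ) - (w.choose 2 : ℚ)))
          = ∏ w ∈ SP9.outerF lam, (SP9.psi (pr+1) w / 2) from
        Finset.prod_congr rfl fun w _ => by
          rw [hcx', SP9.choose_two_sub, SP9.psi]]
      rw [Finset.prod_div_distrib, Finset.prod_const, hcardo]
    have hEx : (∏ j ∈ Finset.univ.erase i, (((x i).choose 2 : ℚ) - ((x j).choose 2 : ℚ)))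
        = (∏ w ∈ (SP9.innerF lam).erase (pr+1), SP9.psi (pr+1) w) / 2^m := by
      rw [hxprodE i (fun w => (((x i).choose 2 : ℚ) - (w.choose 2 : ℚ))), hcx']
      have hcard2 : ((SP9.innerF lam).erase (pr+1)).card = m := by
        rw [Finset.card_erase_of_mem (hcx' ▸ hcmem), hcardi]
        omega
      rw [show (∏ w ∈ (SP9.innerF lam).erase (pr+1),
            (((pr+1 : ℕ).choose 2 : ℚ) - (w.choose 2 : ℚ)))
          = ∏ w ∈ (SP9.innerF lam).erase (pr+1), (SP9.psi (pr+1) w / 2) from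
        Finset.prod_congr rfl fun w _ => by
          rw [SP9.choose_two_sub, SP9.psi]]
      rw [Finset.prod_div_distrib, Finset.prod_const, hcard2]
    rw [hEy, hEx]
    have hrhs : 1 / 2 * ((∏ w ∈ SP9.outerF lam, SP9.psi (pr+1) w) / 2^m)
          / ((∏ w ∈ (SP9.innerF lam).erase (pr+1), SP9.psi (pr+1) w) / 2^m)
        = (∏ w ∈ SP9.outerF lam, SP9.psi (pr+1) w)
          / (2 * ∏ w ∈ (SP9.innerF lam).erase (pr+1), SP9.psi (pr+1) w) := by
      field_simp
    rw [hrhs, div_eq_div_iff (SP9.H_ne lam') (mul_ne_zero two_ne_zero hPin_ne), hPin2]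
    have htel := SP9.telescope ((SP9.V lam).erase pr) (SP9.psi (pr+1))
    rw [SP9.sdiff_erase_image (SP9.V lam) pr h8] at htel
    have houf : SP9.outerF lam = SP9.V lam \ ((SP9.V lam).image (· + 1)) := rfl
    by_cases hd : pr - 1 ∈ SP9.V lam
    · -- upper neighbour value present
      have hprimg : pr ∈ (SP9.V lam).image (· + 1) :=
        SP9.mem_image_add_one.mpr ⟨by omega, hd⟩
      have hout_er : (SP9.V lam \ ((SP9.V lam).image (· + 1))).erase pr
          = SP9.V lam \ ((SP9.V lam).image (· + 1)) :=
        Finset.erase_eq_of_notMem (fun hmem => (Finset.mem_sdiff.mp hmem).2 hprimg)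
      have hpr_nM : pr ∉ (((SP9.V lam).image (· + 1)) \ SP9.V lam).erase (pr+1) :=
        fun hmem => (Finset.mem_sdiff.mp (Finset.mem_erase.mp hmem).2).2 hprV
      rw [SP9.image_sdiff_pos (SP9.V lam) pr hppos hprV hd, hout_er,
        Finset.prod_insert hpr_nM] at htel
      have hpsiPr : SP9.psi (pr+1) pr = 2*(pr:ℚ) := by
        rw [SP9.psi]
        push_cast
        ring
      rw [hpsiPr] at htel
      rw [houf]
      refine mul_right_cancel₀ hPS1_ne ?_
      linear_combination (2*(pr:ℚ)*(∏ w ∈ (((SP9.V lam).image (· + 1)) \ SP9.V lam).erase (pr+1),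
          SP9.psi (pr+1) w)) * hr1 + (lam'.H : ℚ) * htel
    · -- pr is an outer corner
      have hproV : pr ∈ SP9.V lam \ ((SP9.V lam).image (· + 1)) := by
        refine Finset.mem_sdiff.mpr ⟨hprV, ?_⟩
        intro hmem
        obtain ⟨u, huV, hue⟩ := Finset.mem_image.mp hmem
        have hupr : u = pr - 1 := by omega
        rw [hupr] at huV
        exact hd huV
      rw [SP9.image_sdiff_neg (SP9.V lam) pr hppos hd] at htel
      have hPo : (∏ w ∈ SP9.V lam \ ((SP9.V lam).image (· + 1)), SP9.psi (pr+1) w)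
          = (2*(pr:ℚ)) * ∏ w ∈ (SP9.V lam \ ((SP9.V lam).image (· + 1))).erase pr,
              SP9.psi (pr+1) w := by
        rw [← Finset.mul_prod_erase _ _ hproV]
        congr 1
        rw [SP9.psi]
        push_cast
        ring
      rw [houf]
      refine mul_right_cancel₀ hPS1_ne ?_
      linear_combination (2*(pr:ℚ)*(∏ w ∈ (((SP9.V lam).image (· + 1)) \ SP9.V lam).erase (pr+1),
          SP9.psi (pr+1) w)) * hr1
        + (2*(pr:ℚ)*(lam'.H : ℚ)) * htel
        - ((lam'.H : ℚ)*(∏ v ∈ (SP9.V lam).erase pr, SP9.psi (pr+1) (v+1))) * hPo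
  · -- case r = ℓ + 1 : i = 0
    have hre : b.1 = lam.length + 1 := by omega
    obtain ⟨hlen', hp0'⟩ := h6 hre
    have hcx1 : x i = 1 := by omega
    have hie : i = 0 := hxinj (by rw [hcx1, hx0])
    subst hie
    refine ⟨fun _ => ?_, fun hne => absurd rfl hne⟩
    have h1V : (1:ℕ) ∉ SP9.V lam := by
      have hh := h8
      rw [hp0'] at hh
      exact hh
    have hvge : ∀ v ∈ SP9.V lam, 2 ≤ v := by
      intro v hv
      obtain ⟨t, a, b', c'⟩ := (SP9.mem_V lam).mp hv
      have hp := SP9.part_pos lam a b'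
      rcases Nat.lt_or_ge v 2 with hlt | hge
      · have hv1 : v = 1 := by omega
        rw [hv1] at hv
        exact absurd hv h1V
      · exact hge
    have hpr' : lam'.part (lam.length + 1) = 1 := by
      rw [← hre, h5, hp0']
    have hp0'' : ∀ j, 1 ≤ j → j ≠ lam.length + 1 → lam'.part j = lam.part j := by
      intro j a bne
      exact h4 j a (by omega)
    have hr2 := SP9.ratio_case2 lam lam' hlen' hpr' hp0''
    have hin1 : (SP9.innerF lam).erase 1 = ((SP9.V lam).image (· + 1)) \ SP9.V lam := by
      rw [SP9.innerF, Finset.erase_insert h1M]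
    have hcardM : ((((SP9.V lam).image (· + 1)) \ SP9.V lam)).card = m := by
      have hh := hcardi
      rw [SP9.innerF, Finset.card_insert_of_notMem h1M] at hh
      omega
    have hpsine1 : ∀ v : ℕ, 2 ≤ v → SP9.psi 1 v ≠ 0 := by
      intro v hv hc0
      rw [SP9.psi] at hc0
      rcases mul_eq_zero.mp hc0 with h | h
      · rw [sub_eq_zero] at h
        have hv1 : (1:ℕ) = v := by exact_mod_cast h
        omega
      · have hv0 : ((v:ℚ)) = 0 := by push_cast at h; linarith
        have : v = 0 := by exact_mod_cast hv0
        omega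
    have hPM_ne : (∏ w ∈ ((SP9.V lam).image (· + 1)) \ SP9.V lam, SP9.psi 1 w) ≠ 0 := by
      refine Finset.prod_ne_zero_iff.mpr fun w hw => ?_
      obtain ⟨hw1, hw2⟩ := Finset.mem_sdiff.mp hw
      rw [SP9.mem_image_add_one] at hw1
      exact hpsine1 w (by have := hvge _ hw1.2; omega)
    have hEy : (∏ j, (((x 0).choose 2 : ℚ) - ((y j).choose 2 : ℚ)))
        = (∏ w ∈ SP9.outerF lam, SP9.psi 1 w) / 2^m := by
      rw [hyprod (fun w => (((x 0).choose 2 : ℚ) - (w.choose 2 : ℚ)))]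
      rw [show (∏ w ∈ SP9.outerF lam, (((x 0).choose 2 : ℚ) - (w.choose 2 : ℚ)))
          = ∏ w ∈ SP9.outerF lam, (SP9.psi 1 w / 2) from
        Finset.prod_congr rfl fun w _ => by
          rw [hx0, SP9.choose_two_sub, SP9.psi]]
      rw [Finset.prod_div_distrib, Finset.prod_const, hcardo]
    have hEx : (∏ j : Fin m, (((x 0).choose 2 : ℚ) - ((x j.succ).choose 2 : ℚ)))
        = (∏ w ∈ ((SP9.V lam).image (· + 1)) \ SP9.V lam, SP9.psi 1 w) / 2^m := by
      rw [hx0prod (fun w => (((x 0).choose 2 : ℚ) - (w.choose 2 : ℚ))), hx0, hin1]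
      rw [show (∏ w ∈ ((SP9.V lam).image (· + 1)) \ SP9.V lam,
            (((1:ℕ).choose 2 : ℚ) - (w.choose 2 : ℚ)))
          = ∏ w ∈ ((SP9.V lam).image (· + 1)) \ SP9.V lam, (SP9.psi 1 w / 2) from
        Finset.prod_congr rfl fun w _ => by
          rw [SP9.choose_two_sub, SP9.psi]]
      rw [Finset.prod_div_distrib, Finset.prod_const, hcardM]
    rw [hEy, hEx]
    have hrhs : ((∏ w ∈ SP9.outerF lam, SP9.psi 1 w) / 2^m)
          / ((∏ w ∈ ((SP9.V lam).image (· + 1)) \ SP9.V lam, SP9.psi 1 w) / 2^m)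
        = (∏ w ∈ SP9.outerF lam, SP9.psi 1 w)
          / (∏ w ∈ ((SP9.V lam).image (· + 1)) \ SP9.V lam, SP9.psi 1 w) := by
      field_simp
    rw [hrhs, div_eq_div_iff (SP9.H_ne lam') hPM_ne]
    have htel := SP9.telescope (SP9.V lam) (SP9.psi 1)
    have houf : SP9.outerF lam = SP9.V lam \ ((SP9.V lam).image (· + 1)) := rfl
    have hA1 : (∏ v ∈ SP9.V lam, SP9.psi 1 v)
        = (-1:ℚ)^((SP9.V lam).card) *
          ((∏ v ∈ SP9.V lam, ((v:ℚ) - 1)) * ∏ v ∈ SP9.V lam, ((v:ℚ))) := by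
      have hstep : (∏ v ∈ SP9.V lam, SP9.psi 1 v)
          = ∏ v ∈ SP9.V lam, -(((v:ℚ) - 1) * (v:ℚ)) := by
        refine Finset.prod_congr rfl fun v _ => ?_
        rw [SP9.psi]
        push_cast
        ring
      rw [hstep, SP9.prod_neg, ← Finset.prod_mul_distrib]
    have hA2 : (∏ v ∈ SP9.V lam, SP9.psi 1 (v+1))
        = (-1:ℚ)^((SP9.V lam).card) *
          ((∏ v ∈ SP9.V lam, ((v:ℚ))) * ∏ v ∈ SP9.V lam, ((v:ℚ) + 1)) := by
      have hstep : (∏ v ∈ SP9.V lam, SP9.psi 1 (v+1))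
          = ∏ v ∈ SP9.V lam, -((v:ℚ) * ((v:ℚ) + 1)) := by
        refine Finset.prod_congr rfl fun v _ => ?_
        rw [SP9.psi]
        push_cast
        ring
      rw [hstep, SP9.prod_neg, ← Finset.prod_mul_distrib]
    rw [hA1, hA2] at htel
    have hW_ne : (∏ v ∈ SP9.V lam, ((v:ℚ))) ≠ 0 := by
      refine Finset.prod_ne_zero_iff.mpr fun v hv => ?_
      have := hvge v hv
      exact_mod_cast (by omega : v ≠ 0)
    have hQm_ne : (∏ v ∈ SP9.V lam, ((v:ℚ) - 1)) ≠ 0 := by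
      refine Finset.prod_ne_zero_iff.mpr fun v hv => ?_
      have := hvge v hv
      intro hc0
      rw [sub_eq_zero] at hc0
      have hv1 : v = 1 := by exact_mod_cast hc0
      omega
    have hZ : ((-1:ℚ)^((SP9.V lam).card) *
        ((∏ v ∈ SP9.V lam, ((v:ℚ))) * ∏ v ∈ SP9.V lam, ((v:ℚ) - 1))) ≠ 0 :=
      mul_ne_zero (pow_ne_zero _ (by norm_num)) (mul_ne_zero hW_ne hQm_ne)
    rw [houf]
    refine mul_right_cancel₀ hZ ?_
    linear_combination (lam.H : ℚ) * htel
      + ((-1:ℚ)^((SP9.V lam).card) * (∏ v ∈ SP9.V lam, ((v:ℚ)))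
        * (∏ w ∈ SP9.V lam \ ((SP9.V lam).image (· + 1)), SP9.psi 1 w)) * hr2
end

section
/- Let k be a nonnegative integer. Then there exist rational numbers ξ_ν, indexed by the partitions ν with |ν| ≤ k and depending only on k and ν, such that for every m ≥ 0 and all pairwise distinct complex numbers a_0, a_1, ..., a_m and complex numbers b_1, ..., b_m: Σ_{i=0}^{m} [ Π_{j=1}^{m} (a_i − b_j) / Π_{0≤j≤m, j≠i} (a_i − a_j) ] · a_i^k = Σ_{|ν| ≤ k} ξ_ν q_ν({a_i}, {b_i}). -/
open scoped BigOperators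

noncomputable section PSAux

namespace Thm10

open Finset Polynomial

/-- The recursive Newton coefficients. -/
def xi : ℕ → Multiset ℕ → ℚ
  | 0, ν => if ν = 0 then 1 else 0
  | (k+1), ν => ((k : ℚ) + 1)⁻¹ * ∑ v ∈ Finset.range (k+1),
      if (v+1) ∈ ν then xi (k - v) (ν.erase (v+1)) else 0
  decreasing_by exact Nat.lt_succ_of_le (Nat.sub_le k v)

/-- Partitions of `n` as a finset of multisets. -/
def Pn (n : ℕ) : Finset (Multiset ℕ) :=
  (Finset.univ : Finset (Nat.Partition n)).image fun p => p.parts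

lemma mem_Pn {n : ℕ} {ν : Multiset ℕ} :
    ν ∈ Pn n ↔ (∀ p ∈ ν, 0 < p) ∧ ν.sum = n := by
  constructor
  · rintro h
    simp only [Pn, Finset.mem_image] at h
    obtain ⟨p, -, rfl⟩ := h
    exact ⟨fun i hi => p.parts_pos hi, p.parts_sum⟩
  · rintro ⟨h1, h2⟩
    exact Finset.mem_image.mpr ⟨⟨ν, fun {i} hi => h1 i hi, h2⟩, Finset.mem_univ _, rfl⟩

lemma xi_support : ∀ (k : ℕ) (ν : Multiset ℕ), xi k ν ≠ 0 → ν ∈ Pn k := by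
  intro k
  induction k using Nat.strong_induction_on with
  | _ k ih =>
    intro ν h
    match k with
    | 0 =>
      rw [xi] at h
      rw [mem_Pn]
      by_cases hν : ν = 0
      · subst hν; simp
      · simp [hν] at h
    | (k+1) =>
      rw [xi] at h
      have h2 : ∑ v ∈ Finset.range (k+1),
          (if (v+1) ∈ ν then xi (k - v) (ν.erase (v+1)) else 0) ≠ 0 := by
        intro h0; rw [h0, mul_zero] at h; exact h rfl
      obtain ⟨v, hv, hne⟩ := Finset.exists_ne_zero_of_sum_ne_zero h2
      have hmem : (v+1) ∈ ν := by by_contra hc; simp [hc] at hne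
      rw [if_pos hmem] at hne
      have := ih (k - v) (Nat.lt_succ_of_le (Nat.sub_le k v)) _ hne
      rw [mem_Pn] at this ⊢
      obtain ⟨hpos, hsum⟩ := this
      constructor
      · intro p hp
        rcases eq_or_ne p (v+1) with rfl | hpne
        · omega
        · exact hpos p ((Multiset.mem_erase_of_ne hpne).mpr hp)
      · have hν : ν = (v+1) ::ₘ ν.erase (v+1) := (Multiset.cons_erase hmem).symm
        rw [hν, Multiset.sum_cons, hsum]
        have : v ≤ k := Nat.lt_succ_iff.mp (Finset.mem_range.mp hv)
        omega



lemma reflect_prod {ι : Type*} [DecidableEq ι] (s : Finset ι) (r : ι → ℂ) :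
    (∏ i ∈ s, (X - C (r i))).reflect s.card = ∏ i ∈ s, (1 - C (r i) * X) := by
  classical
  induction s using Finset.cons_induction with
  | empty =>
      simp only [Finset.prod_empty, Finset.card_empty]
      rw [← C_1, reflect_C, pow_zero, mul_one, C_1]
  | cons i s hi ih =>
      rw [Finset.prod_cons, Finset.prod_cons, Finset.card_cons, add_comm s.card 1,
        reflect_mul (X - C (r i)) (∏ j ∈ s, (X - C (r j)))
          (le_of_eq (natDegree_X_sub_C (r i)))
          (le_trans (natDegree_prod_le s _) (by
            apply le_of_eq
            rw [Finset.sum_congr rfl fun j _ => natDegree_X_sub_C (r j)]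
            simp)), ih]
      congr 1
      rw [reflect_sub, reflect_C]
      have hX : (X : Polynomial ℂ).reflect 1 = 1 := by
        have := reflect_C_mul_X_pow 1 1 (c := (1 : ℂ))
        simpa using this
      rw [hX]
      ring

lemma derivative_finset_prod {ι : Type*} [DecidableEq ι] (s : Finset ι) (f : ι → Polynomial ℂ) :
    derivative (∏ i ∈ s, f i) = ∑ i ∈ s, (∏ j ∈ s.erase i, f j) * derivative (f i) := by
  induction s using Finset.cons_induction with
  | empty => simp
  | cons i s hi ih =>
      rw [Finset.cons_eq_insert, Finset.prod_insert hi, derivative_mul, ih, Finset.mul_sum, Finset.sum_insert hi,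
        Finset.erase_insert hi]
      have h2 : ∀ j ∈ s, f i * ((∏ k ∈ s.erase j, f k) * derivative (f j))
          = (∏ k ∈ (insert i s).erase j, f k) * derivative (f j) := by
        intro j hj
        rw [Finset.erase_insert_of_ne (by rintro rfl; exact hi hj),
          Finset.prod_insert (fun h => hi (Finset.mem_of_mem_erase h))]
        ring
      rw [Finset.sum_congr rfl h2]
      ring

lemma one_sub_mul_mk (x : ℂ) :
    ((1 - C x * X : Polynomial ℂ) : PowerSeries ℂ) * PowerSeries.mk (fun n => x ^ n) = 1 := by
  have h : ((1 - C x * X : Polynomial ℂ) : PowerSeries ℂ)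
      = 1 - PowerSeries.C x * PowerSeries.X := by
    push_cast [Polynomial.coe_sub, Polynomial.coe_one, Polynomial.coe_mul, Polynomial.coe_C,
      Polynomial.coe_X]
    rfl
  rw [h]
  ext n
  rw [sub_mul, one_mul]
  cases n with
  | zero => simp
  | succ n =>
      rw [map_sub, PowerSeries.coeff_mk, mul_assoc, PowerSeries.coeff_C_mul]
      rw [mul_comm PowerSeries.X _, PowerSeries.coeff_succ_mul_X, PowerSeries.coeff_mk]
      simp [pow_succ, mul_comm]

end Thm10

end PSAux

noncomputable section Main2

namespace Thm10

open Finset Polynomial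

variable {m : ℕ} (a : Fin (m+1) → ℂ) (b : Fin m → ℂ)

def c (i : Fin (m+1)) : ℂ :=
  (∏ j, (a i - b j)) / (∏ j ∈ Finset.univ.erase i, (a i - a j))

def S (k : ℕ) : ℂ := ∑ i, c a b i * a i ^ k

def qq (r : ℕ) : ℂ := (∑ i, a i ^ r) - ∑ j, b j ^ r

def Fp : Polynomial ℂ := ∏ i, (1 - C (a i) * X)

def Gp : Polynomial ℂ := ∏ j, (1 - C (b j) * X)

def Fi (i : Fin (m+1)) : Polynomial ℂ := ∏ p ∈ univ.erase i, (1 - C (a p) * X)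

def Gj (j : Fin m) : Polynomial ℂ := ∏ l ∈ univ.erase j, (1 - C (b l) * X)

def A (i : Fin (m+1)) : PowerSeries ℂ := PowerSeries.mk fun n => a i ^ n

def Bp (j : Fin m) : PowerSeries ℂ := PowerSeries.mk fun n => b j ^ n

def H : PowerSeries ℂ := ∑ i, PowerSeries.C (c a b i) * A a i

abbrev PS : Polynomial ℂ →+* PowerSeries ℂ := Polynomial.coeToPowerSeries.ringHom

def D : PowerSeries ℂ :=
  (∑ i, PowerSeries.C (a i) * A a i) - ∑ j, PowerSeries.C (b j) * Bp b j

lemma coeff_H (k : ℕ) : PowerSeries.coeff k (H a b) = S a b k := by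
  simp [H, A, S, PowerSeries.coeff_mk]

lemma coeff_D (v : ℕ) : PowerSeries.coeff v (D a b) = qq a b (v+1) := by
  simp [D, A, Bp, qq, PowerSeries.coeff_mk, pow_succ, mul_comm]

lemma lagrange_id (ha : Function.Injective a) :
    (∏ j, (X - C (b j)) : Polynomial ℂ)
      = ∑ i, C (c a b i) * ∏ p ∈ univ.erase i, (X - C (a p)) := by
  classical
  set B : Polynomial ℂ := ∏ j, (X - C (b j)) with hB
  have hinj : Set.InjOn a ↑(univ : Finset (Fin (m+1))) := Function.Injective.injOn ha
  have hnd : B.natDegree ≤ m := by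
    refine le_trans (natDegree_prod_le univ _) ?_
    rw [Finset.sum_congr rfl fun j _ => natDegree_X_sub_C (b j)]
    simp
  have hdeg : B.degree < ((univ : Finset (Fin (m+1))).card : ℕ) := by
    rw [Finset.card_univ, Fintype.card_fin]
    calc B.degree ≤ (B.natDegree : WithBot ℕ) := degree_le_natDegree
      _ ≤ (m : WithBot ℕ) := by exact_mod_cast hnd
      _ < ((m+1 : ℕ) : WithBot ℕ) := by exact_mod_cast Nat.lt_succ_self m
  have hint := Lagrange.eq_interpolate hinj hdeg
  rw [Lagrange.interpolate_apply] at hint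
  rw [hint]
  refine Finset.sum_congr rfl fun i _ => ?_
  have hval : eval (a i) B = ∏ j, (a i - b j) := by
    rw [hB, eval_prod]; simp
  have hbasis : Lagrange.basis univ a i
      = C ((∏ j ∈ univ.erase i, (a i - a j))⁻¹) * ∏ p ∈ univ.erase i, (X - C (a p)) := by
    rw [Lagrange.basis]
    rw [show (fun j => Lagrange.basisDivisor (a i) (a j))
        = fun j => C ((a i - a j)⁻¹) * (X - C (a j)) from rfl]
    rw [Finset.prod_mul_distrib, ← map_prod, Finset.prod_inv_distrib]
  rw [hval, hbasis, c, div_eq_mul_inv, ← mul_assoc, ← C_mul]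

lemma key_id (ha : Function.Injective a) :
    Gp b = ∑ i, C (c a b i) * Fi a i := by
  classical
  have hrefl : ∀ (s : Finset (Fin (m+1))) (g : Fin (m+1) → Polynomial ℂ),
      reflect m (∑ i ∈ s, g i) = ∑ i ∈ s, reflect m (g i) := by
    intro s g
    induction s using Finset.cons_induction with
    | empty =>
        simp only [Finset.sum_empty]
        ext n; simp [coeff_reflect]
    | cons i s hi ih => rw [Finset.sum_cons, Finset.sum_cons, reflect_add, ih]
  have h1 := congrArg (reflect m) (lagrange_id a b ha)
  have h2 : reflect m (∏ j, (X - C (b j)) : Polynomial ℂ) = Gp b := by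
    have := reflect_prod (univ : Finset (Fin m)) b
    rwa [Finset.card_univ, Fintype.card_fin] at this
  have h3 : ∀ i : Fin (m+1),
      reflect m (C (c a b i) * ∏ p ∈ univ.erase i, (X - C (a p))) = C (c a b i) * Fi a i := by
    intro i
    rw [reflect_C_mul]
    congr 1
    have := reflect_prod (univ.erase i) a
    rwa [Finset.card_erase_of_mem (Finset.mem_univ i), Finset.card_univ, Fintype.card_fin,
      Nat.add_sub_cancel] at this
  rw [h2, hrefl] at h1
  rw [h1]
  exact Finset.sum_congr rfl fun i _ => h3 i

lemma HFp (ha : Function.Injective a) : H a b * PS (Fp a) = PS (Gp b) := by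
  classical
  have hterm : ∀ i : Fin (m+1), A a i * PS (Fp a) = PS (Fi a i) := by
    intro i
    have hsplit : Fp a = Fi a i * (1 - C (a i) * X) := by
      rw [Fp, Fi, ← Finset.prod_erase_mul univ _ (Finset.mem_univ i)]
    rw [hsplit, map_mul]
    have hone : PS (1 - C (a i) * X) * A a i = 1 := by
      have := one_sub_mul_mk (a i)
      rwa [show ((1 - C (a i) * X : Polynomial ℂ) : PowerSeries ℂ)
        = PS (1 - C (a i) * X) from rfl] at this
    calc A a i * (PS (Fi a i) * PS (1 - C (a i) * X))
        = PS (Fi a i) * (PS (1 - C (a i) * X) * A a i) := by ring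
      _ = PS (Fi a i) := by rw [hone, mul_one]
  rw [H, Finset.sum_mul]
  have : ∀ i : Fin (m+1), PowerSeries.C (c a b i) * A a i * PS (Fp a)
      = PS (C (c a b i) * Fi a i) := by
    intro i
    rw [mul_assoc, hterm i, map_mul]
    congr 1
    rw [show PS (C (c a b i)) = ((C (c a b i) : Polynomial ℂ) : PowerSeries ℂ) from rfl,
      Polynomial.coe_C]
  rw [Finset.sum_congr rfl fun i _ => this i, ← map_sum, ← key_id a b ha]

end Thm10

end Main2

noncomputable section Main3

namespace Thm10

open Finset Polynomial

variable {m : ℕ} (a : Fin (m+1) → ℂ) (b : Fin m → ℂ)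

lemma PS_ne_zero (p : Polynomial ℂ) (hp : p.eval 0 = 1) : PS p ≠ 0 := by
  intro h
  have : p = 0 := Polynomial.coe_eq_zero_iff.mp h
  rw [this] at hp; simp at hp

lemma Fp_eval0 : (Fp a).eval 0 = 1 := by
  rw [Fp, eval_prod]; simp

lemma HFi (ha : Function.Injective a) (i : Fin (m+1)) :
    H a b * PS (Fi a i) = PS (Gp b) * A a i := by
  have hsplit : Fp a = Fi a i * (1 - C (a i) * X) := by
    rw [Fp, Fi, ← Finset.prod_erase_mul univ _ (Finset.mem_univ i)]
  have hone : PS (1 - C (a i) * X) * A a i = 1 := one_sub_mul_mk (a i)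
  calc H a b * PS (Fi a i) = H a b * PS (Fi a i) * (PS (1 - C (a i) * X) * A a i) := by
        rw [hone, mul_one]
    _ = H a b * (PS (Fi a i * (1 - C (a i) * X))) * A a i := by rw [map_mul]; ring
    _ = PS (Gp b) * A a i := by rw [← hsplit, HFp a b ha]

lemma GjBp (j : Fin m) : PS (Gj b j) = PS (Gp b) * Bp b j := by
  have hsplit : Gp b = Gj b j * (1 - C (b j) * X) := by
    rw [Gp, Gj, ← Finset.prod_erase_mul univ _ (Finset.mem_univ j)]
  have hone : PS (1 - C (b j) * X) * Bp b j = 1 := one_sub_mul_mk (b j)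
  calc PS (Gj b j) = PS (Gj b j) * (PS (1 - C (b j) * X) * Bp b j) := by rw [hone, mul_one]
    _ = PS (Gj b j * (1 - C (b j) * X)) * Bp b j := by rw [map_mul]; ring
    _ = PS (Gp b) * Bp b j := by rw [← hsplit]

lemma deriv_H (ha : Function.Injective a) :
    PowerSeries.derivative ℂ (H a b) = H a b * D a b := by
  classical
  have hlin : ∀ x : ℂ, derivative (1 - C x * X) = - C x := by
    intro x; simp
  have hdFp : PS (derivative (Fp a)) = -∑ i, PowerSeries.C (a i) * PS (Fi a i) := by
    rw [Fp, derivative_finset_prod]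
    rw [Finset.sum_congr rfl fun i _ => by rw [hlin (a i)]]
    rw [map_sum, ← Finset.sum_neg_distrib]
    refine Finset.sum_congr rfl fun i _ => ?_
    rw [map_mul, map_neg]
    rw [show PS (C (a i)) = ((C (a i) : Polynomial ℂ) : PowerSeries ℂ) from rfl, Polynomial.coe_C]
    rw [show PS (∏ p ∈ univ.erase i, (1 - C (a p) * X)) = PS (Fi a i) from rfl]
    ring
  have hdGp : PS (derivative (Gp b)) = -∑ j, PowerSeries.C (b j) * PS (Gj b j) := by
    rw [Gp, derivative_finset_prod]
    rw [Finset.sum_congr rfl fun j _ => by rw [hlin (b j)]]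
    rw [map_sum, ← Finset.sum_neg_distrib]
    refine Finset.sum_congr rfl fun j _ => ?_
    rw [map_mul, map_neg]
    rw [show PS (C (b j)) = ((C (b j) : Polynomial ℂ) : PowerSeries ℂ) from rfl, Polynomial.coe_C]
    rw [show PS (∏ l ∈ univ.erase j, (1 - C (b l) * X)) = PS (Gj b j) from rfl]
    ring
  have e1 : PowerSeries.derivative ℂ (H a b * PS (Fp a))
      = PowerSeries.derivative ℂ (PS (Gp b)) := by rw [HFp a b ha]
  rw [Derivation.leibniz] at e1
  have hc1 : PowerSeries.derivative ℂ (PS (Fp a)) = PS (derivative (Fp a)) :=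
    PowerSeries.derivative_coe _
  have hc2 : PowerSeries.derivative ℂ (PS (Gp b)) = PS (derivative (Gp b)) :=
    PowerSeries.derivative_coe _
  rw [hc1, hc2, hdFp, hdGp, smul_eq_mul, smul_eq_mul] at e1
  -- e1 : H * (-∑ C a_i * PS (Fi i)) + PS Fp * dH = -∑ C b_j * PS (Gj j)
  have hsum1 : H a b * ∑ i, PowerSeries.C (a i) * PS (Fi a i)
      = PS (Gp b) * ∑ i, PowerSeries.C (a i) * A a i := by
    rw [Finset.mul_sum, Finset.mul_sum]
    refine Finset.sum_congr rfl fun i _ => ?_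
    calc H a b * (PowerSeries.C (a i) * PS (Fi a i))
        = PowerSeries.C (a i) * (H a b * PS (Fi a i)) := by ring
      _ = PowerSeries.C (a i) * (PS (Gp b) * A a i) := by rw [HFi a b ha]
      _ = PS (Gp b) * (PowerSeries.C (a i) * A a i) := by ring
  have hsum2 : ∑ j, PowerSeries.C (b j) * PS (Gj b j)
      = PS (Gp b) * ∑ j, PowerSeries.C (b j) * Bp b j := by
    rw [Finset.mul_sum]
    refine Finset.sum_congr rfl fun j _ => ?_
    rw [GjBp]; ring
  have e3 : PS (Fp a) * PowerSeries.derivative ℂ (H a b)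
      = PS (Fp a) * (H a b * D a b) := by
    have hGp : PS (Gp b) = H a b * PS (Fp a) := (HFp a b ha).symm
    rw [show PS (Fp a) * (H a b * D a b) = PS (Gp b) * D a b by rw [hGp]; ring]
    rw [D, mul_sub, ← hsum1, ← hsum2]
    linear_combination e1
  exact mul_left_cancel₀ (PS_ne_zero (Fp a) (Fp_eval0 a)) e3

end Thm10

end Main3

noncomputable section Main4

namespace Thm10

open Finset Polynomial

variable {m : ℕ} (a : Fin (m+1) → ℂ) (b : Fin m → ℂ)

lemma S_zero (ha : Function.Injective a) : S a b 0 = 1 := by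
  have h := congrArg (PowerSeries.constantCoeff) (HFp a b ha)
  rw [map_mul] at h
  rw [← PowerSeries.coeff_zero_eq_constantCoeff] at h
  rw [coeff_H] at h
  have h1 : (PowerSeries.coeff 0) (PS (Fp a)) = 1 := by
    rw [show PS (Fp a) = ((Fp a : Polynomial ℂ) : PowerSeries ℂ) from rfl, Polynomial.coeff_coe,
      Polynomial.coeff_zero_eq_eval_zero, Fp_eval0]
  have h2 : (PowerSeries.coeff 0) (PS (Gp b)) = 1 := by
    rw [show PS (Gp b) = ((Gp b : Polynomial ℂ) : PowerSeries ℂ) from rfl, Polynomial.coeff_coe,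
      Polynomial.coeff_zero_eq_eval_zero, Gp, eval_prod]
    simp
  rw [h1, h2, mul_one] at h
  exact h

lemma newton (ha : Function.Injective a) (k : ℕ) :
    ((k : ℂ) + 1) * S a b (k+1)
      = ∑ u ∈ Finset.range (k+1), qq a b (u+1) * S a b (k - u) := by
  have h := congrArg (PowerSeries.coeff k) (deriv_H a b ha)
  rw [PowerSeries.coeff_derivative, coeff_H, PowerSeries.coeff_mul] at h
  rw [Finset.Nat.sum_antidiagonal_eq_sum_range_succ_mk] at h
  simp only [coeff_H, coeff_D] at h
  rw [mul_comm] at h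
  rw [h]
  rw [← Finset.sum_range_reflect]
  refine Finset.sum_congr rfl fun u hu => ?_
  have hu' : u ≤ k := Nat.lt_succ_iff.mp (Finset.mem_range.mp hu)
  have h1 : k + 1 - 1 - u = k - u := by omega
  have h2 : k - (k - u) = u := by omega
  rw [h1, h2, mul_comm]

end Thm10

end Main4

noncomputable section Main5

namespace Thm10

open Finset Polynomial

variable {m : ℕ} (a : Fin (m+1) → ℂ) (b : Fin m → ℂ)

def Qv (ν : Multiset ℕ) : ℂ := (ν.map (qq a b)).prod

lemma Pn_zero : Pn 0 = {(0 : Multiset ℕ)} := by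
  ext ν
  rw [mem_Pn, Finset.mem_singleton]
  constructor
  · rintro ⟨hpos, hsum⟩
    by_contra hν
    obtain ⟨x, hx⟩ := Multiset.exists_mem_of_ne_zero hν
    have h1 : 0 < x := hpos x hx
    have h2 : x ≤ ν.sum := Multiset.single_le_sum (fun y _ => Nat.zero_le y) x hx
    omega
  · rintro rfl; simp

lemma eval_xi (ha : Function.Injective a) (k : ℕ) :
    S a b k = ∑ ν ∈ Pn k, (xi k ν : ℂ) * Qv a b ν := by
  induction k using Nat.strong_induction_on with
  | _ k ih =>
    match k with
    | 0 =>
      rw [S_zero a b ha, Pn_zero, Finset.sum_singleton]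
      rw [show xi 0 0 = 1 by rw [xi]; simp]
      simp [Qv]
    | (k+1) =>
      have hne : ((k : ℂ) + 1) ≠ 0 := Nat.cast_add_one_ne_zero k
      have hS : S a b (k+1)
          = ((k : ℂ) + 1)⁻¹ * ∑ u ∈ Finset.range (k+1), qq a b (u+1) * S a b (k-u) := by
        rw [← newton a b ha k, inv_mul_cancel_left₀ hne]
      have hIH : ∀ u ∈ Finset.range (k+1), qq a b (u+1) * S a b (k-u)
          = ∑ ν ∈ Pn (k+1), (if (u+1) ∈ ν then ((xi (k-u) (ν.erase (u+1)) : ℚ) : ℂ) else 0)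
              * Qv a b ν := by
        intro u hu
        have hu' : u ≤ k := Nat.lt_succ_iff.mp (Finset.mem_range.mp hu)
        rw [ih (k-u) (by omega), Finset.mul_sum]
        rw [show (∑ ν ∈ Pn (k+1), (if (u+1) ∈ ν then ((xi (k-u) (ν.erase (u+1)) : ℚ) : ℂ) else 0)
              * Qv a b ν)
            = ∑ ν ∈ (Pn (k+1)).filter (fun ν => (u+1) ∈ ν),
                ((xi (k-u) (ν.erase (u+1)) : ℚ) : ℂ) * Qv a b ν from by
          rw [Finset.sum_filter]
          refine Finset.sum_congr rfl fun ν _ => ?_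
          by_cases hmem : (u+1) ∈ ν <;> simp [hmem]]
        refine Finset.sum_bij' (fun μ _ => (u+1) ::ₘ μ) (fun ν _ => ν.erase (u+1))
          ?_ ?_ ?_ ?_ ?_
        · intro μ hμ
          rw [mem_Pn] at hμ
          rw [Finset.mem_filter, mem_Pn]
          refine ⟨⟨?_, ?_⟩, Multiset.mem_cons_self _ _⟩
          · intro p hp
            rcases Multiset.mem_cons.mp hp with rfl | hp'
            · omega
            · exact hμ.1 p hp'
          · rw [Multiset.sum_cons, hμ.2]; omega
        · intro ν hν
          rw [Finset.mem_filter, mem_Pn] at hν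
          rw [mem_Pn]
          obtain ⟨⟨hpos, hsum⟩, hmem⟩ := hν
          constructor
          · intro p hp
            exact hpos p (Multiset.mem_of_mem_erase hp)
          · have := Multiset.cons_erase hmem
            have h2 : (u+1) + (ν.erase (u+1)).sum = k+1 := by
              rw [← Multiset.sum_cons, this, hsum]
            omega
        · intro μ hμ
          exact Multiset.erase_cons_head _ _
        · intro ν hν
          rw [Finset.mem_filter] at hν
          exact Multiset.cons_erase hν.2
        · intro μ hμ
          rw [Multiset.erase_cons_head,
            show Qv a b ((u+1) ::ₘ μ) = qq a b (u+1) * Qv a b μ from by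
              rw [Qv, Qv, Multiset.map_cons, Multiset.prod_cons]]
          ring
      rw [hS, Finset.sum_congr rfl hIH, Finset.sum_comm, Finset.mul_sum]
      refine Finset.sum_congr rfl fun ν _ => ?_
      rw [show ((xi (k+1) ν : ℚ) : ℂ)
          = ((k : ℂ) + 1)⁻¹ * ∑ u ∈ Finset.range (k+1),
              (if (u+1) ∈ ν then ((xi (k-u) (ν.erase (u+1)) : ℚ) : ℂ) else 0) from by
        rw [xi]
        push_cast
        simp only [apply_ite (fun q : ℚ => (q : ℂ)), Rat.cast_zero]]
      conv_rhs => rw [mul_assoc, Finset.sum_mul]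

end Thm10

end Main5


/-- Theorem 3.2: the coefficients `ξ_ν`, indexed by partitions `ν` (encoded as
multisets of positive parts) with `|ν| ≤ k`, depend only on `k` and `ν`; here
`q_ν({aᵢ},{bᵢ}) = ∏_j (∑ᵢ aᵢ^{ν_j} − ∑ᵢ bᵢ^{ν_j})`. -/
theorem statement10 (k : ℕ) :
    ∃ ξ : Multiset ℕ → ℚ,
      ∀ (m : ℕ) (a : Fin (m + 1) → ℂ) (b : Fin m → ℂ), Function.Injective a →
        ∑ i, (∏ j, (a i - b j)) / (∏ j ∈ Finset.univ.erase i, (a i - a j)) * a i ^ k =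
        ∑ᶠ ν ∈ {ν : Multiset ℕ | (∀ p ∈ ν, 0 < p) ∧ ν.sum ≤ k},
          (ξ ν : ℂ) * (ν.map (fun r => (∑ i, a i ^ r) - ∑ j, b j ^ r)).prod := by
  refine ⟨Thm10.xi k, fun m a b ha => ?_⟩
  have key := Thm10.eval_xi a b ha k
  have hLHS : ∑ i, (∏ j, (a i - b j)) / (∏ j ∈ Finset.univ.erase i, (a i - a j)) * a i ^ k
      = Thm10.S a b k := by
    simp [Thm10.S, Thm10.c]
  rw [hLHS, key]
  set g : Multiset ℕ → ℂ :=
    fun ν => (Thm10.xi k ν : ℂ) * (ν.map (fun r => (∑ i, a i ^ r) - ∑ j, b j ^ r)).prod with hg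
  have hQg : ∀ ν, (Thm10.xi k ν : ℂ) * Thm10.Qv a b ν = g ν := fun ν => rfl
  simp only [hQg]
  refine (finsum_mem_eq_sum_of_inter_support_eq g ?_).symm
  ext ν
  simp only [Set.mem_inter_iff, Function.mem_support, Set.mem_setOf_eq, Finset.coe_sort_coe,
    Finset.mem_coe]
  constructor
  · rintro ⟨hs, hsupp⟩
    refine ⟨?_, hsupp⟩
    have : Thm10.xi k ν ≠ 0 := by
      intro h0; apply hsupp; rw [hg]; simp [h0]
    exact Thm10.xi_support k ν this
  · rintro ⟨hs, hsupp⟩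
    have := Thm10.mem_Pn.mp hs
    exact ⟨⟨this.1, le_of_eq this.2⟩, hsupp⟩
end

section
/- For every m ≥ 0, all pairwise distinct complex numbers a_0, a_1, ..., a_m, and all complex numbers b_1, ..., b_m: Σ_{i=0}^{m} [ Π_{j=1}^{m} (a_i − b_j) / Π_{0≤j≤m, j≠i} (a_i − a_j) ] · a_i² = (q_1² + q_2)/2, where q_1 = Σ_{i=0}^{m} a_i − Σ_{i=1}^{m} b_i and q_2 = Σ_{i=0}^{m} a_i² − Σ_{i=1}^{m} b_i². -/
open scoped BigOperators

open Polynomial Finset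

namespace Statement12Aux

variable {ι : Type*} [DecidableEq ι]

/-- leading coefficient of `X^2 * nodal`. -/
lemma coeff_top (s : Finset ι) (x : ι → ℂ) :
    (X ^ 2 * Lagrange.nodal s x).coeff (#s + 2) = 1 := by
  have hm : (X ^ 2 * Lagrange.nodal s x).Monic :=
    (monic_X_pow 2).mul Lagrange.nodal_monic
  have hd : (X ^ 2 * Lagrange.nodal s x).natDegree = #s + 2 := by
    rw [(monic_X_pow 2).natDegree_mul Lagrange.nodal_monic, natDegree_X_pow,
      Lagrange.natDegree_nodal, add_comm]
  rw [← hd]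
  exact hm.coeff_natDegree

lemma coeff_next (s : Finset ι) (x : ι → ℂ) :
    (X ^ 2 * Lagrange.nodal s x).coeff (#s + 1) = -∑ i ∈ s, x i := by
  classical
  induction s using Finset.induction_on with
  | empty => simp [Lagrange.nodal]
  | @insert a s hs ih =>
    rw [Lagrange.nodal_insert_eq_nodal hs, Finset.card_insert_of_notMem hs,
      Finset.sum_insert hs]
    have hre : X ^ 2 * ((X - C (x a)) * Lagrange.nodal s x)
        = X * (X ^ 2 * Lagrange.nodal s x) - C (x a) * (X ^ 2 * Lagrange.nodal s x) := by
      ring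
    rw [hre, coeff_sub, coeff_X_mul, coeff_C_mul, ih, coeff_top]
    ring

lemma coeff_third (s : Finset ι) (x : ι → ℂ) :
    2 * (X ^ 2 * Lagrange.nodal s x).coeff #s
      = (∑ i ∈ s, x i) ^ 2 - ∑ i ∈ s, (x i) ^ 2 := by
  classical
  induction s using Finset.induction_on with
  | empty => simp [Lagrange.nodal]
  | @insert a s hs ih =>
    rw [Lagrange.nodal_insert_eq_nodal hs, Finset.card_insert_of_notMem hs,
      Finset.sum_insert hs, Finset.sum_insert hs]
    have hre : X ^ 2 * ((X - C (x a)) * Lagrange.nodal s x)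
        = X * (X ^ 2 * Lagrange.nodal s x) - C (x a) * (X ^ 2 * Lagrange.nodal s x) := by
      ring
    rw [hre, coeff_sub, coeff_X_mul, coeff_C_mul, coeff_next]
    linear_combination ih

/-- The sum of `g(aᵢ)/∏_{j≠i}(aᵢ - aⱼ)` is the `N`-th coefficient of `g`. -/
lemma sum_div_eq_coeff {N : ℕ} (a : Fin (N + 1) → ℂ) (ha : Function.Injective a) (g : ℂ[X])
    (hg : g.degree < ((N + 1 : ℕ) : WithBot ℕ)) :
    ∑ i, g.eval (a i) / ∏ j ∈ Finset.univ.erase i, (a i - a j) = g.coeff N := by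
  have hinj : Set.InjOn a (univ : Finset (Fin (N + 1))) := fun x _ y _ h => ha h
  have hcard : #(univ : Finset (Fin (N + 1))) = N + 1 := by simp
  have hdeg : g.degree < #(univ : Finset (Fin (N + 1))) := by rw [hcard]; exact_mod_cast hg
  conv_rhs => rw [Lagrange.eq_interpolate hinj hdeg]
  rw [Lagrange.interpolate_apply, Polynomial.finset_sum_coeff]
  refine Finset.sum_congr rfl fun i _ => ?_
  rw [Polynomial.coeff_C_mul]
  have hb : (Lagrange.basis univ a i).coeff N = (∏ j ∈ univ.erase i, (a i - a j))⁻¹ := by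
    have hnd : (Lagrange.basis univ a i).natDegree = N := by
      rw [Lagrange.natDegree_basis hinj (mem_univ i), hcard]
      omega
    have hlc : (Lagrange.basis univ a i).coeff N = (Lagrange.basis univ a i).leadingCoeff := by
      rw [Polynomial.leadingCoeff, hnd]
    rw [hlc, Lagrange.basis, Polynomial.leadingCoeff_prod, ← Finset.prod_inv_distrib]
    refine Finset.prod_congr rfl fun j hj => ?_
    rw [Lagrange.basisDivisor, Polynomial.leadingCoeff_mul, Polynomial.leadingCoeff_C,
      (Polynomial.monic_X_sub_C (a j)).leadingCoeff, mul_one]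
  rw [hb, div_eq_mul_inv]

end Statement12Aux

/-- Identity (13). -/
theorem statement12 (m : ℕ) (a : Fin (m + 1) → ℂ) (b : Fin m → ℂ)
    (ha : Function.Injective a) :
    ∑ i, (∏ j, (a i - b j)) / (∏ j ∈ Finset.univ.erase i, (a i - a j)) * a i ^ 2 =
      (((∑ i, a i) - ∑ j, b j) ^ 2 + ((∑ i, a i ^ 2) - ∑ j, b j ^ 2)) / 2 := by
  classical
  set A : ℂ := ∑ i, a i with hA
  set B : ℂ := ∑ j, b j with hB
  set P : ℂ[X] := Lagrange.nodal Finset.univ b with hP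
  set n : ℂ[X] := Lagrange.nodal Finset.univ a with hn
  set q : ℂ[X] := X + C (A - B) with hq
  set f : ℂ[X] := X ^ 2 * P with hf
  set g : ℂ[X] := f - q * n with hg
  have hcards : #(Finset.univ : Finset (Fin (m + 1))) = m + 1 := by simp
  have hcardb : #(Finset.univ : Finset (Fin m)) = m := by simp
  -- coefficients of X^2 * n
  have hn2 : (X ^ 2 * n).coeff (m + 3) = 1 := by
    have := Statement12Aux.coeff_top (Finset.univ : Finset (Fin (m + 1))) a
    rwa [hcards] at this
  have hn1 : (X ^ 2 * n).coeff (m + 2) = -A := by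
    have := Statement12Aux.coeff_next (Finset.univ : Finset (Fin (m + 1))) a
    rwa [hcards] at this
  have hn0 : 2 * (X ^ 2 * n).coeff (m + 1) = A ^ 2 - ∑ i, a i ^ 2 := by
    have := Statement12Aux.coeff_third (Finset.univ : Finset (Fin (m + 1))) a
    rwa [hcards] at this
  -- coefficients of f = X^2 * P
  have hf2 : f.coeff (m + 2) = 1 := by
    have := Statement12Aux.coeff_top (Finset.univ : Finset (Fin m)) b
    rwa [hcardb] at this
  have hf1 : f.coeff (m + 1) = -B := by
    have := Statement12Aux.coeff_next (Finset.univ : Finset (Fin m)) b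
    rwa [hcardb] at this
  have hf0 : 2 * f.coeff m = B ^ 2 - ∑ j, b j ^ 2 := by
    have := Statement12Aux.coeff_third (Finset.univ : Finset (Fin m)) b
    rwa [hcardb] at this
  -- coefficients of n itself via X^2 * n
  have hX2n : ∀ k : ℕ, (X ^ 2 * n).coeff (k + 2) = n.coeff k := by
    intro k
    rw [show (X : ℂ[X]) ^ 2 * n = X * (X * n) by ring]
    simp [coeff_X_mul]
  have hXn : ∀ k : ℕ, (X * n).coeff (k + 1) = (X ^ 2 * n).coeff (k + 2) := by
    intro k
    rw [show (X : ℂ[X]) ^ 2 * n = X * (X * n) by ring]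
    simp [coeff_X_mul]
  -- coefficients of q * n
  have hqn : ∀ k : ℕ, (q * n).coeff k = (X * n).coeff k + (A - B) * n.coeff k := by
    intro k
    rw [hq, add_mul, coeff_add, coeff_C_mul]
  -- monicity and degrees
  have hfm : f.Monic := (monic_X_pow 2).mul Lagrange.nodal_monic
  have hfd : f.natDegree = m + 2 := by
    rw [hf, (monic_X_pow 2).natDegree_mul Lagrange.nodal_monic, natDegree_X_pow,
      Lagrange.natDegree_nodal, hcardb]
    omega
  have hqnm : (q * n).Monic := (monic_X_add_C (A - B)).mul Lagrange.nodal_monic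
  have hqnd : (q * n).natDegree = m + 2 := by
    rw [(monic_X_add_C (A - B)).natDegree_mul Lagrange.nodal_monic, natDegree_X_add_C,
      Lagrange.natDegree_nodal, hcards]
    omega
  have hdltbig : g.degree < ((m + 2 : ℕ) : WithBot ℕ) := by
    have hdeq : f.degree = (q * n).degree := by
      rw [degree_eq_natDegree hfm.ne_zero, degree_eq_natDegree hqnm.ne_zero, hfd, hqnd]
    have h := degree_sub_lt hdeq hfm.ne_zero (by rw [hfm.leadingCoeff, hqnm.leadingCoeff])
    rw [degree_eq_natDegree hfm.ne_zero, hfd] at h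
    exact_mod_cast h
  -- degree of g < m + 1
  have hcoeffg1 : g.coeff (m + 1) = 0 := by
    rw [hg, coeff_sub, hf1, hqn, hXn, hn1]
    have h3 := hX2n (m + 1)
    rw [hn2] at h3
    rw [← h3]
    ring
  have hdlt : g.degree < ((m + 1 : ℕ) : WithBot ℕ) := by
    rw [Polynomial.degree_lt_iff_coeff_zero]
    intro k hk
    rcases eq_or_lt_of_le hk with h | h
    · rw [← h]; exact hcoeffg1
    · refine Polynomial.coeff_eq_zero_of_degree_lt (lt_of_lt_of_le hdltbig ?_)
      exact_mod_cast Nat.cast_le.mpr h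
  -- the value of g.coeff m
  have hgm : g.coeff m = (((∑ i, a i) - ∑ j, b j) ^ 2 + ((∑ i, a i ^ 2) - ∑ j, b j ^ 2)) / 2 := by
    rw [hg, coeff_sub, hqn]
    have h1 : (X * n).coeff m = (X ^ 2 * n).coeff (m + 1) := by
      rw [show (X : ℂ[X]) ^ 2 * n = X * (X * n) by ring, coeff_X_mul]
    have h2 : n.coeff m = (X ^ 2 * n).coeff (m + 2) := (hX2n m).symm
    rw [h1, h2, hn1]
    field_simp
    linear_combination hf0 - hn0
  -- replace each term with g
  have hterm : ∀ i, (∏ j, (a i - b j)) / (∏ j ∈ Finset.univ.erase i, (a i - a j)) * a i ^ 2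
      = g.eval (a i) / ∏ j ∈ Finset.univ.erase i, (a i - a j) := by
    intro i
    have hnz : Polynomial.eval (a i) n = 0 := Lagrange.eval_nodal_at_node (Finset.mem_univ i)
    have hev : Polynomial.eval (a i) g = Polynomial.eval (a i) f := by
      rw [hg]
      simp [hnz]
    rw [hev, hf, hP, eval_mul, eval_pow, eval_X, Lagrange.eval_nodal]
    ring
  calc ∑ i, (∏ j, (a i - b j)) / (∏ j ∈ Finset.univ.erase i, (a i - a j)) * a i ^ 2
      = ∑ i, g.eval (a i) / ∏ j ∈ Finset.univ.erase i, (a i - a j) :=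
        Finset.sum_congr rfl fun i _ => hterm i
    _ = g.coeff m := Statement12Aux.sum_div_eq_coeff a ha g hdlt
    _ = _ := hgm
end
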